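/- arXiv:2501.13113 — 7 statements merged into one kernel-verified Lean document; each statement's English description precedes it below -/
import Mathlib

section
/- Let μ > 0, m₂ > 0, λ > 0 be real constants and let q be a real exponent with −2 < q < 2. Let u : (0,∞) → ℝ be a nontrivial C² solution of the ODE −t⁻¹(t u'(t))' + μ² t⁻² u(t) + m₂² t² u(t) = λ t^q u(t) on (0,∞) such that ‖u‖₂ < ∞, u extends continuously to [0,∞) with u(0) = 0, and t u'(t) u(t) → 0 as t → 0⁺. Then for every ε with 0 < ε < μ² there exist t₀ ∈ (0,1) and a constant c₁ > 0 such that u(t) ≠ 0 for all t ∈ (0,t₀] and |u(t)| ≤ c₁ t^{μ_ε} for all t ∈ (0,t₀], where μ_ε = √(μ² − ε). -/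
open MeasureTheory Filter Set Topology

section Aux
variable (μ m₂ lam q : ℝ) (u : ℝ → ℝ)

lemma aux_hasDerivAt (hC2 : ContDiffOn ℝ 2 u (Ioi 0)) {t : ℝ} (ht : t ∈ Ioi (0:ℝ)) :
    HasDerivAt u (deriv u t) t ∧ HasDerivAt (deriv u) (deriv (deriv u) t) t := by
  have h1 : DifferentiableOn ℝ u (Ioi 0) := hC2.differentiableOn (by norm_num)
  have h2 : ContDiffOn ℝ 1 (deriv u) (Ioi 0) :=
    hC2.deriv_of_isOpen isOpen_Ioi (m := 1) (by norm_num)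
  have h3 : DifferentiableOn ℝ (deriv u) (Ioi 0) := h2.differentiableOn (by norm_num)
  exact ⟨(h1.differentiableAt (isOpen_Ioi.mem_nhds ht)).hasDerivAt,
    (h3.differentiableAt (isOpen_Ioi.mem_nhds ht)).hasDerivAt⟩

lemma aux_ode2 (hC2 : ContDiffOn ℝ 2 u (Ioi 0))
    (hODE : ∀ t ∈ Ioi (0:ℝ),
      -(t⁻¹ * deriv (fun s => s * deriv u s) t) + μ^2 / t^2 * u t + m₂^2 * t^2 * u t
        = lam * t ^ q * u t) :
    ∀ t ∈ Ioi (0:ℝ), deriv (deriv u) t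
      = (μ^2 / t^2 + m₂^2 * t^2 - lam * t ^ q) * u t - t⁻¹ * deriv u t := by
  intro t ht
  have ht0 : (0:ℝ) < t := ht
  have hD : deriv (fun s => s * deriv u s) t = deriv u t + t * deriv (deriv u) t := by
    have : HasDerivAt (fun s => s * deriv u s) (1 * deriv u t + t * deriv (deriv u) t) t :=
      (hasDerivAt_id t).mul (aux_hasDerivAt u hC2 ht).2
    simpa [one_mul] using this.deriv
  have h := hODE t ht
  rw [hD] at h
  have h2 : t^2 ≠ 0 := by positivity
  field_simp at h ⊢
  nlinarith [h, sq_nonneg t]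

lemma aux_lip (A B : ℝ → ℝ) (C : ℝ) (hC : 0 ≤ C)
    (hA : ∀ s, |A s| ≤ C) (hB : ∀ s, |B s| ≤ C) (s : ℝ) :
    LipschitzWith (⟨max 1 (2*C), by positivity⟩ : NNReal)
      (fun p : ℝ × ℝ => (p.2, A s * p.1 + B s * p.2)) := by
  refine lipschitzWith_iff_dist_le_mul.2 ?_
  intro p q
  simp only [Prod.dist_eq, Real.dist_eq, NNReal.coe_mk]
  have h1 : |p.2 - q.2| ≤ max 1 (2*C) * max |p.1 - q.1| |p.2 - q.2| := by
    calc |p.2 - q.2| ≤ 1 * max |p.1 - q.1| |p.2 - q.2| := by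
          rw [one_mul]; exact le_max_right _ _
    _ ≤ _ := by
          apply mul_le_mul_of_nonneg_right (le_max_left _ _); positivity
  have h2 : |A s * p.1 + B s * p.2 - (A s * q.1 + B s * q.2)| ≤
      max 1 (2*C) * max |p.1 - q.1| |p.2 - q.2| := by
    have he : A s * p.1 + B s * p.2 - (A s * q.1 + B s * q.2)
        = A s * (p.1 - q.1) + B s * (p.2 - q.2) := by ring
    rw [he]
    calc |A s * (p.1 - q.1) + B s * (p.2 - q.2)|
        ≤ |A s * (p.1 - q.1)| + |B s * (p.2 - q.2)| := abs_add_le _ _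
      _ = |A s| * |p.1 - q.1| + |B s| * |p.2 - q.2| := by rw [abs_mul, abs_mul]
      _ ≤ C * max |p.1 - q.1| |p.2 - q.2| + C * max |p.1 - q.1| |p.2 - q.2| := by
          gcongr <;> [exact hA s; exact le_max_left _ _; exact hB s; exact le_max_right _ _]
      _ = 2*C * max |p.1 - q.1| |p.2 - q.2| := by ring
      _ ≤ _ := by
          apply mul_le_mul_of_nonneg_right (le_max_right _ _); positivity
  exact max_le h1 h2
lemma aux_ineq (μ ε με s W U D : ℝ) (hε : 0 < ε) (hsq : με^2 = μ^2 - ε)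
    (hW : μ^2 - ε/2 ≤ s^2 * W) : 0 ≤ s^2*W*U^2 + s^2*D^2 - 2*με*s*D*U := by
  nlinarith [sq_nonneg (s*D - με*U), mul_le_mul_of_nonneg_right hW (sq_nonneg U),
    mul_nonneg hε.le (sq_nonneg U)]

lemma aux_cancel (s x : ℝ) (hs : 0 < s) (h : 0 ≤ s * x) : 0 ≤ x := by
  by_contra hneg
  push_neg at hneg
  nlinarith [mul_pos hs (neg_pos.mpr hneg)]
end Aux

/-- A nontrivial finite-energy solution of the Bessel-type
temporal eigenfunction equation `-t⁻¹(t u')' + μ² t⁻² u + m₂² t² u = λ t^q u`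
on `(0,∞)` does not vanish near the origin and satisfies the sharp asymptotic
bound `|u(t)| ≤ c₁ t^{μ_ε}`, `μ_ε = √(μ² - ε)`, near the big bang singularity. -/
theorem temporal_eigenfunction_asymptotics_at_origin
    (μ m₂ lam q : ℝ) (hμ : 0 < μ) (hm₂ : 0 < m₂) (hlam : 0 < lam)
    (hq₁ : -2 < q) (hq₂ : q < 2) (u : ℝ → ℝ)
    (hC2 : ContDiffOn ℝ 2 u (Ioi 0))
    (hODE : ∀ t ∈ Ioi (0:ℝ),
      -(t⁻¹ * deriv (fun s => s * deriv u s) t) + μ^2 / t^2 * u t + m₂^2 * t^2 * u t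
        = lam * t ^ q * u t)
    (hnontriv : ∃ t ∈ Ioi (0:ℝ), u t ≠ 0)
    (hnorm : IntegrableOn
      (fun t => t * (deriv u t)^2 + μ^2 * t⁻¹ * (u t)^2 + m₂^2 * t^3 * (u t)^2) (Ioi 0))
    (hcont : ContinuousOn u (Ici 0)) (hu0 : u 0 = 0)
    (hflux : Tendsto (fun t => t * deriv u t * u t) (𝓝[>] 0) (𝓝 0)) :
    ∀ ε : ℝ, 0 < ε → ε < μ^2 →
      ∃ t₀ ∈ Ioo (0:ℝ) 1, ∃ c₁ > (0:ℝ),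
        (∀ t ∈ Ioc (0:ℝ) t₀, u t ≠ 0) ∧
        (∀ t ∈ Ioc (0:ℝ) t₀, |u t| ≤ c₁ * t ^ Real.sqrt (μ^2 - ε)) := by
  intro ε hε hεμ
  obtain ⟨tstar, htstar, hustar⟩ := hnontriv
  set με := Real.sqrt (μ^2 - ε) with hμεdef
  have hμε_pos : 0 < με := Real.sqrt_pos.2 (by linarith)
  have hμε_sq : με^2 = μ^2 - ε := Real.sq_sqrt (by linarith)
  have hder : ∀ {t : ℝ}, t ∈ Ioi (0:ℝ) →
      HasDerivAt u (deriv u t) t ∧ HasDerivAt (deriv u) (deriv (deriv u) t) t :=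
    fun ht => aux_hasDerivAt u hC2 ht
  have hODE2 := aux_ode2 μ m₂ lam q u hC2 hODE
  have h2q : (0:ℝ) < 2 + q := by linarith
  -- choose t₀
  obtain ⟨t₀, ht₀mem, ht₀small⟩ : ∃ t₀ ∈ Ioo (0:ℝ) 1, lam * t₀ ^ (2+q) ≤ ε/2 := by
    have hc : ContinuousAt (fun s : ℝ => s ^ (2+q)) 0 :=
      Real.continuousAt_rpow_const 0 (2+q) (Or.inr h2q.le)
    have h0 : (0:ℝ) ^ (2+q) = 0 := Real.zero_rpow h2q.ne'
    have h1 : Tendsto (fun s : ℝ => s ^ (2+q)) (𝓝[>] (0:ℝ)) (𝓝 0) := by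
      have := hc.tendsto
      rw [h0] at this
      exact this.mono_left nhdsWithin_le_nhds
    have htend : Tendsto (fun s : ℝ => lam * s ^ (2+q)) (𝓝[>] (0:ℝ)) (𝓝 0) := by
      simpa using h1.const_mul lam
    have hev : ∀ᶠ s in 𝓝[>] (0:ℝ), lam * s ^ (2+q) ≤ ε/2 :=
      htend.eventually_le_const (by linarith)
    have hmem : Ioo (0:ℝ) 1 ∈ 𝓝[>] (0:ℝ) :=
      Ioo_mem_nhdsGT_of_mem (by constructor <;> norm_num)
    obtain ⟨t₀, h1, h2⟩ := (hev.and (eventually_of_mem hmem (fun x hx => hx))).exists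
    exact ⟨t₀, h2, h1⟩
  obtain ⟨ht₀pos, ht₀lt1⟩ := ht₀mem
  -- potential lower bound
  set W : ℝ → ℝ := fun s => μ^2 / s^2 + m₂^2 * s^2 - lam * s ^ q with hWdef
  have hW : ∀ s ∈ Ioc (0:ℝ) t₀, μ^2 - ε/2 ≤ s^2 * W s := by
    intro s hs
    have hs0 : (0:ℝ) < s := hs.1
    have hsq : s^2 * (lam * s ^ q) = lam * s ^ (2+q) := by
      rw [Real.rpow_add hs0]
      rw [show ((2:ℝ)) = ((2:ℕ):ℝ) by norm_num, Real.rpow_natCast]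
      ring
    have hmono : lam * s ^ (2+q) ≤ lam * t₀ ^ (2+q) := by
      apply mul_le_mul_of_nonneg_left _ hlam.le
      exact Real.rpow_le_rpow hs0.le hs.2 h2q.le
    have : s^2 * W s = μ^2 + m₂^2 * s^4 - lam * s^(2+q) := by
      rw [hWdef]; field_simp; rw [← hsq]; ring
    rw [this]
    nlinarith [pow_pos hs0 4]
  -- the energy function h and its derivative hd
  set h : ℝ → ℝ := fun s => s * deriv u s * u s - με * (u s)^2 with hhdef
  set hd : ℝ → ℝ := fun s =>
    s * W s * (u s)^2 + s * (deriv u s)^2 - 2 * με * (deriv u s) * (u s) with hddef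
  have hh : ∀ s ∈ Ioi (0:ℝ), HasDerivAt h (hd s) s := by
    intro s hs
    have hs0 : (0:ℝ) < s := hs
    have d1 : HasDerivAt (fun s => s * deriv u s * u s)
        ((1 * deriv u s + s * deriv (deriv u) s) * u s + s * deriv u s * deriv u s) s :=
      (((hasDerivAt_id s).mul (hder hs).2).mul (hder hs).1)
    have d2 : HasDerivAt (fun s => με * (u s)^2)
        (με * (2 * u s ^ 1 * deriv u s)) s := (((hder hs).1).pow 2).const_mul με
    have := d1.sub d2
    refine this.congr_deriv ?_
    symm
    rw [hODE2 s hs, hddef, hWdef]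
    have : s⁻¹ * s = 1 := inv_mul_cancel₀ hs0.ne'
    field_simp
    ring
  have hd0 : ∀ s ∈ Ioc (0:ℝ) t₀, 0 ≤ hd s := by
    intro s hs
    have hs0 : (0:ℝ) < s := hs.1
    have hmul : 0 ≤ s * hd s := by
      have he : s * hd s = s^2 * W s * (u s)^2 + s^2 * (deriv u s)^2
          - 2 * με * s * (deriv u s) * (u s) := by rw [hddef]; ring
      rw [he]
      exact aux_ineq μ ε με s (W s) (u s) (deriv u s) hε hμε_sq (hW s hs)
    exact aux_cancel s (hd s) hs0 hmul
  have hcontOnh : ContinuousOn h (Ioc (0:ℝ) t₀) :=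
    fun s hs => ((hh s hs.1).continuousAt).continuousWithinAt
  have hmono : MonotoneOn h (Ioc (0:ℝ) t₀) := by
    apply monotoneOn_of_deriv_nonneg (convex_Ioc 0 t₀) hcontOnh
    · intro x hx
      rw [interior_Ioc] at hx
      exact (hh x hx.1).differentiableAt.differentiableWithinAt
    · intro x hx
      rw [interior_Ioc] at hx
      rw [(hh x hx.1).deriv]
      exact hd0 x (Ioo_subset_Ioc_self hx)
  -- limit of h at 0⁺
  have hu0' : Tendsto u (𝓝[>] 0) (𝓝 0) := by
    have := (hcont 0 Set.self_mem_Ici).tendsto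
    rw [hu0] at this
    exact this.mono_left (nhdsWithin_mono 0 Ioi_subset_Ici_self)
  have hlim : Tendsto h (𝓝[>] 0) (𝓝 0) := by
    have := hflux.sub ((hu0'.pow 2).const_mul με)
    simpa [hhdef, mul_comm] using this
  have hge : ∀ t ∈ Ioc (0:ℝ) t₀, 0 ≤ h t := by
    intro t htm
    have hev : ∀ᶠ a in 𝓝[>] (0:ℝ), h a ≤ h t := by
      filter_upwards [Ioo_mem_nhdsGT_of_mem (show (0:ℝ) ∈ Ico 0 t from ⟨le_rfl, htm.1⟩)]
        with a ha
      exact hmono ⟨ha.1, ha.2.le.trans htm.2⟩ htm ha.2.le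
    exact le_of_tendsto hlim hev
  -- the ratio function r
  set r : ℝ → ℝ := fun s => (u s)^2 * s ^ (-(2*με)) with hrdef
  have hr : ∀ s ∈ Ioi (0:ℝ), HasDerivAt r (2 * s ^ (-(2*με) - 1) * h s) s := by
    intro s hs
    have hs0 : (0:ℝ) < s := hs
    have d1 : HasDerivAt (fun s : ℝ => s ^ (-(2*με)))
        (-(2*με) * s ^ (-(2*με) - 1)) s :=
      Real.hasDerivAt_rpow_const (Or.inl hs0.ne')
    have d2 := (((hder hs).1).pow 2).mul d1
    refine d2.congr_deriv ?_
    symm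
    have hexp : s ^ (-(2*με)) = s ^ (-(2*με) - 1) * s := by
      rw [← Real.rpow_add_one hs0.ne' (-(2*με) - 1)]
      ring_nf
    rw [hhdef, hexp, Pi.pow_apply]
    ring
  have hrmono : MonotoneOn r (Ioc (0:ℝ) t₀) := by
    apply monotoneOn_of_deriv_nonneg (convex_Ioc 0 t₀)
      (fun s hs => ((hr s hs.1).continuousAt).continuousWithinAt)
    · intro x hx
      rw [interior_Ioc] at hx
      exact (hr x hx.1).differentiableAt.differentiableWithinAt
    · intro x hx
      rw [interior_Ioc] at hx
      rw [(hr x hx.1).deriv]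
      have := hge x (Ioo_subset_Ioc_self hx)
      have hp : (0:ℝ) < x ^ (-(2*με) - 1) := Real.rpow_pos_of_pos hx.1 _
      positivity
  -- nonvanishing
  have hnv : ∀ t ∈ Ioc (0:ℝ) t₀, u t ≠ 0 := by
    by_contra hcon
    push_neg at hcon
    obtain ⟨t₁, ht₁, hu₁⟩ := hcon
    have hzero : ∀ s ∈ Ioc (0:ℝ) t₁, u s = 0 := by
      intro s hs
      have hs' : s ∈ Ioc (0:ℝ) t₀ := ⟨hs.1, hs.2.trans ht₁.2⟩
      have hrle : r s ≤ r t₁ := hrmono hs' ht₁ hs.2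
      have hrt₁ : r t₁ = 0 := by rw [hrdef]; simp [hu₁]
      have hrge : 0 ≤ r s := by
        have : (0:ℝ) < s ^ (-(2*με)) := Real.rpow_pos_of_pos hs.1 _
        rw [hrdef]; positivity
      have : r s = 0 := le_antisymm (hrt₁ ▸ hrle) hrge
      have hpos : (0:ℝ) < s ^ (-(2*με)) := Real.rpow_pos_of_pos hs.1 _
      rw [hrdef] at this
      simp only at this
      have : (u s)^2 = 0 := by
        by_contra hne
        have : (0:ℝ) < (u s)^2 * s ^ (-(2*με)) :=
          mul_pos ((sq_nonneg _).lt_of_ne (Ne.symm hne)) hpos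
        linarith [this]
      exact pow_eq_zero_iff (n := 2) (by norm_num) |>.mp this
    -- ODE uniqueness to reach a contradiction with u tstar ≠ 0
    have htt : t₁ < tstar := by
      by_contra hle
      push_neg at hle
      exact hustar (hzero tstar ⟨htstar, hle⟩)
    set a := t₁/2 with hadef
    set b := tstar with hbdef
    have ha0 : (0:ℝ) < a := by rw [hadef]; linarith [ht₁.1]
    have hab : a < b := by rw [hadef, hbdef]; linarith [ht₁.1]
    have hua : u a = 0 := hzero a ⟨ha0, by rw [hadef]; linarith [ht₁.1]⟩
    have hu'a : deriv u a = 0 := by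
      have hev : u =ᶠ[𝓝 a] (fun _ => (0:ℝ)) := by
        filter_upwards [Ioo_mem_nhds ha0 (by rw [hadef]; linarith [ht₁.1] : a < t₁)]
          with x hx
        exact hzero x ⟨hx.1, hx.2.le⟩
      rw [hev.deriv_eq]
      simp
    -- set up the first-order system
    set c : ℝ → ℝ := fun s => μ^2 / s^2 + m₂^2 * s^2 - lam * s ^ q with hcdef
    have hccont : ContinuousOn c (Icc a b) := by
      have hne : ∀ x ∈ Icc a b, x ≠ 0 := fun x hx => (lt_of_lt_of_le ha0 hx.1).ne'
      apply ContinuousOn.sub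
      apply ContinuousOn.add
      · exact continuousOn_const.div (by fun_prop) (fun x hx => pow_ne_zero 2 (hne x hx))
      · fun_prop
      · exact continuousOn_const.mul
          (ContinuousOn.rpow_const continuousOn_id (fun x hx => Or.inl (hne x hx)))
    obtain ⟨C, hC⟩ := isCompact_Icc.exists_bound_of_continuousOn hccont
    set proj : ℝ → ℝ := fun s => min (max s a) b with hprojdef
    have hproj : ∀ s, proj s ∈ Icc a b :=
      fun s => ⟨le_min (le_max_right s a) hab.le, min_le_right _ _⟩
    have hprojid : ∀ s ∈ Icc a b, proj s = s := by
      intro s hs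
      rw [hprojdef]
      simp only [max_eq_left hs.1, min_eq_left hs.2]
    set Cb : ℝ := max (max C 0) a⁻¹ with hCbdef
    have hCb0 : 0 ≤ Cb := le_trans (le_max_right C 0) (le_max_left _ _)
    set A : ℝ → ℝ := fun s => c (proj s) with hAdef
    set B : ℝ → ℝ := fun s => -(proj s)⁻¹ with hBdef
    have hAb : ∀ s, |A s| ≤ Cb := by
      intro s
      calc |A s| = ‖c (proj s)‖ := rfl
        _ ≤ C := hC _ (hproj s)
        _ ≤ Cb := le_trans (le_max_left C 0) (le_max_left _ _)
    have hBb : ∀ s, |B s| ≤ Cb := by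
      intro s
      have h1 : (0:ℝ) < proj s := lt_of_lt_of_le ha0 (hproj s).1
      calc |B s| = (proj s)⁻¹ := by
            rw [hBdef, abs_neg, abs_of_pos (inv_pos.mpr h1)]
        _ ≤ a⁻¹ := inv_anti₀ ha0 (hproj s).1
        _ ≤ Cb := le_max_right _ _
    set v : ℝ → ℝ × ℝ → ℝ × ℝ := fun s p => (p.2, A s * p.1 + B s * p.2) with hvdef
    have hv : ∀ s, LipschitzWith (⟨max 1 (2*Cb), by positivity⟩ : NNReal) (v s) :=
      aux_lip A B Cb hCb0 hAb hBb
    set F : ℝ → ℝ × ℝ := fun s => (u s, deriv u s) with hFdef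
    have hF : ∀ s ∈ Icc a b, HasDerivAt F (v s (F s)) s := by
      intro s hs
      have hs0 : s ∈ Ioi (0:ℝ) := lt_of_lt_of_le ha0 hs.1
      have hder2 := (hder hs0).1.prodMk (hder hs0).2
      have hval : v s (F s) = (deriv u s, deriv (deriv u) s) := by
        rw [hvdef, hFdef]
        simp only [hAdef, hBdef, hprojid s hs]
        rw [hODE2 s hs0, hcdef]
        have : -s⁻¹ * deriv u s = -(s⁻¹ * deriv u s) := by ring
        simp only [Prod.mk.injEq]
        constructor
        · trivial
        · ring
      rw [hval]
      exact hder2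
    have hcontF : ContinuousOn F (Icc a b) :=
      fun s hs => (hF s hs).continuousAt.continuousWithinAt
    have hF' : ∀ s ∈ Ico a b, HasDerivWithinAt F (v s (F s)) (Ici s) s :=
      fun s hs => (hF s (Ico_subset_Icc_self hs)).hasDerivWithinAt
    set g : ℝ → ℝ × ℝ := fun _ => ((0:ℝ), (0:ℝ)) with hgdef
    have hcontg : ContinuousOn g (Icc a b) := continuousOn_const
    have hg' : ∀ s ∈ Ico a b, HasDerivWithinAt g (v s (g s)) (Ici s) s := by
      intro s hs
      have : v s (g s) = (0, 0) := by
        rw [hvdef, hgdef]; simp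
      rw [this]
      exact (hasDerivAt_const s _).hasDerivWithinAt
    have hinit : F a = g a := by
      rw [hFdef, hgdef]
      simp [hua, hu'a]
    have hfinal := ODE_solution_unique hv hcontF hF' hcontg hg' hinit (Set.right_mem_Icc.mpr hab.le)
    rw [hFdef, hgdef] at hfinal
    simp only [Prod.mk.injEq] at hfinal
    exact hustar hfinal.1
  have hut₀ : u t₀ ≠ 0 := hnv t₀ ⟨ht₀pos, le_rfl⟩
  -- final bound
  refine ⟨t₀, ⟨ht₀pos, ht₀lt1⟩, |u t₀| * t₀ ^ (-με), by positivity, hnv, ?_⟩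
  intro t htm
  have ht0 : (0:ℝ) < t := htm.1
  have hrle : r t ≤ r t₀ := hrmono htm ⟨ht₀pos, le_rfl⟩ htm.2
  have key : (u t)^2 ≤ (|u t₀| * t₀ ^ (-με) * t ^ με)^2 := by
    have e1 : ∀ x : ℝ, 0 < x → (x ^ (-με))^2 = x ^ (-(2*με)) := by
      intro x hx
      rw [sq, ← Real.rpow_add hx]; ring_nf
    have e2 : (t ^ με)^2 = t ^ (2*με) := by
      rw [sq, ← Real.rpow_add ht0]; ring_nf
    have e3 : t ^ (-(2*με)) * t ^ (2*με) = 1 := by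
      rw [← Real.rpow_add ht0]; norm_num
    have hexpand : (|u t₀| * t₀ ^ (-με) * t ^ με)^2
        = (u t₀)^2 * t₀ ^ (-(2*με)) * t ^ (2*με) := by
      rw [mul_pow, mul_pow, sq_abs, e1 t₀ ht₀pos, e2]
    rw [hexpand]
    have hrineq : (u t)^2 * t ^ (-(2*με)) ≤ (u t₀)^2 * t₀ ^ (-(2*με)) := hrle
    calc (u t)^2 = (u t)^2 * t ^ (-(2*με)) * t ^ (2*με) := by
          rw [mul_assoc, e3, mul_one]
      _ ≤ (u t₀)^2 * t₀ ^ (-(2*με)) * t ^ (2*με) := by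
          apply mul_le_mul_of_nonneg_right hrineq
          exact (Real.rpow_pos_of_pos ht0 _).le
  have habs : |u t| ≤ |(|u t₀| * t₀ ^ (-με) * t ^ με)| := by
    rw [← Real.sqrt_sq_eq_abs, ← Real.sqrt_sq_eq_abs]
    exact Real.sqrt_le_sqrt key
  calc |u t| ≤ |(|u t₀| * t₀ ^ (-με) * t ^ με)| := habs
    _ = |u t₀| * t₀ ^ (-με) * t ^ με := by
        rw [abs_of_nonneg]
        positivity
end

section
/- Let μ > 0, m₂ > 0, λ > 0 be real constants, let q be a real exponent with −2 < q < 2, and let 0 < t₀ < 1. Let u : (0,t₀] → ℝ be a C² solution of −t⁻¹(t u'(t))' + μ² t⁻² u(t) + m₂² t² u(t) = λ t^q u(t) on (0,t₀] that extends continuously to [0,t₀] with u(0) = 0 and u(t₀) = 0, satisfies t u'(t) u(t) → 0 as t → 0⁺, and has ∫₀^{t₀}( t|u'(t)|² + t⁻¹|u(t)|² ) dt < ∞. Then ∫₀^{t₀} μ² t⁻¹ u(t)² dt ≤ λ ∫₀^{t₀} t^{1+q} u(t)² dt. In particular, if λ t₀^{2+q} < μ², then u vanishes identically on [0,t₀].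 -/
open MeasureTheory Filter Set Topology

set_option maxHeartbeats 2000000 in
/-- A finite-energy solution of the Bessel-type equation
`-t⁻¹(t u')' + μ² t⁻² u + m₂² t² u = λ t^q u` on `(0,t₀]` vanishing at both
endpoints satisfies `∫ μ² t⁻¹ u² ≤ λ ∫ t^{1+q} u²`; in particular, if
`λ t₀^{2+q} < μ²` then `u ≡ 0` on `[0,t₀]`. -/
theorem temporal_eigenfunction_no_small_zero
    (μ m₂ lam q t₀ : ℝ) (hμ : 0 < μ) (hm₂ : 0 < m₂) (hlam : 0 < lam)
    (hq₁ : -2 < q) (hq₂ : q < 2) (ht₀ : 0 < t₀) (ht₀' : t₀ < 1) (u : ℝ → ℝ)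
    (hC2 : ContDiffOn ℝ 2 u (Ioo 0 t₀))
    (hODE : ∀ t ∈ Ioo (0:ℝ) t₀,
      -(t⁻¹ * deriv (fun s => s * deriv u s) t) + μ^2 / t^2 * u t + m₂^2 * t^2 * u t
        = lam * t ^ q * u t)
    (hcont : ContinuousOn u (Icc 0 t₀)) (hu0 : u 0 = 0) (hut₀ : u t₀ = 0)
    (hflux : Tendsto (fun t => t * deriv u t * u t) (𝓝[>] 0) (𝓝 0))
    (hnorm : IntegrableOn (fun t => t * (deriv u t)^2 + t⁻¹ * (u t)^2) (Ioo 0 t₀)) :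
    (∫ t in Ioo (0:ℝ) t₀, μ^2 * t⁻¹ * (u t)^2)
      ≤ lam * ∫ t in Ioo (0:ℝ) t₀, t ^ (1 + q) * (u t)^2 ∧
    (lam * t₀ ^ (2 + q) < μ^2 → ∀ t ∈ Icc (0:ℝ) t₀, u t = 0) := by
  have ho : IsOpen (Ioo (0:ℝ) t₀) := isOpen_Ioo
  -- derivatives
  have hud : ∀ t ∈ Ioo (0:ℝ) t₀, HasDerivAt u (deriv u t) t := fun t ht =>
    ((hC2.differentiableOn two_ne_zero t ht).differentiableAt (ho.mem_nhds ht)).hasDerivAt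
  have hC1v : ContDiffOn ℝ 1 (deriv u) (Ioo 0 t₀) := hC2.deriv_of_isOpen ho le_rfl
  have hv_cont : ContinuousOn (deriv u) (Ioo 0 t₀) := hC1v.continuousOn
  have hvd : ∀ t ∈ Ioo (0:ℝ) t₀, HasDerivAt (deriv u) (deriv (deriv u) t) t := fun t ht =>
    (((hC1v.differentiableOn one_ne_zero) t ht).differentiableAt (ho.mem_nhds ht)).hasDerivAt
  set F : ℝ → ℝ := fun s => s * deriv u s * u s with hFdef
  set g1 : ℝ → ℝ := fun t => t * (deriv u t)^2 with hg1
  set g2 : ℝ → ℝ := fun t => μ^2 * t⁻¹ * (u t)^2 with hg2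
  set g3 : ℝ → ℝ := fun t => m₂^2 * (t^2*t) * (u t)^2 with hg3
  set g4 : ℝ → ℝ := fun t => t ^ (1+q) * (u t)^2 with hg4
  set G : ℝ → ℝ := fun t => g1 t + g2 t + g3 t - lam * g4 t with hG
  -- product rule pieces
  have htud : ∀ t ∈ Ioo (0:ℝ) t₀,
      HasDerivAt (fun s => s * deriv u s) (deriv u t + t * deriv (deriv u) t) t := by
    intro t ht
    simpa using (hasDerivAt_id' t).fun_mul (hvd t ht)
  -- ODE rearranged
  have hODE' : ∀ t ∈ Ioo (0:ℝ) t₀,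
      deriv u t + t * deriv (deriv u) t
        = μ^2 * t⁻¹ * u t + m₂^2 * (t^2*t) * u t - lam * (t * t ^ q) * u t := by
    intro t ht
    have h0 : (0:ℝ) < t := ht.1
    have hD : deriv (fun s => s * deriv u s) t = deriv u t + t * deriv (deriv u) t :=
      (htud t ht).deriv
    have heq := hODE t ht
    rw [hD] at heq
    have h0' : t ≠ 0 := ne_of_gt h0
    field_simp at heq ⊢
    nlinarith [heq]
  -- F' = G on the open interval
  have hFderiv : ∀ t ∈ Ioo (0:ℝ) t₀, HasDerivAt F (G t) t := by
    intro t ht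
    have h0 : (0:ℝ) < t := ht.1
    have h := (htud t ht).mul (hud t ht)
    rw [hODE' t ht] at h
    have hrp : t ^ (1+q) = t * t ^ q := by
      rw [Real.rpow_add h0, Real.rpow_one]
    have : (μ^2 * t⁻¹ * u t + m₂^2 * (t^2*t) * u t - lam * (t * t ^ q) * u t) * u t
        + t * deriv u t * deriv u t = G t := by
      simp only [hG, hg1, hg2, hg3, hg4, hrp]
      have : t⁻¹ * u t * u t = t⁻¹ * (u t)^2 := by ring
      ring
    rwa [this] at h
  -- measurability
  have ms_u : AEStronglyMeasurable u (volume.restrict (Ioo 0 t₀)) :=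
    (hcont.mono Ioo_subset_Icc_self).aestronglyMeasurable measurableSet_Ioo
  have ms_v : AEStronglyMeasurable (deriv u) (volume.restrict (Ioo 0 t₀)) :=
    hv_cont.aestronglyMeasurable measurableSet_Ioo
  have ms_id : AEStronglyMeasurable (fun t : ℝ => t) (volume.restrict (Ioo 0 t₀)) :=
    aestronglyMeasurable_id
  have ms_inv : AEStronglyMeasurable (fun t : ℝ => t⁻¹) (volume.restrict (Ioo 0 t₀)) :=
    (Measurable.inv measurable_id).aestronglyMeasurable
  have ms_rp : AEStronglyMeasurable (fun t : ℝ => t ^ (1+q)) (volume.restrict (Ioo 0 t₀)) := by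
    refine ContinuousOn.aestronglyMeasurable ?_ measurableSet_Ioo
    intro t ht
    exact (Real.continuousAt_rpow_const t (1+q) (Or.inl (ne_of_gt ht.1))).continuousWithinAt
  have ms_u2 : AEStronglyMeasurable (fun t => (u t)^2) (volume.restrict (Ioo 0 t₀)) := by
    exact (ms_u.mul ms_u).congr (Eventually.of_forall fun t => by simp [pow_two])
  have ms_v2 : AEStronglyMeasurable (fun t => (deriv u t)^2) (volume.restrict (Ioo 0 t₀)) := by
    exact (ms_v.mul ms_v).congr (Eventually.of_forall fun t => by simp [pow_two])
  have ms_g2 : AEStronglyMeasurable g2 (volume.restrict (Ioo 0 t₀)) :=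
    (ms_inv.const_mul (μ^2)).mul ms_u2
  have ms_g3 : AEStronglyMeasurable g3 (volume.restrict (Ioo 0 t₀)) :=
    ((((measurable_id.pow_const 2).mul measurable_id).aestronglyMeasurable.const_mul
      (m₂^2)).mul ms_u2)
  -- integrability of the pieces on Ioo 0 t₀
  have int_g1 : IntegrableOn g1 (Ioo 0 t₀) := by
    refine hnorm.mono' (ms_id.mul ms_v2) ?_
    refine (ae_restrict_iff' measurableSet_Ioo).2 (Eventually.of_forall fun t ht => ?_)
    have h1 : 0 ≤ t * (deriv u t)^2 := mul_nonneg ht.1.le (sq_nonneg _)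
    have h2 : 0 ≤ t⁻¹ * (u t)^2 := mul_nonneg (inv_nonneg.2 ht.1.le) (sq_nonneg _)
    rw [hg1, Real.norm_eq_abs, abs_of_nonneg h1]; linarith
  have int_b2 : IntegrableOn (fun t => t⁻¹ * (u t)^2) (Ioo 0 t₀) := by
    refine hnorm.mono' (ms_inv.mul ms_u2) ?_
    refine (ae_restrict_iff' measurableSet_Ioo).2 (Eventually.of_forall fun t ht => ?_)
    have h1 : 0 ≤ t * (deriv u t)^2 := mul_nonneg ht.1.le (sq_nonneg _)
    have h2 : 0 ≤ t⁻¹ * (u t)^2 := mul_nonneg (inv_nonneg.2 ht.1.le) (sq_nonneg _)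
    rw [Real.norm_eq_abs, abs_of_nonneg h2]; linarith
  have int_g2 : IntegrableOn g2 (Ioo 0 t₀) := by
    simpa [hg2, mul_assoc, IntegrableOn] using (int_b2.const_mul (μ^2))
  have hptw : ∀ t ∈ Ioo (0:ℝ) t₀, g4 t ≤ t₀ ^ (2+q) * (t⁻¹ * (u t)^2) := by
    intro t ht
    have h0 : (0:ℝ) < t := ht.1
    have hfac : t ^ (1+q) = t ^ (2+q) * t⁻¹ := by
      rw [← Real.rpow_neg_one t, ← Real.rpow_add h0]; congr 1; ring
    have hle : t ^ (2+q) ≤ t₀ ^ (2+q) :=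
      Real.rpow_le_rpow h0.le ht.2.le (by linarith)
    have hu2 : 0 ≤ (u t)^2 := sq_nonneg _
    have hinv : 0 ≤ t⁻¹ := inv_nonneg.2 h0.le
    simp only [hg4]
    rw [hfac]
    calc t ^ (2+q) * t⁻¹ * (u t)^2 ≤ t₀ ^ (2+q) * t⁻¹ * (u t)^2 := by
          apply mul_le_mul_of_nonneg_right (mul_le_mul_of_nonneg_right hle hinv) hu2
      _ = t₀ ^ (2+q) * (t⁻¹ * (u t)^2) := by ring
  have hg4nn : ∀ t ∈ Ioo (0:ℝ) t₀, 0 ≤ g4 t := fun t ht =>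
    mul_nonneg (Real.rpow_nonneg ht.1.le _) (sq_nonneg _)
  have int_g4 : IntegrableOn g4 (Ioo 0 t₀) := by
    refine (int_b2.const_mul (t₀ ^ (2+q))).mono' (ms_rp.mul ms_u2) ?_
    refine (ae_restrict_iff' measurableSet_Ioo).2 (Eventually.of_forall fun t ht => ?_)
    rw [Real.norm_eq_abs, abs_of_nonneg (hg4nn t ht)]
    exact hptw t ht
  have int_g3 : IntegrableOn g3 (Ioo 0 t₀) := by
    refine (int_b2.const_mul (m₂^2)).mono' ms_g3 ?_
    refine (ae_restrict_iff' measurableSet_Ioo).2 (Eventually.of_forall fun t ht => ?_)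
    have h0 : (0:ℝ) < t := ht.1
    have ht1 : t ≤ 1 := le_of_lt (ht.2.trans ht₀')
    have hpos : 0 ≤ g3 t := by
      rw [hg3]
      exact mul_nonneg (mul_nonneg (sq_nonneg _) (mul_nonneg (sq_nonneg _) h0.le)) (sq_nonneg _)
    rw [Real.norm_eq_abs, abs_of_nonneg hpos]
    have h4 : t^2 * t ≤ t⁻¹ := by
      rw [inv_eq_one_div, le_div_iff₀ h0]
      have e1 : t*t ≤ 1 := by nlinarith
      nlinarith [e1]
    have := mul_le_mul_of_nonneg_right h4 (sq_nonneg (u t))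
    have hm2 : (0:ℝ) ≤ m₂^2 := sq_nonneg _
    rw [hg3]
    calc m₂^2 * (t^2*t) * (u t)^2 = m₂^2 * ((t^2*t) * (u t)^2) := by ring
      _ ≤ m₂^2 * (t⁻¹ * (u t)^2) := mul_le_mul_of_nonneg_left this hm2
  have intG : IntegrableOn G (Ioo 0 t₀) := by
    exact ((int_g1.add int_g2).add int_g3).sub (int_g4.const_mul lam)
  -- F equals the primitive of G on (0,t₀)
  have intG_sub : ∀ x ∈ Icc (0:ℝ) t₀, IntervalIntegrable G volume 0 x := by
    intro x hx
    rw [intervalIntegrable_iff_integrableOn_Ioo_of_le hx.1]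
    exact intG.mono_set (Ioo_subset_Ioo le_rfl hx.2)
  have hFP : ∀ x ∈ Ioo (0:ℝ) t₀, F x = ∫ y in (0:ℝ)..x, G y := by
    intro x hx
    have h := intervalIntegral.integral_eq_sub_of_hasDerivAt_of_tendsto (f := F) (f' := G)
      hx.1 (fun y hy => hFderiv y ⟨hy.1, hy.2.trans hx.2⟩)
      (intG_sub x ⟨hx.1.le, hx.2.le⟩) hflux
      (((hFderiv x hx).continuousAt.tendsto).mono_left nhdsWithin_le_nhds)
    rw [h]; ring
  set L : ℝ := ∫ y in (0:ℝ)..t₀, G y with hLdef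
  have hQcont : ContinuousOn (fun x => ∫ y in (0:ℝ)..x, G y) (Icc 0 t₀) := by
    have : IntegrableOn G (uIcc 0 t₀) := by
      rw [uIcc_of_le ht₀.le, integrableOn_Icc_iff_integrableOn_Ioo]
      exact intG
    simpa [uIcc_of_le ht₀.le] using intervalIntegral.continuousOn_primitive_interval this
  have hFlim : Tendsto F (𝓝[<] t₀) (𝓝 L) := by
    have h1 : Tendsto (fun x => ∫ y in (0:ℝ)..x, G y) (𝓝[<] t₀) (𝓝 L) := by
      have h2 := (hQcont t₀ (right_mem_Icc.2 ht₀.le)).mono_left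
        (nhdsWithin_mono t₀ (Ioo_subset_Icc_self : Ioo (0:ℝ) t₀ ⊆ Icc 0 t₀))
      rwa [nhdsWithin_Ioo_eq_nhdsLT ht₀] at h2
    refine h1.congr' ?_
    filter_upwards [Ioo_mem_nhdsLT ht₀] with x hx
    exact (hFP x hx).symm
  have hLsplit : L = (∫ t in Ioo (0:ℝ) t₀, g1 t) + (∫ t in Ioo (0:ℝ) t₀, g2 t)
      + (∫ t in Ioo (0:ℝ) t₀, g3 t) - lam * ∫ t in Ioo (0:ℝ) t₀, g4 t := by
    have hfi : IntegrableOn (fun t => g1 t + g2 t + g3 t) (Ioo 0 t₀) :=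
      (int_g1.add int_g2).add int_g3
    have hgi : IntegrableOn (fun t => lam * g4 t) (Ioo 0 t₀) := int_g4.const_mul lam
    have h12 : IntegrableOn (fun t => g1 t + g2 t) (Ioo 0 t₀) := int_g1.add int_g2
    rw [hLdef, intervalIntegral.integral_of_le ht₀.le, integral_Ioc_eq_integral_Ioo, hG]
    rw [integral_sub hfi hgi, integral_add h12 int_g3, integral_add int_g1 int_g2,
      integral_const_mul]
  have A1nn : 0 ≤ ∫ t in Ioo (0:ℝ) t₀, g1 t :=
    setIntegral_nonneg measurableSet_Ioo (fun t ht => mul_nonneg ht.1.le (sq_nonneg _))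
  have A3nn : 0 ≤ ∫ t in Ioo (0:ℝ) t₀, g3 t :=
    setIntegral_nonneg measurableSet_Ioo (fun t ht => mul_nonneg
      (mul_nonneg (sq_nonneg _) (mul_nonneg (sq_nonneg _) ht.1.le)) (sq_nonneg _))
  clear_value g1 g2 g3 g4 F G L
  -- integrability of 2 u u' near t₀ given a bound
  have hintuv : ∀ s, s ∈ Ioo (0:ℝ) t₀ → ∀ C : ℝ, (∀ y ∈ Ioo s t₀, |u y * deriv u y| ≤ C) →
      IntegrableOn (fun y => 2 * u y * deriv u y) (Ioo s t₀) := by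
    intro s hs C hC
    have hsub : Ioo s t₀ ⊆ Ioo 0 t₀ := Ioo_subset_Ioo hs.1.le le_rfl
    have hres : volume.restrict (Ioo s t₀) ≤ volume.restrict (Ioo 0 t₀) :=
      Measure.restrict_mono hsub le_rfl
    have hms : AEStronglyMeasurable (fun y => 2 * u y * deriv u y)
        (volume.restrict (Ioo s t₀)) :=
      ((ms_u.mono_measure hres).const_mul 2).mul (ms_v.mono_measure hres)
    refine (integrable_const (2*C)).mono' hms ?_
    refine (ae_restrict_iff' measurableSet_Ioo).2 (Eventually.of_forall fun y hy => ?_)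
    rw [Real.norm_eq_abs, mul_assoc, abs_mul, abs_two]
    have := hC y hy
    have h0C : 0 ≤ C := le_trans (abs_nonneg _) this
    nlinarith [this]
  -- FTC helper for u² on (s,t₀)
  have hsqFTC : ∀ s ∈ Ioo (0:ℝ) t₀, ∀ C : ℝ, (∀ y ∈ Ioo s t₀, |u y * deriv u y| ≤ C) →
      ∫ y in Ioo s t₀, 2 * u y * deriv u y = -(u s)^2 := by
    intro s hs C hC
    have hsub : Ioo s t₀ ⊆ Ioo 0 t₀ := Ioo_subset_Ioo hs.1.le le_rfl
    have hint := hintuv s hs C hC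
    have hFTC := intervalIntegral.integral_eq_sub_of_hasDerivAt_of_le
      (f := fun y => (u y)^2) (f' := fun y => 2 * u y * deriv u y) hs.2.le
      ((hcont.mono (Icc_subset_Icc hs.1.le le_rfl)).pow 2)
      (fun y hy => by simpa using (hud y (hsub hy)).fun_pow 2)
      (by rw [intervalIntegrable_iff_integrableOn_Ioo_of_le hs.2.le]; exact hint)
    rw [intervalIntegral.integral_of_le hs.2.le, integral_Ioc_eq_integral_Ioo] at hFTC
    rw [hFTC]; simp [hut₀]
  -- extracting a left neighbourhood of t₀
  have exists_s₁ : ∀ ε : ℝ, 0 < ε → ∃ s₁, 0 < s₁ ∧ s₁ < t₀ ∧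
      ∀ y ∈ Ioo s₁ t₀, |F y - L| < ε := by
    intro ε hε
    have hev : ∀ᶠ y in 𝓝[<] t₀, |F y - L| < ε := by
      have h2 := Metric.tendsto_nhds.1 hFlim ε hε
      simpa [Real.dist_eq] using h2
    rw [eventually_iff, mem_nhdsLT_iff_exists_Ioo_subset] at hev
    obtain ⟨l, hl, hsubl⟩ := hev
    refine ⟨max l (t₀/2), lt_max_of_lt_right (by linarith), max_lt hl (by linarith), ?_⟩
    intro y hy
    exact hsubl ⟨lt_of_le_of_lt (le_max_left _ _) hy.1, hy.2⟩
  -- the boundary limit is not positive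
  have hnotpos : ¬ (0 < L) := by
    intro hL0
    obtain ⟨s₁, hs₁0, hs₁t, hs₁⟩ := exists_s₁ (L/2) (by linarith)
    set s := (s₁ + t₀)/2 with hsdef
    have hss1 : s₁ < s := by rw [hsdef]; linarith
    have hst : s < t₀ := by rw [hsdef]; linarith
    have hs0 : 0 < s := lt_trans hs₁0 hss1
    have hsmem : s ∈ Ioo (0:ℝ) t₀ := ⟨hs0, hst⟩
    have hbd : ∀ y ∈ Ioo s t₀, |u y * deriv u y| ≤ (3*L/2) / s₁ := by
      intro y hy
      have hy1 : s₁ < y := lt_trans hss1 hy.1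
      have hy0 : 0 < y := lt_trans hs₁0 hy1
      have h := abs_lt.1 (hs₁ y ⟨hy1, hy.2⟩)
      have huv : u y * deriv u y = F y / y := by
        rw [hFdef]; field_simp
      rw [huv, abs_div, abs_of_pos hy0]
      have h1 : |F y| ≤ 3*L/2 := by
        rw [abs_le]; constructor <;> linarith
      exact div_le_div₀ (by linarith) h1 hs₁0 hy1.le
    have hkey := hsqFTC s hsmem _ hbd
    have hlow : ∀ y ∈ Ioo s t₀, L/t₀ ≤ 2 * u y * deriv u y := by
      intro y hy
      have hy0 : 0 < y := lt_trans hs0 hy.1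
      have hFy := abs_lt.1 (hs₁ y ⟨lt_trans hss1 hy.1, hy.2⟩)
      have h2 : 2 * u y * deriv u y = 2 * F y / y := by
        rw [hFdef]; field_simp
      rw [h2, div_le_div_iff₀ ht₀ hy0]
      nlinarith [hy.2, hFy.1]
    have hconst : ∫ _ in Ioo s t₀, (L/t₀) = (t₀ - s) * (L/t₀) := by
      rw [setIntegral_const, Real.volume_real_Ioo_of_le (by linarith), smul_eq_mul]
    have hci : IntegrableOn (fun _ : ℝ => L/t₀) (Ioo s t₀) volume :=
      integrableOn_const (by rw [Real.volume_Ioo]; exact ENNReal.ofReal_ne_top)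
    have hmono : (∫ _ in Ioo s t₀, (L/t₀)) ≤ ∫ y in Ioo s t₀, 2 * u y * deriv u y :=
      setIntegral_mono_on hci (hintuv s hsmem _ hbd) measurableSet_Ioo hlow
    rw [hconst, hkey] at hmono
    have hq1 : 0 < (t₀ - s) * (L/t₀) := mul_pos (by linarith) (div_pos hL0 ht₀)
    linarith [sq_nonneg (u s), hmono, hq1]
  -- the boundary limit is not negative
  have hnotneg : ¬ (L < 0) := by
    intro hLneg
    obtain ⟨s₁, hs₁0, hs₁t, hs₁⟩ := exists_s₁ (-L/2) (by linarith)
    have hsub1 : Ioo s₁ t₀ ⊆ Ioo 0 t₀ := Ioo_subset_Ioo hs₁0.le le_rfl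
    have hres1 : volume.restrict (Ioo s₁ t₀) ≤ volume.restrict (Ioo 0 t₀) :=
      Measure.restrict_mono hsub1 le_rfl
    have int_v2 : IntegrableOn (fun y => (deriv u y)^2) (Ioo s₁ t₀) := by
      refine ((int_g1.mono_set hsub1).const_mul s₁⁻¹).mono' (ms_v2.mono_measure hres1) ?_
      refine (ae_restrict_iff' measurableSet_Ioo).2 (Eventually.of_forall fun y hy => ?_)
      rw [Real.norm_eq_abs, abs_of_nonneg (sq_nonneg _), hg1]
      have hy1 : s₁ < y := hy.1
      have h1 : 1 ≤ s₁⁻¹ * y := by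
        rw [inv_mul_eq_div, le_div_iff₀ hs₁0]; linarith
      nlinarith [mul_nonneg (sub_nonneg.2 h1) (sq_nonneg (deriv u y))]
    have hii_v2 : ∀ x ∈ Icc s₁ t₀, IntervalIntegrable (fun y => (deriv u y)^2) volume x t₀ := by
      intro x hx
      rw [intervalIntegrable_iff_integrableOn_Ioo_of_le hx.2]
      exact int_v2.mono_set (Ioo_subset_Ioo hx.1 le_rfl)
    have hii_v2' : ∀ x ∈ Icc s₁ t₀, IntervalIntegrable (fun y => (deriv u y)^2) volume s₁ x := by
      intro x hx
      rw [intervalIntegrable_iff_integrableOn_Ioo_of_le hx.1]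
      exact int_v2.mono_set (Ioo_subset_Ioo le_rfl hx.2)
    -- E s → 0 as s → t₀⁻
    have hElim : Tendsto (fun x => ∫ y in x..t₀, (deriv u y)^2) (𝓝[<] t₀) (𝓝 0) := by
      have hQ2 : ContinuousOn (fun x => ∫ y in s₁..x, (deriv u y)^2) (Icc s₁ t₀) := by
        have hI : IntegrableOn (fun y => (deriv u y)^2) (uIcc s₁ t₀) := by
          rw [uIcc_of_le hs₁t.le, integrableOn_Icc_iff_integrableOn_Ioo]; exact int_v2
        simpa [uIcc_of_le hs₁t.le] using intervalIntegral.continuousOn_primitive_interval hI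
      have h1 : Tendsto (fun x => ∫ y in s₁..x, (deriv u y)^2) (𝓝[<] t₀)
          (𝓝 (∫ y in s₁..t₀, (deriv u y)^2)) := by
        have h2 := (hQ2 t₀ (right_mem_Icc.2 hs₁t.le)).mono_left
          (nhdsWithin_mono t₀ (Ioo_subset_Icc_self : Ioo s₁ t₀ ⊆ Icc s₁ t₀))
        rwa [nhdsWithin_Ioo_eq_nhdsLT hs₁t] at h2
      have h3 : Tendsto (fun x => (∫ y in s₁..t₀, (deriv u y)^2) - ∫ y in s₁..x, (deriv u y)^2)
          (𝓝[<] t₀) (𝓝 0) := by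
        have h4 := Tendsto.const_sub (∫ y in s₁..t₀, (deriv u y)^2) h1
        rwa [sub_self] at h4
      refine h3.congr' ?_
      filter_upwards [Ioo_mem_nhdsLT hs₁t] with x hx
      exact intervalIntegral.integral_interval_sub_left
        (hii_v2 s₁ (left_mem_Icc.2 hs₁t.le)) (hii_v2' x ⟨hx.1.le, hx.2.le⟩)
    -- pick s close to t₀ with E s small
    have hcpos : 0 < -L/t₀ := div_pos (by linarith) ht₀
    have hev2 : ∀ᶠ x in 𝓝[<] t₀, (∫ y in x..t₀, (deriv u y)^2) < -L/t₀ := by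
      have := Metric.tendsto_nhds.1 hElim (-L/t₀) hcpos
      refine this.mono fun x hx => ?_
      rw [Real.dist_eq, sub_zero] at hx
      exact lt_of_le_of_lt (le_abs_self _) hx
    obtain ⟨s, hsE, hsmem1⟩ := (hev2.and (Ioo_mem_nhdsLT hs₁t)).exists
    set E : ℝ := ∫ y in s..t₀, (deriv u y)^2 with hEdef
    set w : ℝ := t₀ - s with hwdef
    have hs0 : 0 < s := lt_trans hs₁0 hsmem1.1
    have hst : s < t₀ := hsmem1.2
    have hw0 : 0 < w := by rw [hwdef]; linarith
    have hsmem : s ∈ Ioo (0:ℝ) t₀ := ⟨hs0, hst⟩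
    -- lower bound on u s ^ 2
    have hbd : ∀ y ∈ Ioo s t₀, |u y * deriv u y| ≤ (3*(-L)/2) / s₁ := by
      intro y hy
      have hy1 : s₁ < y := lt_trans hsmem1.1 hy.1
      have hy0 : 0 < y := lt_trans hs₁0 hy1
      have h := abs_lt.1 (hs₁ y ⟨hy1, hy.2⟩)
      have huv : u y * deriv u y = F y / y := by
        rw [hFdef]; field_simp
      rw [huv, abs_div, abs_of_pos hy0]
      have h1 : |F y| ≤ 3*(-L)/2 := by
        rw [abs_le]; constructor <;> linarith
      exact div_le_div₀ (by linarith) h1 hs₁0 hy1.le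
    have hkey := hsqFTC s hsmem _ hbd
    have hhigh : ∀ y ∈ Ioo s t₀, 2 * u y * deriv u y ≤ L/t₀ := by
      intro y hy
      have hy0 : 0 < y := lt_trans hs0 hy.1
      have hFy := abs_lt.1 (hs₁ y ⟨lt_trans hsmem1.1 hy.1, hy.2⟩)
      have h2 : 2 * u y * deriv u y = 2 * F y / y := by
        rw [hFdef]; field_simp
      rw [h2, div_le_div_iff₀ hy0 ht₀]
      nlinarith [hy.2, hFy.2]
    have hconst : ∫ _ in Ioo s t₀, (L/t₀) = (t₀ - s) * (L/t₀) := by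
      rw [setIntegral_const, Real.volume_real_Ioo_of_le (by linarith), smul_eq_mul]
    have hci : IntegrableOn (fun _ : ℝ => L/t₀) (Ioo s t₀) volume :=
      integrableOn_const (by rw [Real.volume_Ioo]; exact ENNReal.ofReal_ne_top)
    have hmono : (∫ y in Ioo s t₀, 2 * u y * deriv u y) ≤ ∫ _ in Ioo s t₀, (L/t₀) :=
      setIntegral_mono_on (hintuv s hsmem _ hbd) hci measurableSet_Ioo hhigh
    rw [hconst, hkey] at hmono
    -- u s ^ 2 ≥ (-L/t₀) * w
    have hlower : (-L/t₀) * w ≤ (u s)^2 := by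
      have h9 : -((t₀ - s) * (L/t₀)) = -L/t₀*(t₀ - s) := by ring
      rw [hwdef]
      linarith [hmono, h9]
    -- Cauchy–Schwarz style upper bound : u s ^ 2 ≤ E * w
    have hEnn : 0 ≤ E := by
      rw [hEdef]
      exact intervalIntegral.integral_nonneg hst.le (fun y _ => sq_nonneg _)
    have hii_v : IntervalIntegrable (deriv u) volume s t₀ := by
      rw [intervalIntegrable_iff_integrableOn_Ioo_of_le hst.le]
      have hsub2 : Ioo s t₀ ⊆ Ioo s₁ t₀ := Ioo_subset_Ioo hsmem1.1.le le_rfl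
      have hc1 : IntegrableOn (fun _ : ℝ => (1:ℝ)) (Ioo s t₀) volume :=
        integrableOn_const (C := (1:ℝ))
          (by rw [Real.volume_Ioo]; exact ENNReal.ofReal_ne_top)
      refine ((int_v2.mono_set hsub2).add hc1).mono'
        ((ms_v.mono_measure (Measure.restrict_mono (show Ioo s t₀ ⊆ Ioo 0 t₀ from
          fun y hy => ⟨lt_trans hs0 hy.1, hy.2⟩) le_rfl))) ?_
      refine (ae_restrict_iff' measurableSet_Ioo).2 (Eventually.of_forall fun y hy => ?_)
      rw [Real.norm_eq_abs]
      simp only [Pi.add_apply]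
      nlinarith [sq_nonneg (|deriv u y| - 1), sq_abs (deriv u y), abs_nonneg (deriv u y)]
    have hFTCu : ∫ y in s..t₀, deriv u y = -(u s) := by
      rw [intervalIntegral.integral_eq_sub_of_hasDerivAt_of_le hst.le
        (hcont.mono (Icc_subset_Icc hs0.le le_rfl))
        (fun y hy => hud y ⟨lt_trans hs0 hy.1, hy.2⟩) hii_v, hut₀]
      ring
    have habs : ∀ a : ℝ, 0 < a → |u s| ≤ a/2 * w + (1/(2*a)) * E := by
      intro a ha
      have h1 : |u s| ≤ ∫ y in s..t₀, |deriv u y| := by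
        rw [← abs_neg, ← hFTCu]
        exact intervalIntegral.abs_integral_le_integral_abs hst.le
      have h2 : ∫ y in s..t₀, |deriv u y| ≤ ∫ y in s..t₀, (a/2 + (1/(2*a)) * (deriv u y)^2) := by
        refine intervalIntegral.integral_mono_on hst.le hii_v.abs
          ((intervalIntegrable_const).add ((hii_v2 s ⟨hsmem1.1.le, hst.le⟩).const_mul _)) ?_
        intro x _
        have h2a : (0:ℝ) < 2*a := by linarith
        rw [show a/2 + 1/(2*a) * (deriv u x)^2 = (a^2 + (deriv u x)^2)/(2*a) by field_simp,
          le_div_iff₀ h2a]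
        nlinarith [sq_nonneg (|deriv u x| - a), sq_abs (deriv u x), abs_nonneg (deriv u x)]
      have h3 : ∫ y in s..t₀, (a/2 + (1/(2*a)) * (deriv u y)^2) = a/2 * w + (1/(2*a)) * E := by
        rw [intervalIntegral.integral_add intervalIntegrable_const
          ((hii_v2 s ⟨hsmem1.1.le, hst.le⟩).const_mul _),
          intervalIntegral.integral_const, intervalIntegral.integral_const_mul, hEdef, hwdef,
          smul_eq_mul]
        ring
      linarith [h1, h2.trans_eq h3]
    have hupper : (u s)^2 ≤ E * w := by
      rcases eq_or_lt_of_le hEnn with hE0 | hEpos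
      · have hzero : u s = 0 := by
          have h4 : ∀ a : ℝ, 0 < a → |u s| ≤ a/2 * w := by
            intro a ha
            have := habs a ha
            rw [← hE0] at this
            simpa using this
          by_contra hne
          have hpos : 0 < |u s| := abs_pos.2 hne
          have h6 := h4 (|u s| / w) (div_pos hpos hw0)
          have h5 : (|u s|/w)/2 * w = |u s|/2 := by field_simp
          rw [h5] at h6
          linarith
        rw [hzero, show ((0:ℝ))^2 = 0 by norm_num]
        exact mul_nonneg hEnn hw0.le
      · set a : ℝ := Real.sqrt (E / w) with hadef
        have ha2 : a^2 = E / w := Real.sq_sqrt (le_of_lt (div_pos hEpos hw0))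
        have ha0 : 0 < a := Real.sqrt_pos.2 (div_pos hEpos hw0)
        have hE' : E = a^2 * w := by rw [ha2, div_mul_cancel₀ _ hw0.ne']
        have hb := habs a ha0
        have hb2 : a/2 * w + (1/(2*a)) * E = a * w := by
          rw [hE']; field_simp; ring
        rw [hb2] at hb
        calc (u s)^2 = |u s|^2 := (sq_abs _).symm
          _ ≤ (a*w)^2 := by nlinarith [abs_nonneg (u s)]
          _ = a^2 * w * w := by ring
          _ = E * w := by rw [← hE']
    -- contradiction : -L/t₀ ≤ E < -L/t₀
    have hcle : -L/t₀ ≤ E := by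
      have := hlower.trans hupper
      exact le_of_mul_le_mul_right (by linarith [this]) hw0
    rw [hEdef] at hcle
    linarith [hsE]
  have hL0 : L = 0 := le_antisymm (not_lt.1 hnotpos) (not_lt.1 hnotneg)
  -- main inequality
  have hA2 : (∫ t in Ioo (0:ℝ) t₀, g2 t) ≤ lam * ∫ t in Ioo (0:ℝ) t₀, g4 t := by
    rw [hL0] at hLsplit
    linarith [A1nn, A3nn]
  refine ⟨hA2, ?_⟩
  -- vanishing under the smallness condition
  intro hcmp t htIcc
  have hJnn : 0 ≤ ∫ t in Ioo (0:ℝ) t₀, t⁻¹ * (u t)^2 :=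
    setIntegral_nonneg measurableSet_Ioo
      (fun t ht => mul_nonneg (inv_nonneg.2 ht.1.le) (sq_nonneg _))
  have hA2J : (∫ t in Ioo (0:ℝ) t₀, g2 t) = μ^2 * ∫ t in Ioo (0:ℝ) t₀, t⁻¹ * (u t)^2 := by
    simp only [hg2, mul_assoc]
    rw [integral_const_mul]
  have hA4J : (∫ t in Ioo (0:ℝ) t₀, g4 t) ≤ t₀^(2+q) * ∫ t in Ioo (0:ℝ) t₀, t⁻¹ * (u t)^2 := by
    rw [← integral_const_mul]
    exact setIntegral_mono_on int_g4 (int_b2.const_mul _) measurableSet_Ioo hptw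
  have hJ0 : (∫ t in Ioo (0:ℝ) t₀, t⁻¹ * (u t)^2) = 0 := by
    set J : ℝ := ∫ t in Ioo (0:ℝ) t₀, t⁻¹ * (u t)^2 with hJdef
    have step : μ^2 * J ≤ lam * (t₀^(2+q) * J) := by
      calc μ^2 * J = ∫ t in Ioo (0:ℝ) t₀, g2 t := hA2J.symm
        _ ≤ lam * ∫ t in Ioo (0:ℝ) t₀, g4 t := hA2
        _ ≤ lam * (t₀^(2+q) * J) := mul_le_mul_of_nonneg_left hA4J hlam.le
    have hJle : J ≤ 0 := by
      by_contra hpos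
      push_neg at hpos
      have := mul_lt_mul_of_pos_right hcmp hpos
      nlinarith [step]
    exact le_antisymm hJle hJnn
  have hae : ∀ᵐ x ∂(volume.restrict (Ioo (0:ℝ) t₀)), x⁻¹ * (u x)^2 = 0 := by
    have h5 := (setIntegral_eq_zero_iff_of_nonneg_ae ?_ int_b2).1 hJ0
    · filter_upwards [h5] with x hx using hx
    · refine (ae_restrict_iff' measurableSet_Ioo).2 (Eventually.of_forall fun y hy => ?_)
      exact mul_nonneg (inv_nonneg.2 hy.1.le) (sq_nonneg _)
  have hZ : ∀ x ∈ Ioo (0:ℝ) t₀, u x = 0 := by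
    by_contra hx
    push_neg at hx
    obtain ⟨x, hxmem, hxne⟩ := hx
    have hSopen : IsOpen (Ioo (0:ℝ) t₀ ∩ u ⁻¹' {0}ᶜ) :=
      hC2.continuousOn.isOpen_inter_preimage ho isOpen_compl_singleton
    have h1 : ∀ᵐ y ∂(volume : Measure ℝ), y ∈ Ioo (0:ℝ) t₀ → y⁻¹ * (u y)^2 = 0 :=
      (ae_restrict_iff' measurableSet_Ioo).1 hae
    have hSnull : volume (Ioo (0:ℝ) t₀ ∩ u ⁻¹' {0}ᶜ) = 0 := by
      refine measure_mono_null ?_ (ae_iff.1 h1)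
      intro y hy
      simp only [mem_setOf_eq, not_forall]
      refine ⟨hy.1, ?_⟩
      have hy0 : 0 < y := hy.1.1
      have hune : u y ≠ 0 := hy.2
      exact mul_ne_zero (inv_ne_zero hy0.ne') (pow_ne_zero 2 hune)
    have hpos := hSopen.measure_pos volume ⟨x, hxmem, hxne⟩
    exact absurd hSnull (ne_of_gt hpos)
  rcases eq_or_lt_of_le htIcc.1 with h0 | h0
  · rw [← h0]; exact hu0
  rcases eq_or_lt_of_le htIcc.2 with h1 | h1
  · rw [h1]; exact hut₀
  · exact hZ t ⟨h0, h1⟩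
end

section
/- Let m₂ > 0, λ > 0 and μ_ε > 0 be real constants, set a = (μ_ε + 1)/2 − λ/(4 m₂) and b = μ_ε + 1, and define M : ℝ → ℝ by the power series M(z) = Σ_{k=0}^∞ ( (a)_k / ( (b)_k · k! ) ) z^k, where (x)_k = x(x+1)···(x+k−1) denotes the rising factorial (Pochhammer symbol) with (x)_0 = 1. Then this power series converges absolutely for every z ∈ ℝ, and the function ψ(t) = e^{−m₂ t²/2} · t^{μ_ε} · M(m₂ t²) is a C² solution on (0,∞) of the equation −t⁻¹(t ψ'(t))' + μ_ε² t⁻² ψ(t) + m₂² t² ψ(t) = λ ψ(t), and ψ(t) → 0 as t → 0⁺. -/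
open MeasureTheory Filter Set Topology

/-- The rising factorial (Pochhammer symbol) `(x)_k = x(x+1)⋯(x+k-1)`, `(x)_0 = 1`. -/
def risingFactorial (x : ℝ) (k : ℕ) : ℝ := ∏ i ∈ Finset.range k, (x + i)

/-- The coefficient `(a)_k / ((b)_k · k!)` of Kummer's confluent hypergeometric series. -/
noncomputable def kummerCoef (a b : ℝ) (k : ℕ) : ℝ :=
  risingFactorial a k / (risingFactorial b k * (Nat.factorial k))

/-- Kummer's confluent hypergeometric function `M(a,b,z) = Σ_k (a)_k/((b)_k k!) z^k`. -/
noncomputable def kummerM (a b z : ℝ) : ℝ := ∑' k : ℕ, kummerCoef a b k * z ^ k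



/-- Ratio tendsto 0. -/
lemma kum_ratio_tendsto (a b z : ℝ) (hb : 0 < b) :
    Tendsto (fun k : ℕ => |(a + k) * z / ((b + k) * (k + 1))|) atTop (𝓝 0) := by
  have h1 : Tendsto (fun k : ℕ => (a + k) / (b + k)) atTop (𝓝 1) := by
    have : (fun k : ℕ => (a + k) / (b + k)) =ᶠ[atTop] fun k : ℕ => 1 + (a - b) / (b + k) := by
      filter_upwards [eventually_gt_atTop 0] with k hk
      have hbk : b + (k:ℝ) ≠ 0 := by positivity
      field_simp
      ring
    rw [tendsto_congr' this]
    have h2 : Tendsto (fun k : ℕ => (a - b) / (b + k)) atTop (𝓝 0) :=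
      Tendsto.div_atTop tendsto_const_nhds
        (tendsto_atTop_add_const_left _ b tendsto_natCast_atTop_atTop)
    simpa using tendsto_const_nhds.add h2
  have h2 : Tendsto (fun k : ℕ => z / (k + 1)) atTop (𝓝 0) :=
    Tendsto.div_atTop tendsto_const_nhds
      (tendsto_atTop_add_const_right _ 1 tendsto_natCast_atTop_atTop)
  have h3 : Tendsto (fun k : ℕ => (a + k) / (b + k) * (z / (k + 1))) atTop (𝓝 (1 * 0)) :=
    h1.mul h2
  have h4 : Tendsto (fun k : ℕ => (a + k) * z / ((b + k) * (k + 1))) atTop (𝓝 0) := by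
    simpa [div_mul_div_comm, mul_comm, mul_div_assoc] using h3
  simpa using h4.abs

/-- Core summability: if `d` satisfies the Kummer-type recurrence then `∑ d k z^k`
converges absolutely. -/
lemma kum_summable_aux (a b : ℝ) (hb : 0 < b) (d : ℕ → ℝ)
    (hd : ∀ k : ℕ, d (k + 1) * ((b + k) * (k + 1)) = (a + k) * d k) (z : ℝ) :
    Summable fun k : ℕ => |d k * z ^ k| := by
  have key : ∀ k : ℕ, d (k + 1) * z ^ (k + 1) =
      ((a + k) * z / ((b + k) * (k + 1))) * (d k * z ^ k) := by
    intro k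
    have hne : ((b + k) * ((k : ℝ) + 1)) ≠ 0 := by positivity
    have := hd k
    field_simp
    linear_combination z ^ (k+1) * this
  apply summable_of_ratio_norm_eventually_le (r := 1/2) (by norm_num)
  have := (kum_ratio_tendsto a b z hb).eventually_le_const (by norm_num : (0:ℝ) < 1/2)
  filter_upwards [this] with k hk
  have : |d (k+1) * z ^ (k+1)| = |(a + k) * z / ((b + k) * (k + 1))| * |d k * z ^ k| := by
    rw [key k, abs_mul]
  rw [Real.norm_eq_abs, Real.norm_eq_abs, abs_abs, abs_abs, this]
  have h0 : (0:ℝ) ≤ |d k * z ^ k| := abs_nonneg _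
  exact mul_le_mul_of_nonneg_right hk h0

lemma risingFactorial_succ (x : ℝ) (k : ℕ) :
    risingFactorial x (k + 1) = risingFactorial x k * (x + k) :=
  Finset.prod_range_succ _ _

lemma risingFactorial_pos {x : ℝ} (hx : 0 < x) (k : ℕ) : 0 < risingFactorial x k := by
  apply Finset.prod_pos
  intro i _
  positivity

lemma kummerCoef_zero (a b : ℝ) : kummerCoef a b 0 = 1 := by
  simp [kummerCoef, risingFactorial]

lemma kummerCoef_rec (a b : ℝ) (hb : 0 < b) (k : ℕ) :
    kummerCoef a b (k + 1) * ((b + k) * (k + 1)) = (a + k) * kummerCoef a b k := by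
  have h1 : (0:ℝ) < risingFactorial b k := risingFactorial_pos hb k
  have h2 : (0:ℝ) < (Nat.factorial k : ℝ) := by positivity
  have h3 : (0:ℝ) < b + k := by positivity
  unfold kummerCoef
  rw [risingFactorial_succ, risingFactorial_succ]
  have hf : ((Nat.factorial (k+1) : ℕ) : ℝ) = (Nat.factorial k) * (k + 1) := by
    rw [Nat.factorial_succ]; push_cast; ring
  rw [hf]
  field_simp

/-- Differentiating a power series term by term. -/
lemma hasDerivAt_psum (d : ℕ → ℝ)
    (h : ∀ z : ℝ, Summable fun k : ℕ => |d k * z ^ k|)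
    (h' : ∀ z : ℝ, Summable fun k : ℕ => |((k : ℝ) + 1) * d (k + 1) * z ^ k|) (z : ℝ) :
    HasDerivAt (fun y : ℝ => ∑' k : ℕ, d k * y ^ k)
      (∑' k : ℕ, ((k : ℝ) + 1) * d (k + 1) * z ^ k) z := by
  set R : ℝ := |z| + 1 with hR
  have hR0 : (0:ℝ) < R := by positivity
  have hzR : |z| < R := by simp [hR]
  set u : ℕ → ℝ := fun k => |d k| * (k * R ^ (k - 1)) with hu
  have hu_s : Summable u := by
    rw [← summable_nat_add_iff 1]
    have : (fun k : ℕ => u (k + 1)) = fun k : ℕ => |((k : ℝ) + 1) * d (k + 1) * R ^ k| := by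
      funext k
      rw [abs_mul, abs_mul, abs_of_nonneg (by positivity : (0:ℝ) ≤ ((k:ℝ)+1)),
        abs_of_nonneg (by positivity : (0:ℝ) ≤ R ^ k)]
      simp [hu]
      ring
    rw [this]
    exact h' R
  have main : HasDerivAt (fun y : ℝ => ∑' k : ℕ, d k * y ^ k)
      (∑' k : ℕ, d k * (k * z ^ (k - 1))) z := by
    apply hasDerivAt_tsum_of_isPreconnected hu_s (Metric.isOpen_ball)
      (convex_ball (0:ℝ) R).isPreconnected
      (g := fun k y => d k * y ^ k) (g' := fun k y => d k * (k * y ^ (k - 1)))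
      (y₀ := z)
    · intro k y _
      exact (hasDerivAt_pow k y).const_mul (d k)
    · intro k y hy
      rw [Metric.mem_ball, Real.dist_eq, sub_zero] at hy
      rw [Real.norm_eq_abs, abs_mul, abs_mul, abs_pow, Nat.abs_cast]
      rw [hu]
      have : |y| ^ (k-1) ≤ R ^ (k-1) := pow_le_pow_left₀ (abs_nonneg y) (le_of_lt hy) _
      have h2 : |d k| * ((k:ℝ) * |y| ^ (k-1)) ≤ |d k| * ((k:ℝ) * R ^ (k-1)) := by
        apply mul_le_mul_of_nonneg_left _ (abs_nonneg _)
        exact mul_le_mul_of_nonneg_left this (by positivity)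
      exact h2
    · rw [Metric.mem_ball, Real.dist_eq, sub_zero]; exact hzR
    · exact (h z).of_abs
    · rw [Metric.mem_ball, Real.dist_eq, sub_zero]; exact hzR
  convert main using 1
  have hsum2 : Summable fun k : ℕ => d (k + 1) * (((k:ℝ) + 1) * z ^ k) := by
    have := (h' z).of_abs
    apply this.congr
    intro k; ring
  have hsum1 : Summable fun k : ℕ => d k * (k * z ^ (k - 1)) := by
    rw [← summable_nat_add_iff 1]
    apply hsum2.congr
    intro k
    push_cast
    simp
  rw [Summable.tsum_eq_zero_add hsum1]
  simp only [Nat.cast_zero, zero_mul, mul_zero, zero_add]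
  apply tsum_congr
  intro k
  push_cast
  ring
section KummerODE

variable (a b : ℝ)

noncomputable def kumM1 (z : ℝ) : ℝ := ∑' k : ℕ, ((k : ℝ) + 1) * kummerCoef a b (k + 1) * z ^ k

noncomputable def kumM2 (z : ℝ) : ℝ :=
  ∑' k : ℕ, ((k : ℝ) + 1) * (((k : ℝ) + 2) * kummerCoef a b (k + 2)) * z ^ k

variable {b} (hb : 0 < b)
include hb

lemma kumS0 (z : ℝ) : Summable fun k : ℕ => |kummerCoef a b k * z ^ k| :=
  kum_summable_aux a b hb _ (kummerCoef_rec a b hb) z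

lemma kumrec1 (k : ℕ) :
    (((k:ℝ) + 1 + 1) * kummerCoef a b (k + 1 + 1)) * ((b + 1 + k) * (k + 1))
      = (a + 1 + k) * (((k:ℝ) + 1) * kummerCoef a b (k + 1)) := by
  have h := kummerCoef_rec a b hb (k + 1)
  push_cast at h ⊢
  linear_combination ((k:ℝ) + 1) * h

lemma kumrec2 (k : ℕ) :
    (((k:ℝ) + 1 + 1) * (((k:ℝ) + 1 + 2) * kummerCoef a b (k + 1 + 2))) * ((b + 2 + k) * (k + 1))
      = (a + 2 + k) * (((k:ℝ) + 1) * (((k:ℝ) + 2) * kummerCoef a b (k + 2))) := by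
  have h := kummerCoef_rec a b hb (k + 2)
  push_cast at h ⊢
  linear_combination ((k:ℝ) + 1) * ((k:ℝ) + 2) * h

lemma kumrec3 (k : ℕ) :
    (((k:ℝ)+1+1) * (((k:ℝ)+1+2) * (((k:ℝ)+1+3) * kummerCoef a b (k+1+3)))) * ((b + 3 + k) * (k+1))
      = (a + 3 + k) * (((k:ℝ)+1) * (((k:ℝ)+2) * (((k:ℝ)+3) * kummerCoef a b (k+3)))) := by
  have h := kummerCoef_rec a b hb (k + 3)
  push_cast at h ⊢
  linear_combination ((k:ℝ) + 1) * ((k:ℝ) + 2) * ((k:ℝ) + 3) * h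

lemma kumS1 (z : ℝ) : Summable fun k : ℕ => |((k:ℝ) + 1) * kummerCoef a b (k + 1) * z ^ k| := by
  apply kum_summable_aux (a + 1) (b + 1) (by linarith) _ _ z
  intro k
  push_cast
  linear_combination kumrec1 a hb k

lemma kumS2 (z : ℝ) :
    Summable fun k : ℕ => |((k:ℝ) + 1) * (((k:ℝ) + 2) * kummerCoef a b (k + 2)) * z ^ k| := by
  apply kum_summable_aux (a + 2) (b + 2) (by linarith) _ _ z
  intro k
  push_cast
  linear_combination kumrec2 a hb k

lemma kumS3 (z : ℝ) :
    Summable fun k : ℕ =>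
      |((k:ℝ)+1) * (((k:ℝ)+2) * (((k:ℝ)+3) * kummerCoef a b (k+3))) * z ^ k| := by
  apply kum_summable_aux (a + 3) (b + 3) (by linarith) _ _ z
  intro k
  push_cast
  linear_combination kumrec3 a hb k

lemma hasDerivAt_kummerM (z : ℝ) : HasDerivAt (kummerM a b) (kumM1 a b z) z := by
  have h := hasDerivAt_psum (kummerCoef a b) (kumS0 a hb) (fun w => kumS1 a hb w) z
  exact h

lemma hasDerivAt_kumM1 (z : ℝ) : HasDerivAt (kumM1 a b) (kumM2 a b z) z := by
  have h' : ∀ w : ℝ, Summable fun k : ℕ =>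
      |((k:ℝ) + 1) * ((((k+1 : ℕ) : ℝ) + 1) * kummerCoef a b (k + 1 + 1)) * w ^ k| := by
    intro w
    apply (kumS2 a hb w).congr
    intro k
    congr 1
    push_cast
    ring
  have h := hasDerivAt_psum (fun k => ((k:ℝ) + 1) * kummerCoef a b (k + 1))
    (fun w => kumS1 a hb w) h' z
  have heq : kumM2 a b z
      = ∑' k : ℕ, ((k:ℝ) + 1) * ((((k+1 : ℕ) : ℝ) + 1) * kummerCoef a b (k + 1 + 1)) * z ^ k := by
    apply tsum_congr
    intro k
    push_cast
    ring
  rw [heq]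
  exact h

lemma hasDerivAt_kumM2 (z : ℝ) :
    HasDerivAt (kumM2 a b)
      (∑' k : ℕ, ((k:ℝ)+1) * ((((k+1:ℕ):ℝ)+1) * ((((k+1:ℕ):ℝ)+2) * kummerCoef a b (k+1+2)))
        * z ^ k) z := by
  have h' : ∀ w : ℝ, Summable fun k : ℕ =>
      |((k:ℝ)+1) * ((((k+1:ℕ):ℝ)+1) * ((((k+1:ℕ):ℝ)+2) * kummerCoef a b (k+1+2))) * w ^ k| := by
    intro w
    apply (kumS3 a hb w).congr
    intro k
    congr 1
    push_cast
    ring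
  have h := hasDerivAt_psum (fun k => ((k:ℝ) + 1) * (((k:ℝ) + 2) * kummerCoef a b (k + 2)))
    (fun w => kumS2 a hb w) h' z
  exact h

end KummerODE
lemma kummer_ode (a : ℝ) {b : ℝ} (hb : 0 < b) (z : ℝ) :
    z * kumM2 a b z + (b - z) * kumM1 a b z = a * kummerM a b z := by
  set c := kummerCoef a b with hc
  have h00 : Summable fun k : ℕ => c k * z ^ k := (kumS0 a hb z).of_abs
  have h1 : Summable fun k : ℕ => ((k:ℝ) + 1) * c (k + 1) * z ^ k := (kumS1 a hb z).of_abs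
  have h2 : Summable fun k : ℕ => ((k:ℝ) + 1) * (((k:ℝ) + 2) * c (k + 2)) * z ^ k :=
    (kumS2 a hb z).of_abs
  -- z * M2 = ∑ k(k+1) c_{k+1} z^k
  have hf2 : Summable fun k : ℕ => (k:ℝ) * ((k:ℝ) + 1) * c (k + 1) * z ^ k := by
    rw [← summable_nat_add_iff 1]
    apply (h2.mul_right z).congr
    intro k
    push_cast
    ring
  have e2 : z * kumM2 a b z = ∑' k : ℕ, (k:ℝ) * ((k:ℝ) + 1) * c (k + 1) * z ^ k := by
    rw [Summable.tsum_eq_zero_add hf2]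
    simp only [Nat.cast_zero, zero_mul, zero_add]
    rw [mul_comm z, kumM2, ← tsum_mul_right]
    apply tsum_congr
    intro k
    push_cast
    ring
  -- z * M1 = ∑ k c_k z^k
  have hf1 : Summable fun k : ℕ => (k:ℝ) * c k * z ^ k := by
    rw [← summable_nat_add_iff 1]
    apply (h1.mul_right z).congr
    intro k
    push_cast
    ring
  have e1 : z * kumM1 a b z = ∑' k : ℕ, (k:ℝ) * c k * z ^ k := by
    rw [Summable.tsum_eq_zero_add hf1]
    simp only [Nat.cast_zero, zero_mul, zero_add]
    rw [mul_comm z, kumM1, ← tsum_mul_right]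
    apply tsum_congr
    intro k
    push_cast
    ring
  have eb : b * kumM1 a b z = ∑' k : ℕ, b * (((k:ℝ) + 1) * c (k + 1) * z ^ k) := by
    rw [kumM1, ← tsum_mul_left]
  have ea : a * kummerM a b z = ∑' k : ℕ, a * (c k * z ^ k) := by
    rw [kummerM, ← tsum_mul_left]
  rw [sub_mul, e2, eb, e1, ea]
  rw [← Summable.tsum_sub (h1.mul_left b) hf1, ← Summable.tsum_add hf2 ((h1.mul_left b).sub hf1)]
  apply tsum_congr
  intro k
  have h := kummerCoef_rec a b hb k
  rw [← hc] at h
  linear_combination z ^ k * h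
lemma contDiff_two_of_deriv (f : ℝ → ℝ) (h0 : Differentiable ℝ f)
    (h1 : Differentiable ℝ (deriv f)) (h2 : Continuous (deriv (deriv f))) :
    ContDiff ℝ 2 f := by
  have h : (2 : WithTop ℕ∞) = 1 + 1 := by norm_num
  rw [h, contDiff_succ_iff_deriv]
  refine ⟨h0, by simp, ?_⟩
  rw [contDiff_one_iff_deriv]
  exact ⟨h1, h2⟩
lemma final_alg (m₂ lam με t E T T1 M M1 M2 : ℝ) (ht : 0 < t) (hm : 0 < m₂)
    (hT : T1 * t = T)
    (hODE : (m₂*t^2) * M2 + ((με+1) - m₂*t^2) * M1 = ((με+1)/2 - lam/(4*m₂)) * M) :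
    -(t⁻¹ * (E * (-(m₂*t)) * T * ((με - m₂*t^2) * M + 2*m₂*t^2 * M1)
       + E * (με * T1) * ((με - m₂*t^2) * M + 2*m₂*t^2 * M1)
       + E * T * (-(2*m₂*t) * M + (με - m₂*t^2) * (M1 * (2*m₂*t)) + (2*m₂*(2*t)) * M1
          + 2*m₂*t^2 * (M2 * (2*m₂*t)))))
     + με^2/t^2 * (E*T*M) + m₂^2*t^2*(E*T*M) = lam * (E*T*M) := by
  have ht0 : t ≠ 0 := ne_of_gt ht
  have hm0 : m₂ ≠ 0 := ne_of_gt hm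
  have hu : m₂ * t^2 ≠ 0 := by positivity
  have hM2 : M2 = (((με+1)/2 - lam/(4*m₂)) * M - ((με+1) - m₂*t^2) * M1) / (m₂*t^2) := by
    rw [eq_div_iff hu]
    linarith [hODE]
  subst hM2
  rw [← hT]
  field_simp
  ring

/-- With `a = (μ_ε+1)/2 − λ/(4m₂)` and `b = μ_ε+1`, Kummer's series
converges absolutely for every real `z`, and `ψ(t) = e^{−m₂t²/2} t^{μ_ε} M(a,b,m₂t²)`
is a `C²` solution on `(0,∞)` of `−t⁻¹(tψ')' + μ_ε² t⁻² ψ + m₂² t² ψ = λψ` with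
`ψ(t) → 0` as `t → 0⁺`. -/
theorem kummer_comparison_solution
    (m₂ lam με : ℝ) (hm₂ : 0 < m₂) (hlam : 0 < lam) (hμε : 0 < με) :
    (∀ z : ℝ, Summable (fun k : ℕ =>
      |kummerCoef ((με + 1) / 2 - lam / (4 * m₂)) (με + 1) k * z ^ k|)) ∧
    ContDiffOn ℝ 2
      (fun t : ℝ => Real.exp (-(m₂ * t^2) / 2) * t ^ με *
        kummerM ((με + 1) / 2 - lam / (4 * m₂)) (με + 1) (m₂ * t^2)) (Ioi 0) ∧
    (∀ t ∈ Ioi (0:ℝ),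
      -(t⁻¹ * deriv (fun s : ℝ => s * deriv
          (fun r : ℝ => Real.exp (-(m₂ * r^2) / 2) * r ^ με *
            kummerM ((με + 1) / 2 - lam / (4 * m₂)) (με + 1) (m₂ * r^2)) s) t)
        + με^2 / t^2 * (Real.exp (-(m₂ * t^2) / 2) * t ^ με *
            kummerM ((με + 1) / 2 - lam / (4 * m₂)) (με + 1) (m₂ * t^2))
        + m₂^2 * t^2 * (Real.exp (-(m₂ * t^2) / 2) * t ^ με *
            kummerM ((με + 1) / 2 - lam / (4 * m₂)) (με + 1) (m₂ * t^2))
      = lam * (Real.exp (-(m₂ * t^2) / 2) * t ^ με *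
            kummerM ((με + 1) / 2 - lam / (4 * m₂)) (με + 1) (m₂ * t^2))) ∧
    Tendsto
      (fun t : ℝ => Real.exp (-(m₂ * t^2) / 2) * t ^ με *
        kummerM ((με + 1) / 2 - lam / (4 * m₂)) (με + 1) (m₂ * t^2))
      (𝓝[>] 0) (𝓝 0) := by
  have hb : (0:ℝ) < με + 1 := by linarith
  -- notation
  set A : ℝ := (με + 1) / 2 - lam / (4 * m₂) with hA'
  -- basic derivative facts
  have h1 : ∀ s : ℝ, HasDerivAt (fun r : ℝ => m₂ * r ^ 2) (2 * m₂ * s) s := by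
    intro s
    have := (hasDerivAt_pow 2 s).const_mul m₂
    refine this.congr_deriv ?_
    push_cast
    ring
  have hexp : ∀ s : ℝ, HasDerivAt (fun r : ℝ => Real.exp (-(m₂ * r ^ 2) / 2))
      (Real.exp (-(m₂ * s ^ 2) / 2) * (-(2 * m₂ * s) / 2)) s := by
    intro s
    exact ((h1 s).neg.div_const 2).exp
  have hTd : ∀ s : ℝ, s ≠ 0 → HasDerivAt (fun r : ℝ => r ^ με) (με * s ^ (με - 1)) s :=
    fun s hs => Real.hasDerivAt_rpow_const (Or.inl hs)
  have hMc : ∀ s : ℝ, HasDerivAt (fun r : ℝ => kummerM A (με + 1) (m₂ * r ^ 2))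
      (kumM1 A (με + 1) (m₂ * s ^ 2) * (2 * m₂ * s)) s := by
    intro s
    exact (hasDerivAt_kummerM A hb (m₂ * s ^ 2)).comp s (h1 s)
  have hM1c : ∀ s : ℝ, HasDerivAt (fun r : ℝ => kumM1 A (με + 1) (m₂ * r ^ 2))
      (kumM2 A (με + 1) (m₂ * s ^ 2) * (2 * m₂ * s)) s := by
    intro s
    exact (hasDerivAt_kumM1 A hb (m₂ * s ^ 2)).comp s (h1 s)
  -- derivative of ψ
  have hψd : ∀ s ∈ Ioi (0:ℝ), HasDerivAt
      (fun r : ℝ => Real.exp (-(m₂ * r^2) / 2) * r ^ με * kummerM A (με + 1) (m₂ * r^2))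
      ((Real.exp (-(m₂ * s ^ 2) / 2) * (-(2 * m₂ * s) / 2) * s ^ με
          + Real.exp (-(m₂ * s ^ 2) / 2) * (με * s ^ (με - 1))) * kummerM A (με + 1) (m₂ * s ^ 2)
        + Real.exp (-(m₂ * s ^ 2) / 2) * s ^ με
          * (kumM1 A (με + 1) (m₂ * s ^ 2) * (2 * m₂ * s))) s := by
    intro s hs
    exact ((hexp s).mul (hTd s (ne_of_gt hs))).mul (hMc s)
  have hderiv : ∀ s ∈ Ioi (0:ℝ), deriv
      (fun r : ℝ => Real.exp (-(m₂ * r^2) / 2) * r ^ με * kummerM A (με + 1) (m₂ * r^2)) s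
      = (Real.exp (-(m₂ * s ^ 2) / 2) * (-(2 * m₂ * s) / 2) * s ^ με
          + Real.exp (-(m₂ * s ^ 2) / 2) * (με * s ^ (με - 1))) * kummerM A (με + 1) (m₂ * s ^ 2)
        + Real.exp (-(m₂ * s ^ 2) / 2) * s ^ με
          * (kumM1 A (με + 1) (m₂ * s ^ 2) * (2 * m₂ * s)) :=
    fun s hs => (hψd s hs).deriv
  -- smoothness of the Kummer function
  have d0 : Differentiable ℝ (kummerM A (με + 1)) :=
    fun z => (hasDerivAt_kummerM A hb z).differentiableAt
  have e0 : deriv (kummerM A (με + 1)) = kumM1 A (με + 1) :=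
    funext fun z => (hasDerivAt_kummerM A hb z).deriv
  have d1 : Differentiable ℝ (kumM1 A (με + 1)) :=
    fun z => (hasDerivAt_kumM1 A hb z).differentiableAt
  have e1 : deriv (kumM1 A (με + 1)) = kumM2 A (με + 1) :=
    funext fun z => (hasDerivAt_kumM1 A hb z).deriv
  have c2 : Continuous (kumM2 A (με + 1)) := by
    have dd : Differentiable ℝ (kumM2 A (με + 1)) :=
      fun z => (hasDerivAt_kumM2 A hb z).differentiableAt
    exact dd.continuous
  have hMsmooth : ContDiff ℝ 2 (kummerM A (με + 1)) := by
    apply contDiff_two_of_deriv _ d0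
    · rw [e0]; exact d1
    · rw [e0, e1]; exact c2
  have hpoly : ContDiff ℝ 2 (fun t : ℝ => m₂ * t ^ 2) := by fun_prop
  refine ⟨fun z => kumS0 A hb z, ?_, ?_, ?_⟩
  · -- C² regularity
    have hexp2 : ContDiff ℝ 2 (fun t : ℝ => Real.exp (-(m₂ * t ^ 2) / 2)) :=
      Real.contDiff_exp.comp (hpoly.neg.div_const 2)
    have hrpowOn : ContDiffOn ℝ 2 (fun t : ℝ => t ^ με) (Ioi 0) := fun x hx =>
      (Real.contDiffAt_rpow_const_of_ne (ne_of_gt hx)).contDiffWithinAt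
    exact (hexp2.contDiffOn.mul hrpowOn).mul (hMsmooth.comp hpoly).contDiffOn
  · -- the ODE
    intro t ht
    have ht0 : (0:ℝ) < t := ht
    have hTT : t ^ (με - 1) * t = t ^ με := by
      rw [← Real.rpow_add_one (ne_of_gt ht0) (με - 1)]
      norm_num
    have hev : (fun s : ℝ => s * deriv
        (fun r : ℝ => Real.exp (-(m₂ * r^2) / 2) * r ^ με * kummerM A (με + 1) (m₂ * r^2)) s)
        =ᶠ[𝓝 t] (fun s : ℝ => Real.exp (-(m₂ * s ^ 2) / 2) * s ^ με
          * ((με - m₂ * s ^ 2) * kummerM A (με + 1) (m₂ * s ^ 2)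
            + 2 * (m₂ * s ^ 2) * kumM1 A (με + 1) (m₂ * s ^ 2))) := by
      filter_upwards [isOpen_Ioi.mem_nhds ht] with s hs
      rw [hderiv s hs]
      have hs0 : (0:ℝ) < s := hs
      have hrp : s ^ (με - 1) * s = s ^ με := by
        rw [← Real.rpow_add_one (ne_of_gt hs0) (με - 1)]
        norm_num
      linear_combination
        (Real.exp (-(m₂ * s ^ 2) / 2) * με * kummerM A (με + 1) (m₂ * s ^ 2)) * hrp
    have hg : HasDerivAt (fun s : ℝ => Real.exp (-(m₂ * s ^ 2) / 2) * s ^ με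
          * ((με - m₂ * s ^ 2) * kummerM A (με + 1) (m₂ * s ^ 2)
            + 2 * (m₂ * s ^ 2) * kumM1 A (με + 1) (m₂ * s ^ 2)))
        ((Real.exp (-(m₂ * t ^ 2) / 2) * (-(2 * m₂ * t) / 2) * t ^ με
            + Real.exp (-(m₂ * t ^ 2) / 2) * (με * t ^ (με - 1)))
          * ((με - m₂ * t ^ 2) * kummerM A (με + 1) (m₂ * t ^ 2)
            + 2 * (m₂ * t ^ 2) * kumM1 A (με + 1) (m₂ * t ^ 2))
         + Real.exp (-(m₂ * t ^ 2) / 2) * t ^ με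
          * ((-(2 * m₂ * t)) * kummerM A (με + 1) (m₂ * t ^ 2)
            + (με - m₂ * t ^ 2) * (kumM1 A (με + 1) (m₂ * t ^ 2) * (2 * m₂ * t))
            + (2 * (2 * m₂ * t) * kumM1 A (με + 1) (m₂ * t ^ 2)
              + 2 * (m₂ * t ^ 2) * (kumM2 A (με + 1) (m₂ * t ^ 2) * (2 * m₂ * t))))) t := by
      have hP1 : HasDerivAt (fun s : ℝ => με - m₂ * s ^ 2) (-(2 * m₂ * t)) t :=
        (h1 t).const_sub με
      have hP2 : HasDerivAt (fun s : ℝ => 2 * (m₂ * s ^ 2)) (2 * (2 * m₂ * t)) t :=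
        (h1 t).const_mul 2
      exact ((hexp t).mul (hTd t (ne_of_gt ht0))).mul
        ((hP1.mul (hMc t)).add (hP2.mul (hM1c t)))
    have hder2 : deriv (fun s : ℝ => s * deriv
        (fun r : ℝ => Real.exp (-(m₂ * r^2) / 2) * r ^ με * kummerM A (με + 1) (m₂ * r^2)) s) t
        = _ := hev.deriv_eq.trans hg.deriv
    rw [hder2]
    have hODE := kummer_ode A hb (m₂ * t ^ 2)
    rw [hA'] at hODE
    linear_combination final_alg m₂ lam με t (Real.exp (-(m₂ * t ^ 2) / 2)) (t ^ με)
      (t ^ (με - 1)) (kummerM A (με + 1) (m₂ * t ^ 2)) (kumM1 A (με + 1) (m₂ * t ^ 2))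
      (kumM2 A (με + 1) (m₂ * t ^ 2)) ht0 hm₂ hTT (by rw [hA']; linarith [hODE])
  · -- limit at 0⁺
    have l1 : Tendsto (fun t : ℝ => Real.exp (-(m₂ * t ^ 2) / 2)) (𝓝[>] (0:ℝ)) (𝓝 1) := by
      have hc : ContinuousAt (fun t : ℝ => Real.exp (-(m₂ * t ^ 2) / 2)) 0 := by fun_prop
      have := hc.tendsto
      norm_num at this
      exact this.mono_left nhdsWithin_le_nhds
    have l2 : Tendsto (fun t : ℝ => t ^ με) (𝓝[>] (0:ℝ)) (𝓝 0) := by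
      have hc := (Real.continuousAt_rpow_const 0 με (Or.inr (le_of_lt hμε))).tendsto
      rw [Real.zero_rpow (ne_of_gt hμε)] at hc
      exact hc.mono_left nhdsWithin_le_nhds
    have l3 : Tendsto (fun t : ℝ => kummerM A (με + 1) (m₂ * t ^ 2)) (𝓝[>] (0:ℝ))
        (𝓝 (kummerM A (με + 1) (m₂ * 0 ^ 2))) := by
      have : Continuous (fun t : ℝ => kummerM A (με + 1) (m₂ * t ^ 2)) :=
        d0.continuous.comp (by fun_prop)
      exact (this.tendsto 0).mono_left nhdsWithin_le_nhds
    have := (l1.mul l2).mul l3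
    simpa using this
end

section
/- Let μ̃ > 0, m₂ > 0, λ > 0 be real constants, let q be a real exponent with −2 < q < 2, and let t₀ > 0. Let ũ : (0,t₀] → ℝ be a C² solution of −ũ''(t) + μ̃² t⁻² ũ(t) + m₂² t² ũ(t) = λ t^q ũ(t) on (0,t₀] with ũ(t₀) = 0, ũ(t) → 0 as t → 0⁺, ũ'(t) ũ(t) → 0 as t → 0⁺, and ∫₀^{t₀}( |ũ'(t)|² + t⁻²|ũ(t)|² ) dt < ∞. Then ∫₀^{t₀} μ̃² t⁻² ũ(t)² dt ≤ λ t₀^{2+q} ∫₀^{t₀} t⁻² ũ(t)² dt. In particular, if λ t₀^{2+q} < μ̃², then ũ vanishes identically on (0,t₀]. -/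
open MeasureTheory Filter Set Topology

/-- A finite-energy solution of `−ũ'' + μ̃² t⁻² ũ + m₂² t² ũ = λ t^q ũ`
on `(0,t₀]` vanishing at `t₀` and (with its flux) at `0⁺` satisfies
`∫ μ̃² t⁻² ũ² ≤ λ t₀^{2+q} ∫ t⁻² ũ²`; in particular `λ t₀^{2+q} < μ̃²` forces `ũ ≡ 0`. -/
theorem eigenspace_one_dimensional_step
    (μt m₂ lam q t₀ : ℝ) (hμ : 0 < μt) (hm₂ : 0 < m₂) (hlam : 0 < lam)
    (hq₁ : -2 < q) (hq₂ : q < 2) (ht₀ : 0 < t₀) (u : ℝ → ℝ)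
    (hC2 : ContDiffOn ℝ 2 u (Ioo 0 t₀))
    (hODE : ∀ t ∈ Ioo (0:ℝ) t₀,
      -(deriv (deriv u) t) + μt^2 / t^2 * u t + m₂^2 * t^2 * u t = lam * t ^ q * u t)
    (hcont : ContinuousOn u (Ioc 0 t₀)) (hut₀ : u t₀ = 0)
    (hlim : Tendsto u (𝓝[>] 0) (𝓝 0))
    (hflux : Tendsto (fun t => deriv u t * u t) (𝓝[>] 0) (𝓝 0))
    (hnorm : IntegrableOn (fun t => (deriv u t)^2 + (u t)^2 / t^2) (Ioo 0 t₀)) :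
    (∫ t in Ioo (0:ℝ) t₀, μt^2 / t^2 * (u t)^2)
      ≤ lam * t₀ ^ (2 + q) * ∫ t in Ioo (0:ℝ) t₀, (u t)^2 / t^2 ∧
    (lam * t₀ ^ (2 + q) < μt^2 → ∀ t ∈ Ioc (0:ℝ) t₀, u t = 0) := by
  -- ## Regularity facts
  have hIoo_open : IsOpen (Ioo (0:ℝ) t₀) := isOpen_Ioo
  have hcu : ContinuousOn u (Ioo 0 t₀) := hC2.continuousOn
  have hC1' : ContDiffOn ℝ 1 (deriv u) (Ioo 0 t₀) :=
    hC2.deriv_of_isOpen hIoo_open (by norm_num)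
  have hcu' : ContinuousOn (deriv u) (Ioo 0 t₀) := hC1'.continuousOn
  have hcu'' : ContinuousOn (deriv (deriv u)) (Ioo 0 t₀) :=
    hC1'.continuousOn_deriv_of_isOpen hIoo_open le_rfl
  have hd1 : ∀ t ∈ Ioo (0:ℝ) t₀, HasDerivAt u (deriv u t) t := fun t ht =>
    ((hC2.differentiableOn (by norm_num) t ht).differentiableAt
      (hIoo_open.mem_nhds ht)).hasDerivAt
  have hd2 : ∀ t ∈ Ioo (0:ℝ) t₀, HasDerivAt (deriv u) (deriv (deriv u) t) t := fun t ht =>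
    ((hC1'.differentiableOn (by norm_num) t ht).differentiableAt
      (hIoo_open.mem_nhds ht)).hasDerivAt
  -- ## Integrability facts
  have h2q : (0:ℝ) < 2 + q := by linarith
  have hch : ContinuousOn (fun t => (u t)^2 / t^2) (Ioo 0 t₀) :=
    (hcu.pow 2).div (continuousOn_pow 2) (fun t ht => pow_ne_zero 2 (ne_of_gt ht.1))
  have hmh : AEStronglyMeasurable (fun t => (u t)^2 / t^2)
      (volume.restrict (Ioo (0:ℝ) t₀)) := hch.aestronglyMeasurable measurableSet_Ioo
  have hInt_h : IntegrableOn (fun t => (u t)^2 / t^2) (Ioo 0 t₀) := by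
    refine hnorm.mono' hmh ?_
    filter_upwards [ae_restrict_mem measurableSet_Ioo] with t ht
    have h1 : (0:ℝ) ≤ (u t)^2 / t^2 := by positivity
    have h2 : (0:ℝ) ≤ (deriv u t)^2 := sq_nonneg _
    rw [Real.norm_eq_abs, abs_of_nonneg h1]; linarith
  have hInt_g : IntegrableOn (fun t => μt^2 / t^2 * (u t)^2) (Ioo 0 t₀) := by
    have heq : (fun t => μt^2 / t^2 * (u t)^2) = fun t => μt^2 * ((u t)^2 / t^2) := by
      funext t; ring
    rw [heq]; exact hInt_h.const_mul (μt^2)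
  have hptw : ∀ t ∈ Ioo (0:ℝ) t₀, lam * t ^ q * (u t)^2 ≤ lam * t₀ ^ (2+q) * ((u t)^2 / t^2) := by
    intro t ht
    have ht0 : (0:ℝ) < t := ht.1
    have h1 : t ^ q * t^2 = t ^ (2+q) := by
      rw [← Real.rpow_natCast t 2, ← Real.rpow_add ht0]
      norm_num [add_comm]
    have h2 : t ^ (2+q) ≤ t₀ ^ (2+q) :=
      Real.rpow_le_rpow ht0.le ht.2.le h2q.le
    have h3 : lam * t ^ q * (u t)^2 = lam * (t ^ q * t ^ 2) * ((u t)^2 / t^2) := by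
      field_simp
    rw [h3, h1]
    have hu2 : (0:ℝ) ≤ (u t)^2 / t^2 := by positivity
    have : lam * t ^ (2+q) ≤ lam * t₀ ^ (2+q) := by nlinarith
    nlinarith
  -- ## Key integration-by-parts estimate on compact subintervals
  have key : ∀ a b, a ∈ Ioo (0:ℝ) t₀ → b ∈ Ioo (0:ℝ) t₀ → a ≤ b →
      ∫ t in Ioc a b, μt^2 / t^2 * (u t)^2
        ≤ deriv u b * u b - deriv u a * u a
          + lam * t₀ ^ (2+q) * ∫ t in Ioo (0:ℝ) t₀, (u t)^2 / t^2 := by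
    intro a b ha hb hle
    have hab : Icc a b ⊆ Ioo 0 t₀ := fun x hx =>
      ⟨lt_of_lt_of_le ha.1 hx.1, lt_of_le_of_lt hx.2 hb.2⟩
    have huIcc : uIcc a b = Icc a b := uIcc_of_le hle
    have hsub : uIcc a b ⊆ Ioo 0 t₀ := huIcc ▸ hab
    have hibp : ∫ x in a..b, (deriv (deriv u) x * u x + deriv u x * deriv u x)
        = deriv u b * u b - deriv u a * u a :=
      intervalIntegral.integral_deriv_mul_eq_sub
        (fun x hx => hd2 x (hsub hx)) (fun x hx => hd1 x (hsub hx))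
        ((hcu''.mono hsub).intervalIntegrable (μ := volume))
        ((hcu'.mono hsub).intervalIntegrable (μ := volume))
    have hODE' : EqOn (fun x => deriv (deriv u) x * u x + deriv u x * deriv u x)
        (fun x => μt^2/x^2*(u x)^2 + m₂^2*x^2*(u x)^2 + (deriv u x)^2 - lam * x^q * (u x)^2)
        (uIcc a b) := by
      intro x hx
      have h := hODE x (hsub hx)
      simp only
      linear_combination (-(u x)) * h
    have hcongr := intervalIntegral.integral_congr (μ := volume) hODE'
    have hcA : ContinuousOn (fun x => μt^2/x^2*(u x)^2) (Ioo 0 t₀) :=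
      (continuousOn_const.div (continuousOn_pow 2)
        (fun t ht => pow_ne_zero 2 (ne_of_gt ht.1))).mul (hcu.pow 2)
    have hcB : ContinuousOn (fun x : ℝ => m₂^2*x^2*(u x)^2) (Ioo 0 t₀) :=
      (continuousOn_const.mul (continuousOn_pow 2)).mul (hcu.pow 2)
    have hcD : ContinuousOn (fun x => (deriv u x)^2) (Ioo 0 t₀) := hcu'.pow 2
    have hcC : ContinuousOn (fun x => lam * x ^ q * (u x)^2) (Ioo 0 t₀) := by
      refine (continuousOn_const.mul ?_).mul (hcu.pow 2)
      exact fun t ht =>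
        (Real.continuousAt_rpow_const t q (Or.inl (ne_of_gt ht.1))).continuousWithinAt
    have iA := (hcA.mono hsub).intervalIntegrable (μ := volume)
    have iB := (hcB.mono hsub).intervalIntegrable (μ := volume)
    have iD := (hcD.mono hsub).intervalIntegrable (μ := volume)
    have iC := (hcC.mono hsub).intervalIntegrable (μ := volume)
    have hsplit : ∫ x in a..b, (μt^2/x^2*(u x)^2 + m₂^2*x^2*(u x)^2 + (deriv u x)^2
          - lam * x^q * (u x)^2)
        = (∫ x in a..b, μt^2/x^2*(u x)^2) + (∫ x in a..b, m₂^2*x^2*(u x)^2)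
          + (∫ x in a..b, (deriv u x)^2) - ∫ x in a..b, lam * x^q * (u x)^2 := by
      rw [intervalIntegral.integral_sub ((iA.add iB).add iD) iC,
        intervalIntegral.integral_add (iA.add iB) iD, intervalIntegral.integral_add iA iB]
    have hBnn : 0 ≤ ∫ x in a..b, m₂^2*x^2*(u x)^2 :=
      intervalIntegral.integral_nonneg hle (fun x hx => by positivity)
    have hDnn : 0 ≤ ∫ x in a..b, (deriv u x)^2 :=
      intervalIntegral.integral_nonneg hle (fun x hx => sq_nonneg _)
    have hIoc : Ioc a b ⊆ Ioo 0 t₀ := fun x hx =>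
      ⟨lt_trans ha.1 hx.1, lt_of_le_of_lt hx.2 hb.2⟩
    have hCle : ∫ x in a..b, lam * x^q * (u x)^2
        ≤ lam * t₀ ^ (2+q) * ∫ t in Ioo (0:ℝ) t₀, (u t)^2 / t^2 := by
      rw [intervalIntegral.integral_of_le hle]
      have step1 : ∫ x in Ioc a b, lam * x^q * (u x)^2
          ≤ ∫ x in Ioc a b, lam * t₀ ^ (2+q) * ((u x)^2 / x^2) := by
        refine setIntegral_mono_on (iC.1) ((hInt_h.mono_set hIoc).const_mul _)
          measurableSet_Ioc (fun x hx => hptw x (hIoc hx))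
      have step2 : ∫ x in Ioc a b, lam * t₀ ^ (2+q) * ((u x)^2 / x^2)
          = lam * t₀ ^ (2+q) * ∫ x in Ioc a b, (u x)^2 / x^2 := by
        exact MeasureTheory.integral_const_mul _ _
      have step3 : ∫ x in Ioc a b, (u x)^2 / x^2
          ≤ ∫ t in Ioo (0:ℝ) t₀, (u t)^2 / t^2 := by
        refine setIntegral_mono_set hInt_h ?_ (HasSubset.Subset.eventuallyLE hIoc)
        filter_upwards [ae_restrict_mem measurableSet_Ioo] with t ht using by positivity
      have hc0 : (0:ℝ) ≤ lam * t₀ ^ (2+q) := by positivity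
      calc _ ≤ _ := step1
      _ = _ := step2
      _ ≤ _ := mul_le_mul_of_nonneg_left step3 hc0
    have hA : ∫ t in Ioc a b, μt^2 / t^2 * (u t)^2 = ∫ x in a..b, μt^2/x^2*(u x)^2 :=
      (intervalIntegral.integral_of_le hle).symm
    rw [hA]
    have hfin := hibp
    rw [hcongr, hsplit] at hfin
    linarith
  -- ## Limit a → 0⁺ using the vanishing flux
  have mainbound : ∀ b ∈ Ioo (0:ℝ) t₀, deriv u b * u b ≤ 0 →
      ∫ t in Ioc (0:ℝ) b, μt^2 / t^2 * (u t)^2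
        ≤ lam * t₀ ^ (2+q) * ∫ t in Ioo (0:ℝ) t₀, (u t)^2 / t^2 := by
    intro b hb hbflux
    set C := lam * t₀ ^ (2+q) * ∫ t in Ioo (0:ℝ) t₀, (u t)^2 / t^2 with hC
    set a : ℕ → ℝ := fun n => b / (n + 2) with ha
    have hb0 : (0:ℝ) < b := hb.1
    have hapos : ∀ n, 0 < a n := fun n => by positivity
    have haleb : ∀ n : ℕ, a n ≤ b := by
      intro n
      rw [ha, div_le_iff₀ (by positivity)]
      nlinarith [Nat.cast_nonneg (α := ℝ) n]
    have hamem : ∀ n, a n ∈ Ioo (0:ℝ) t₀ := fun n =>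
      ⟨hapos n, lt_of_le_of_lt (haleb n) hb.2⟩
    have hmono : Monotone (fun n => Ioc (a n) b) := by
      intro n m hnm
      refine Ioc_subset_Ioc ?_ le_rfl
      rw [ha]
      refine div_le_div_of_nonneg_left hb0.le (by positivity) ?_
      exact_mod_cast Nat.add_le_add_right hnm 2
    have hunion : (⋃ n, Ioc (a n) b) = Ioc (0:ℝ) b := by
      ext x
      simp only [mem_iUnion, mem_Ioc]
      constructor
      · rintro ⟨n, h1, h2⟩; exact ⟨lt_trans (hapos n) h1, h2⟩
      · rintro ⟨hx0, hxb⟩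
        obtain ⟨n, hn⟩ := exists_nat_gt (b / x)
        refine ⟨n, ?_, hxb⟩
        rw [ha, div_lt_iff₀ (by positivity)]
        have : b / x < n + 2 := by linarith [Nat.cast_nonneg (α := ℝ) n]
        calc b = (b / x) * x := by field_simp
        _ < (n + 2) * x := by nlinarith
        _ = x * (n + 2) := by ring
    have hatend : Tendsto a atTop (𝓝[>] 0) := by
      refine tendsto_nhdsWithin_of_tendsto_nhds_of_eventually_within _ ?_
        (Eventually.of_forall (fun n => hapos n))
      have h1 : Tendsto (fun n : ℕ => ((n:ℝ) + 2)) atTop atTop := by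
        exact tendsto_atTop_add_const_right _ 2 tendsto_natCast_atTop_atTop
      simpa [ha] using Tendsto.div_atTop (tendsto_const_nhds (x := b)) h1
    have hfluxseq : Tendsto (fun n => deriv u (a n) * u (a n)) atTop (𝓝 0) :=
      hflux.comp hatend
    have htend : Tendsto (fun n => ∫ t in Ioc (a n) b, μt^2 / t^2 * (u t)^2) atTop
        (𝓝 (∫ t in Ioc (0:ℝ) b, μt^2 / t^2 * (u t)^2)) := by
      have := tendsto_setIntegral_of_monotone (fun n => measurableSet_Ioc) hmono
        (by rw [hunion]; exact hInt_g.mono_set (fun x hx => ⟨hx.1, lt_of_le_of_lt hx.2 hb.2⟩))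
      rwa [hunion] at this
    have hrhs : Tendsto (fun n => -(deriv u (a n) * u (a n)) + C) atTop (𝓝 C) := by
      simpa using (hfluxseq.neg).add_const C
    refine le_of_tendsto_of_tendsto' htend hrhs (fun n => ?_)
    have := key (a n) b (hamem n) hb (haleb n)
    linarith
  -- ## Points with nonpositive flux accumulate at t₀
  have hK : ∀ c, 0 ≤ c → c < t₀ → ∃ b, c < b ∧ b < t₀ ∧ deriv u b * u b ≤ 0 := by
    intro c hc0 hct₀
    by_contra hcon
    push_neg at hcon
    have hpos : ∀ b ∈ Ioo c t₀, 0 < deriv u b * u b := fun b hb => hcon b hb.1 hb.2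
    have hsubset : Ioo c t₀ ⊆ Ioo 0 t₀ := Ioo_subset_Ioo hc0 le_rfl
    set v : ℝ → ℝ := fun t => (u t)^2 with hv
    have hdv : ∀ x ∈ Ioo c t₀, HasDerivAt v (2 * u x * deriv u x) x := by
      intro x hx
      have := (hd1 x (hsubset hx)).fun_pow 2
      simpa [hv, mul_comm] using this
    have hmono : StrictMonoOn v (Ioo c t₀) := by
      refine strictMonoOn_of_deriv_pos (convex_Ioo c t₀) ((hcu.pow 2).mono hsubset) ?_
      intro x hx
      rw [interior_Ioo] at hx
      rw [(hdv x hx).deriv]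
      have := hpos x hx
      nlinarith
    have hvlim : Tendsto v (𝓝[<] t₀) (𝓝 0) := by
      have h1 : ContinuousWithinAt u (Ioc 0 t₀) t₀ := hcont t₀ ⟨ht₀, le_rfl⟩
      have h2 : Tendsto u (𝓝[Ioc 0 t₀] t₀) (𝓝 0) := by
        simpa [hut₀] using h1.tendsto
      have h3 : 𝓝[<] t₀ = 𝓝[Ioo 0 t₀] t₀ := (nhdsWithin_Ioo_eq_nhdsLT ht₀).symm
      have h4 : Tendsto u (𝓝[<] t₀) (𝓝 0) := by
        rw [h3]
        exact h2.mono_left (nhdsWithin_mono _ Ioo_subset_Ioc_self)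
      simpa [hv] using (h4.pow 2 : Tendsto (fun t => (u t)^2) _ _)
    set p := (c + t₀)/2 with hp
    set r := (p + t₀)/2 with hr
    have hpmem : p ∈ Ioo c t₀ := ⟨by linarith, by linarith⟩
    have hrmem : r ∈ Ioo c t₀ := ⟨by linarith [hpmem.1, hpmem.2], by linarith [hpmem.2]⟩
    have hpr : p < r := by rw [hp, hr]; linarith [hpmem.2]
    have hvr_le : v r ≤ 0 := by
      have hev : ∀ᶠ s in 𝓝[<] t₀, v r ≤ v s := by
        filter_upwards [Ioo_mem_nhdsLT hrmem.2] with s hs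
        exact (hmono hrmem ⟨lt_trans hrmem.1 hs.1, hs.2⟩ hs.1).le
      exact ge_of_tendsto hvlim hev
    have : v p < v r := hmono hpmem hrmem hpr
    have hvp : 0 ≤ v p := sq_nonneg _
    linarith
  -- ## Final assembly
  set C := lam * t₀ ^ (2+q) * ∫ t in Ioo (0:ℝ) t₀, (u t)^2 / t^2 with hCdef
  set c : ℕ → ℝ := fun n => t₀ - t₀ / (n + 1) with hc
  have hc0 : ∀ n : ℕ, 0 ≤ c n := by
    intro n
    rw [hc]
    have : t₀ / (n+1) ≤ t₀ / 1 := by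
      refine div_le_div_of_nonneg_left ht₀.le one_pos ?_
      linarith [Nat.cast_nonneg (α := ℝ) n]
    simp at this
    linarith
  have hclt : ∀ n : ℕ, c n < t₀ := by
    intro n
    rw [hc]
    have : 0 < t₀ / (n+1) := by positivity
    linarith
  have hcmono : Monotone c := by
    intro n m hnm
    rw [hc]
    simp only
    have : t₀ / (m+1) ≤ t₀ / (n+1) := by
      refine div_le_div_of_nonneg_left ht₀.le (by positivity) ?_
      exact_mod_cast Nat.add_le_add_right hnm 1
    linarith
  have hbound : ∀ n, ∫ t in Ioo (0:ℝ) (c n), μt^2 / t^2 * (u t)^2 ≤ C := by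
    intro n
    obtain ⟨b, hb1, hb2, hb3⟩ := hK (c n) (hc0 n) (hclt n)
    have hbmem : b ∈ Ioo (0:ℝ) t₀ := ⟨lt_of_le_of_lt (hc0 n) hb1, hb2⟩
    have hsub : Ioo (0:ℝ) (c n) ⊆ Ioc (0:ℝ) b := fun x hx =>
      ⟨hx.1, le_of_lt (lt_trans hx.2 hb1)⟩
    have h1 : ∫ t in Ioo (0:ℝ) (c n), μt^2 / t^2 * (u t)^2
        ≤ ∫ t in Ioc (0:ℝ) b, μt^2 / t^2 * (u t)^2 := by
      refine setIntegral_mono_set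
        (hInt_g.mono_set (fun x hx => ⟨hx.1, lt_of_le_of_lt hx.2 hb2⟩)) ?_
        (HasSubset.Subset.eventuallyLE hsub)
      filter_upwards [ae_restrict_mem measurableSet_Ioc] with t ht using by positivity
    exact le_trans h1 (mainbound b hbmem hb3)
  have hunion : (⋃ n, Ioo (0:ℝ) (c n)) = Ioo (0:ℝ) t₀ := by
    ext x
    simp only [mem_iUnion, mem_Ioo]
    constructor
    · rintro ⟨n, h1, h2⟩; exact ⟨h1, lt_trans h2 (hclt n)⟩
    · rintro ⟨hx0, hxt⟩
      obtain ⟨n, hn⟩ := exists_nat_gt (t₀ / (t₀ - x))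
      refine ⟨n, hx0, ?_⟩
      rw [hc]
      simp only
      have hd : (0:ℝ) < t₀ - x := by linarith
      have h2 : t₀ / (t₀ - x) < (n:ℝ) + 1 := by linarith [Nat.cast_nonneg (α := ℝ) n]
      have h3 : t₀ / ((n:ℝ) + 1) < t₀ - x := by
        rw [div_lt_iff₀ (by positivity)]
        calc t₀ = (t₀ / (t₀ - x)) * (t₀ - x) := by field_simp
        _ < ((n:ℝ)+1) * (t₀ - x) := by nlinarith
        _ = (t₀ - x) * ((n:ℝ)+1) := by ring
      linarith
  have htend : Tendsto (fun n => ∫ t in Ioo (0:ℝ) (c n), μt^2 / t^2 * (u t)^2) atTop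
      (𝓝 (∫ t in Ioo (0:ℝ) t₀, μt^2 / t^2 * (u t)^2)) := by
    have := tendsto_setIntegral_of_monotone (fun n => measurableSet_Ioo)
      (fun n m hnm => Ioo_subset_Ioo le_rfl (hcmono hnm))
      (by rw [hunion]; exact hInt_g)
    rwa [hunion] at this
  have conc1 : (∫ t in Ioo (0:ℝ) t₀, μt^2 / t^2 * (u t)^2) ≤ C :=
    le_of_tendsto htend (Eventually.of_forall hbound)
  refine ⟨conc1, ?_⟩
  intro hlt t ht
  have hJnn : 0 ≤ ∫ t in Ioo (0:ℝ) t₀, (u t)^2 / t^2 := by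
    refine setIntegral_nonneg measurableSet_Ioo (fun x hx => by positivity)
  have hIJ : (∫ t in Ioo (0:ℝ) t₀, μt^2 / t^2 * (u t)^2)
      = μt^2 * ∫ t in Ioo (0:ℝ) t₀, (u t)^2 / t^2 := by
    rw [← MeasureTheory.integral_const_mul]
    refine setIntegral_congr_fun measurableSet_Ioo (fun x hx => by ring)
  have hJ0 : (∫ t in Ioo (0:ℝ) t₀, (u t)^2 / t^2) = 0 := by
    by_contra hne
    have hJpos : 0 < ∫ t in Ioo (0:ℝ) t₀, (u t)^2 / t^2 := lt_of_le_of_ne hJnn (Ne.symm hne)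
    rw [hIJ] at conc1
    rw [hCdef] at conc1
    nlinarith
  have hae0 : (fun t => (u t)^2 / t^2) =ᵐ[volume.restrict (Ioo (0:ℝ) t₀)] 0 := by
    refine (integral_eq_zero_iff_of_nonneg_ae ?_ hInt_h).mp hJ0
    filter_upwards [ae_restrict_mem measurableSet_Ioo] with x hx using by positivity
  have hae : ∀ᵐ x, x ∈ Ioo (0:ℝ) t₀ → (u x)^2 / x^2 = 0 :=
    (ae_restrict_iff' measurableSet_Ioo).mp hae0
  have hzero : ∀ x ∈ Ioo (0:ℝ) t₀, u x = 0 := by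
    by_contra hcon
    push_neg at hcon
    obtain ⟨x, hx, hux⟩ := hcon
    set W := Ioo (0:ℝ) t₀ ∩ {t | u t ≠ 0} with hW
    have hWopen : IsOpen W := by
      rw [isOpen_iff_mem_nhds]
      rintro y ⟨hy1, hy2⟩
      have hca : ContinuousAt u y := hcu.continuousAt (isOpen_Ioo.mem_nhds hy1)
      have h1 : {t | u t ≠ 0} ∈ 𝓝 y :=
        hca.preimage_mem_nhds (isOpen_compl_singleton.mem_nhds hy2)
      exact inter_mem (isOpen_Ioo.mem_nhds hy1) h1
    have hWpos : 0 < volume W := hWopen.measure_pos volume ⟨x, hx, hux⟩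
    have hWnull : volume W = 0 := by
      refine measure_mono_null ?_ (ae_iff.mp hae)
      rintro y ⟨hy1, hy2⟩
      simp only [mem_setOf_eq, not_forall]
      refine ⟨hy1, ?_⟩
      have hy0 : y ≠ 0 := ne_of_gt hy1.1
      exact div_ne_zero (pow_ne_zero 2 hy2) (pow_ne_zero 2 hy0)
    rw [hWnull] at hWpos
    exact lt_irrefl 0 hWpos
  rcases eq_or_lt_of_le ht.2 with heq | hlt'
  · rw [heq]; exact hut₀
  · exact hzero t ⟨ht.1, hlt'⟩
end

section
/- Let μ̃ > 0, m₂ > 0, λ > 0, let q be a real exponent with −2 < q < 2, and let 0 < t₀ < 1. Let ũ : (0,t₀] → ℝ be a C² solution of −ũ''(t) + μ̃² t⁻² ũ(t) + m₂² t² ũ(t) = λ t^q ũ(t) with ũ(t) > 0 on (0,t₀], and suppose there exist c > 0 and ε₁ > 0 with ũ(t) ≤ c t^{1+ε₁} for all t ∈ (0,t₀]. Then there exists t₁ ∈ (0,t₀] such that ũ''(t) > 0 and ũ'(t) > 0 for all t ∈ (0,t₁), and moreover ũ'(t) → 0 and ũ(t)/t → 0 as t → 0⁺; in particular, ũ extends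 to a C¹ function on [0,t₁] with ũ(0) = 0 and ũ'(0) = 0, and ũ is strictly convex on (0,t₁). -/
open MeasureTheory Filter Set Topology

private lemma exists_small_rpow {p M b : ℝ} (hp : 0 < p) (hM : 0 < M) (hb : 0 < b) :
    ∃ a, 0 < a ∧ a < b ∧ a ^ p < M := by
  have hMp : 0 < M ^ p⁻¹ := Real.rpow_pos_of_pos hM _
  refine ⟨min (b / 2) (M ^ p⁻¹ / 2), lt_min (by linarith) (by linarith),
    lt_of_le_of_lt (min_le_left _ _) (by linarith), ?_⟩
  have h1 : min (b / 2) (M ^ p⁻¹ / 2) < M ^ p⁻¹ :=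
    lt_of_le_of_lt (min_le_right _ _) (by linarith)
  have h2 := Real.rpow_lt_rpow (le_of_lt (lt_min (by linarith) (by linarith))) h1 hp
  rwa [Real.rpow_inv_rpow hM.le hp.ne'] at h2

/-- A positive solution of `−ũ'' + μ̃² t⁻² ũ + m₂² t² ũ = λ t^q ũ`
on `(0,t₀]` decaying like `t^{1+ε₁}` is strictly convex and increasing near the
origin, with `ũ'(t) → 0` and `ũ(t)/t → 0` as `t → 0⁺`; in particular it extends to a
`C¹` function on `[0,t₁]` with `ũ(0) = 0 = ũ'(0)`. -/
theorem positive_solution_C1_extension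
    (μt m₂ lam q t₀ c ε₁ : ℝ) (hμ : 0 < μt) (hm₂ : 0 < m₂) (hlam : 0 < lam)
    (hq₁ : -2 < q) (hq₂ : q < 2) (ht₀ : 0 < t₀) (ht₀' : t₀ < 1)
    (hc : 0 < c) (hε₁ : 0 < ε₁) (u : ℝ → ℝ)
    (hC2 : ContDiffOn ℝ 2 u (Ioo 0 t₀))
    (hODE : ∀ t ∈ Ioo (0:ℝ) t₀,
      -(deriv (deriv u) t) + μt^2 / t^2 * u t + m₂^2 * t^2 * u t = lam * t ^ q * u t)
    (hpos : ∀ t ∈ Ioc (0:ℝ) t₀, 0 < u t)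
    (hbound : ∀ t ∈ Ioc (0:ℝ) t₀, u t ≤ c * t ^ (1 + ε₁)) :
    ∃ t₁ ∈ Ioc (0:ℝ) t₀,
      (∀ t ∈ Ioo (0:ℝ) t₁, 0 < deriv (deriv u) t ∧ 0 < deriv u t) ∧
      Tendsto (deriv u) (𝓝[>] 0) (𝓝 0) ∧
      Tendsto (fun t => u t / t) (𝓝[>] 0) (𝓝 0) ∧
      StrictConvexOn ℝ (Ioo 0 t₁) u ∧
      ∃ w : ℝ → ℝ, EqOn w u (Ioo 0 t₁) ∧ ContDiffOn ℝ 1 w (Icc 0 t₁) ∧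
        w 0 = 0 ∧ derivWithin w (Icc 0 t₁) 0 = 0 := by
  classical
  have hqq : 0 < q + 2 := by linarith
  have hudiff : DifferentiableOn ℝ u (Ioo 0 t₀) := hC2.differentiableOn (by norm_num)
  have hC2' : ContDiffOn ℝ (1 + 1) u (Ioo 0 t₀) := by
    have : ((2:ℕ) : WithTop ℕ∞) = 1 + 1 := by norm_num
    exact this ▸ hC2
  have hderC1 : ContDiffOn ℝ 1 (deriv u) (Ioo 0 t₀) :=
    ((contDiffOn_succ_iff_deriv_of_isOpen isOpen_Ioo).1 hC2').2.2
  have hucont : ContinuousOn u (Ioo 0 t₀) := hC2.continuousOn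
  have hdercont : ContinuousOn (deriv u) (Ioo 0 t₀) := hderC1.continuousOn
  have huD : ∀ t ∈ Ioo (0:ℝ) t₀, DifferentiableAt ℝ u t := fun t ht =>
    (hudiff t ht).differentiableAt (isOpen_Ioo.mem_nhds ht)
  have hform : ∀ t ∈ Ioo (0:ℝ) t₀,
      deriv (deriv u) t = (μt^2 / t^2 + m₂^2 * t^2 - lam * t ^ q) * u t := by
    intro t ht
    have h := hODE t ht
    linear_combination -h
  -- choice of t₁
  set δ : ℝ := (μt ^ 2 / lam) ^ (q + 2)⁻¹ with hδdef
  have hδpos : 0 < δ := Real.rpow_pos_of_pos (by positivity) _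
  set t₁ : ℝ := min (t₀ / 2) (δ / 2) with ht₁def
  have ht₁pos : 0 < t₁ := lt_min (by linarith) (by linarith)
  have ht₁lt : t₁ < t₀ := lt_of_le_of_lt (min_le_left _ _) (by linarith)
  have ht₁mem : t₁ ∈ Ioc (0:ℝ) t₀ := ⟨ht₁pos, ht₁lt.le⟩
  have hsub : Ioo (0:ℝ) t₁ ⊆ Ioo 0 t₀ := Ioo_subset_Ioo le_rfl ht₁lt.le
  have hK : ∀ t ∈ Ioo (0:ℝ) t₁, 0 < μt^2 / t^2 + m₂^2 * t^2 - lam * t ^ q := by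
    rintro t ⟨ht0, htlt⟩
    have htδ : t < δ := lt_of_lt_of_le htlt (le_trans (min_le_right _ _) (by linarith))
    have h1 : t ^ (q + 2) < μt ^ 2 / lam := by
      have h := Real.rpow_lt_rpow ht0.le htδ hqq
      rwa [hδdef, Real.rpow_inv_rpow (by positivity) hqq.ne'] at h
    have h2 : lam * t ^ (q + 2) < μt ^ 2 := by
      rw [lt_div_iff₀ hlam] at h1; linarith
    have ht2 : (0:ℝ) < t ^ 2 := by positivity
    have h3 : t ^ (q + 2) = t ^ q * t ^ 2 := by
      rw [Real.rpow_add ht0, Real.rpow_two]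
    have h4 : lam * t ^ q < μt ^ 2 / t ^ 2 := by
      rw [lt_div_iff₀ ht2]
      calc lam * t ^ q * t ^ 2 = lam * t ^ (q + 2) := by rw [h3]; ring
        _ < μt ^ 2 := h2
    nlinarith [sq_nonneg (m₂ * t)]
  have hddpos : ∀ t ∈ Ioo (0:ℝ) t₁, 0 < deriv (deriv u) t := by
    intro t ht
    rw [hform t (hsub ht)]
    exact mul_pos (hK t ht) (hpos t ⟨ht.1, (hsub ht).2.le⟩)
  have hmono : StrictMonoOn (deriv u) (Ioo 0 t₁) :=
    strictMonoOn_of_deriv_pos (convex_Ioo _ _) (hdercont.mono hsub)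
      (fun x hx => hddpos x (by rwa [interior_Ioo] at hx))
  have hd1pos : ∀ t ∈ Ioo (0:ℝ) t₁, 0 < deriv u t := by
    intro s hs
    by_contra hle
    push_neg at hle
    have hneg : ∀ x ∈ interior (Ioc (0:ℝ) s), deriv u x < 0 := by
      intro x hx
      rw [interior_Ioc] at hx
      exact lt_of_lt_of_le (hmono ⟨hx.1, hx.2.trans hs.2⟩ hs hx.2) hle
    have hanti : StrictAntiOn u (Ioc 0 s) :=
      strictAntiOn_of_deriv_neg (convex_Ioc _ _)
        (hucont.mono (fun x hx => ⟨hx.1, lt_of_le_of_lt hx.2 (hs.2.trans ht₁lt)⟩)) hneg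
    have hus : 0 < u s := hpos s ⟨hs.1, (hs.2.trans ht₁lt).le⟩
    obtain ⟨a, ha0, has, hap⟩ :=
      exists_small_rpow (p := 1 + ε₁) (M := u s / c) (b := s) (by linarith) (by positivity) hs.1
    have h5 : u a ≤ c * a ^ (1 + ε₁) := hbound a ⟨ha0, (has.trans (hs.2.trans ht₁lt)).le⟩
    have h6 : c * a ^ (1 + ε₁) < u s := by
      have h := (mul_lt_mul_iff_right₀ hc).2 hap
      have hcu : c * (u s / c) = u s := by field_simp
      rwa [hcu] at h
    have h7 : u s < u a := hanti ⟨ha0, has.le⟩ ⟨hs.1, le_refl s⟩ has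
    linarith
  have hsmall : ∀ ε : ℝ, 0 < ε → ∃ s ∈ Ioo (0:ℝ) t₁, deriv u s < ε := by
    intro ε hε
    by_contra hcon
    push_neg at hcon
    have hg : MonotoneOn (fun t => u t - ε * t) (Ioo 0 t₁) := by
      apply monotoneOn_of_deriv_nonneg (convex_Ioo _ _)
      · exact (hucont.mono hsub).sub (continuousOn_const.mul continuousOn_id)
      · rw [interior_Ioo]
        intro x hx
        exact ((huD x (hsub hx)).sub ((differentiableAt_id.const_mul ε))).differentiableWithinAt
      · rw [interior_Ioo]
        intro x hx
        have h1 : HasDerivAt (fun t : ℝ => ε * t) ε x := by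
          simpa using (hasDerivAt_id x).const_mul ε
        rw [show deriv (fun t => u t - ε * t) x = deriv u x - ε from ((huD x (hsub hx)).hasDerivAt.sub h1).deriv]
        linarith [hcon x hx]
    obtain ⟨b, hb0, hbt, hbp⟩ :=
      exists_small_rpow (p := ε₁) (M := ε / (2 * c)) (b := t₁) hε₁ (by positivity) ht₁pos
    have hab : (b / 2) ∈ Ioo (0:ℝ) t₁ := ⟨by linarith, by linarith⟩
    have h8 := hg hab ⟨hb0, hbt⟩ (by linarith)
    have hua : 0 < u (b / 2) := hpos _ ⟨hab.1, (hab.2.trans ht₁lt).le⟩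
    have h9 : u b ≤ c * b ^ (1 + ε₁) := hbound b ⟨hb0, (hbt.trans ht₁lt).le⟩
    have h10 : b ^ (1 + ε₁) = b * b ^ ε₁ := by rw [Real.rpow_add hb0, Real.rpow_one]
    have h12 : c * b ^ ε₁ < ε / 2 := by
      have h := (mul_lt_mul_iff_right₀ hc).2 hbp
      have hcu : c * (ε / (2 * c)) = ε / 2 := by field_simp
      rw [hcu] at h
      linarith
    have h11 : c * b ^ (1 + ε₁) < ε / 2 * b := by
      rw [h10]
      nlinarith [Real.rpow_pos_of_pos hb0 ε₁]
    simp only at h8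
    linarith
  have hIooMem : ∀ s : ℝ, 0 < s → Ioo (0:ℝ) s ∈ 𝓝[>] (0:ℝ) := fun s hs =>
    Ioo_mem_nhdsGT_of_mem ⟨le_refl 0, hs⟩
  have htendd : Tendsto (deriv u) (𝓝[>] (0:ℝ)) (𝓝 0) := by
    rw [tendsto_order]
    constructor
    · intro a ha
      filter_upwards [hIooMem t₁ ht₁pos] with t ht
      exact lt_trans ha (hd1pos t ht)
    · intro a ha
      obtain ⟨s, hsmem, hslt⟩ := hsmall a ha
      filter_upwards [hIooMem s hsmem.1] with t ht
      exact lt_trans (hmono ⟨ht.1, ht.2.trans hsmem.2⟩ hsmem ht.2) hslt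
  have htendu : Tendsto (fun t => u t / t) (𝓝[>] (0:ℝ)) (𝓝 0) := by
    have h1 : Tendsto (fun t : ℝ => t ^ ε₁) (𝓝[>] (0:ℝ)) (𝓝 0) := by
      have h := (Real.continuousAt_rpow_const 0 ε₁ (Or.inr hε₁.le)).tendsto
      rw [Real.zero_rpow hε₁.ne'] at h
      exact h.mono_left nhdsWithin_le_nhds
    have hupper : Tendsto (fun t : ℝ => c * t ^ ε₁) (𝓝[>] (0:ℝ)) (𝓝 0) := by
      simpa using h1.const_mul c
    apply squeeze_zero' ?_ ?_ hupper
    · filter_upwards [hIooMem t₁ ht₁pos] with t ht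
      exact (div_pos (hpos t ⟨ht.1, (ht.2.trans ht₁lt).le⟩) ht.1).le
    · filter_upwards [hIooMem t₁ ht₁pos] with t ht
      have h9 := hbound t ⟨ht.1, (ht.2.trans ht₁lt).le⟩
      have h10 : t ^ (1 + ε₁) = t * t ^ ε₁ := by rw [Real.rpow_add ht.1, Real.rpow_one]
      rw [div_le_iff₀ ht.1]
      calc u t ≤ c * t ^ (1 + ε₁) := h9
        _ = c * t ^ ε₁ * t := by rw [h10]; ring
  have hconv : StrictConvexOn ℝ (Ioo (0:ℝ) t₁) u := by
    apply strictConvexOn_of_deriv2_pos (convex_Ioo _ _) (hucont.mono hsub)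
    intro x hx
    rw [interior_Ioo] at hx
    have h : deriv^[2] u x = deriv (deriv u) x := by
      simp [Function.iterate_succ, Function.iterate_one, Function.comp]
    rw [h]
    exact hddpos x hx
  -- construction of the C¹ extension
  set w : ℝ → ℝ := fun t => if 0 < t then u t else 0 with hwdef
  have hEq : EqOn w u (Ioo 0 t₁) := fun t ht => if_pos ht.1
  have hw0 : w 0 = 0 := if_neg (lt_irrefl 0)
  have hUD : UniqueDiffOn ℝ (Icc (0:ℝ) t₁) := uniqueDiffOn_Icc ht₁pos
  have h0mem : (0:ℝ) ∈ Icc (0:ℝ) t₁ := ⟨le_refl 0, ht₁pos.le⟩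
  have hset : Icc (0:ℝ) t₁ \ {0} = Ioc 0 t₁ := by
    ext x
    simp only [mem_diff, mem_Icc, mem_singleton_iff, mem_Ioc]
    constructor
    · rintro ⟨⟨h1, h2⟩, h3⟩
      exact ⟨lt_of_le_of_ne h1 (Ne.symm h3), h2⟩
    · rintro ⟨h1, h2⟩
      exact ⟨⟨h1.le, h2⟩, h1.ne'⟩
  have hle : 𝓝[Ioc (0:ℝ) t₁] (0:ℝ) ≤ 𝓝[>] 0 := nhdsWithin_mono _ Ioc_subset_Ioi_self
  have hwEqNhds : ∀ x : ℝ, 0 < x → w =ᶠ[𝓝 x] u := by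
    intro x hx
    filter_upwards [eventually_gt_nhds hx] with t ht
    exact if_pos ht
  have hwdiff : ∀ x ∈ Ioc (0:ℝ) t₁, DifferentiableAt ℝ w x := by
    intro x hx
    have hxIoo : x ∈ Ioo (0:ℝ) t₀ := ⟨hx.1, lt_of_le_of_lt hx.2 ht₁lt⟩
    exact (hwEqNhds x hx.1).differentiableAt_iff.2 (huD x hxIoo)
  have hw0deriv : HasDerivWithinAt w 0 (Icc 0 t₁) 0 := by
    rw [hasDerivWithinAt_iff_tendsto_slope, hset]
    apply (htendu.mono_left hle).congr'
    filter_upwards [self_mem_nhdsWithin] with t ht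
    rw [slope_def_field, hw0]
    simp only [hwdef]
    rw [if_pos ht.1]
    simp
  have hwdOn : DifferentiableOn ℝ w (Icc 0 t₁) := by
    intro x hx
    rcases eq_or_lt_of_le hx.1 with h0 | h0
    · rw [← h0]
      exact hw0deriv.differentiableWithinAt
    · exact (hwdiff x ⟨h0, hx.2⟩).differentiableWithinAt
  have hdwv : ∀ x ∈ Ioc (0:ℝ) t₁, derivWithin w (Icc 0 t₁) x = deriv u x := by
    intro x hx
    rw [(hwdiff x hx).derivWithin (hUD x ⟨hx.1.le, hx.2⟩), (hwEqNhds x hx.1).deriv_eq]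
  have hdw0 : derivWithin w (Icc 0 t₁) 0 = 0 := hw0deriv.derivWithin (hUD 0 h0mem)
  have hdwcont : ContinuousOn (derivWithin w (Icc 0 t₁)) (Icc 0 t₁) := by
    intro x hx
    rcases eq_or_lt_of_le hx.1 with h0 | h0
    · rw [← h0]
      have key : Tendsto (derivWithin w (Icc 0 t₁)) (𝓝[Icc (0:ℝ) t₁ \ {0}] 0) (𝓝 0) := by
        rw [hset]
        apply (htendd.mono_left hle).congr'
        filter_upwards [self_mem_nhdsWithin] with t ht
        exact (hdwv t ht).symm
      rw [← continuousWithinAt_diff_self]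
      unfold ContinuousWithinAt
      rw [hdw0]
      exact key
    · have hxIoo : x ∈ Ioo (0:ℝ) t₀ := ⟨h0, lt_of_le_of_lt hx.2 ht₁lt⟩
      have hcw : ContinuousWithinAt (deriv u) (Icc (0:ℝ) t₁) x :=
        (hdercont.continuousAt (isOpen_Ioo.mem_nhds hxIoo)).continuousWithinAt
      apply hcw.congr_of_eventuallyEq
      · filter_upwards [self_mem_nhdsWithin,
          (eventually_gt_nhds h0).filter_mono nhdsWithin_le_nhds] with t ht1 ht2
        exact hdwv t ⟨ht2, ht1.2⟩
      · exact hdwv x ⟨h0, hx.2⟩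
  have hwC1 : ContDiffOn ℝ 1 w (Icc 0 t₁) := by
    rw [show (1 : WithTop ℕ∞) = 0 + 1 from by norm_num,
      contDiffOn_succ_iff_derivWithin hUD]
    refine ⟨hwdOn, ?_, ?_⟩
    · intro h; simp at h
    · rw [contDiffOn_zero]; exact hdwcont
  exact ⟨t₁, ht₁mem, fun t ht => ⟨hddpos t ht, hd1pos t ht⟩, htendd, htendu, hconv,
    w, hEq, hwC1, hw0, hdw0⟩
end

section
/- Let μ̃ > 0 and m₂ > 0, and equip smooth functions on (0,∞) with the inner product ⟨u,v⟩ = ∫₀^∞ ( u'(t) v'(t) + μ̃² t⁻² u(t) v(t) + m₂² t² u(t) v(t) ) dt. Then there exists a constant C > 0, depending only on μ̃ and m₂, such that for every (finite or countable) family (e_i) of C¹ functions on (0,∞) with finite norm that is orthonormal with respect to ⟨·,·⟩, one has Σ_i |e_i(t)|² ≤ C for every t > 0, and consequently Σ_i ∫₀^∞ (1+t)⁻² |e_i(t)|² dt ≤ C. In other words, the embedding of the energy space into L²((0,∞), (1+t)⁻² dt) is Hilbert–Schmidt. -/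
open MeasureTheory Filter Set Topology

namespace HS17

noncomputable def Q (μ m : ℝ) (w : ℝ → ℝ) (t : ℝ) : ℝ :=
  (deriv w t)^2 + μ^2 / t^2 * (w t)^2 + m^2 * t^2 * (w t)^2

-- pointwise weight bound
lemma key_weight {μ m t x : ℝ} (hμ : 0 < μ) (hm : 0 < m) (ht : 0 < t) :
    x^2 ≤ max (μ^2)⁻¹ (m^2)⁻¹ * (μ^2 / t^2 * x^2 + m^2 * t^2 * x^2) := by
  set K := max (μ^2)⁻¹ (m^2)⁻¹ with hK
  have hμ2 : (0:ℝ) < μ^2 := by positivity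
  have hm2 : (0:ℝ) < m^2 := by positivity
  have ht2 : (0:ℝ) < t^2 := by positivity
  have hK1 : (μ^2)⁻¹ ≤ K := le_max_left _ _
  have hK2 : (m^2)⁻¹ ≤ K := le_max_right _ _
  have hKpos : 0 < K := lt_of_lt_of_le (by positivity) hK1
  rcases le_total t 1 with h | h
  · have ht1 : t^2 ≤ 1 := by nlinarith
    have he : (μ^2)⁻¹ * (μ^2 / t^2 * x^2) = x^2 / t^2 := by field_simp
    have h1 : x^2 ≤ (μ^2)⁻¹ * (μ^2 / t^2 * x^2) := by
      rw [he, le_div_iff₀ ht2]; nlinarith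
    have h2 : (μ^2)⁻¹ * (μ^2 / t^2 * x^2) ≤ K * (μ^2 / t^2 * x^2) :=
      mul_le_mul_of_nonneg_right hK1 (by positivity)
    have h3 : K * (μ^2 / t^2 * x^2) ≤ K * (μ^2 / t^2 * x^2 + m^2 * t^2 * x^2) := by
      have : (0:ℝ) ≤ m^2 * t^2 * x^2 := by positivity
      nlinarith
    linarith
  · have ht1 : 1 ≤ t^2 := by nlinarith
    have he : (m^2)⁻¹ * (m^2 * t^2 * x^2) = t^2 * x^2 := by field_simp
    have h1 : x^2 ≤ (m^2)⁻¹ * (m^2 * t^2 * x^2) := by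
      rw [he]; nlinarith
    have h2 : (m^2)⁻¹ * (m^2 * t^2 * x^2) ≤ K * (m^2 * t^2 * x^2) :=
      mul_le_mul_of_nonneg_right hK2 (by positivity)
    have h3 : K * (m^2 * t^2 * x^2) ≤ K * (μ^2 / t^2 * x^2 + m^2 * t^2 * x^2) := by
      have : (0:ℝ) ≤ μ^2 / t^2 * x^2 := by positivity
      nlinarith
    linarith


lemma aesm_of_contDiffOn {w : ℝ → ℝ} (hw : ContDiffOn ℝ 1 w (Ioi 0)) :
    AEStronglyMeasurable w (volume.restrict (Ioi 0)) :=
  hw.continuousOn.aestronglyMeasurable measurableSet_Ioi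

lemma aesm_sq {w : ℝ → ℝ} (hw : ContDiffOn ℝ 1 w (Ioi 0)) :
    AEStronglyMeasurable (fun t => (w t)^2) (volume.restrict (Ioi 0)) :=
  (aesm_of_contDiffOn hw).pow 2

lemma aesm_deriv (w : ℝ → ℝ) :
    AEStronglyMeasurable (deriv w) (volume.restrict (Ioi 0)) :=
  (measurable_deriv w).aestronglyMeasurable

lemma Q_nonneg (μ m : ℝ) (w : ℝ → ℝ) {t : ℝ} (ht : t ∈ Ioi (0:ℝ)) : 0 ≤ Q μ m w t := by
  have : (0:ℝ) < t := ht
  unfold Q; positivity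

/-- extraction of the three integrable parts, plus integrability of `w^2` and the basic bound -/
lemma parts (μ m : ℝ) (hμ : 0 < μ) (hm : 0 < m) (w : ℝ → ℝ)
    (hw : ContDiffOn ℝ 1 w (Ioi 0)) (hQ : IntegrableOn (Q μ m w) (Ioi 0)) :
    IntegrableOn (fun t => (deriv w t)^2) (Ioi 0) ∧
    IntegrableOn (fun t => (w t)^2) (Ioi 0) ∧
    IntegrableOn (fun t => m^2 * t^2 * (w t)^2) (Ioi 0) ∧
    (∫ t in Ioi 0, (deriv w t)^2) + (∫ t in Ioi 0, (w t)^2)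
      ≤ (1 + max (μ^2)⁻¹ (m^2)⁻¹) * ∫ t in Ioi 0, Q μ m w t := by
  set K := max (μ^2)⁻¹ (m^2)⁻¹ with hK
  have hKpos : 0 < K := lt_of_lt_of_le (by positivity) (le_max_left _ _)
  have hbound : ∀ᵐ t ∂(volume.restrict (Ioi (0:ℝ))), t ∈ Ioi (0:ℝ) :=
    ae_restrict_mem measurableSet_Ioi
  have h1 : IntegrableOn (fun t => (deriv w t)^2) (Ioi 0) := by
    refine hQ.mono' ((aesm_deriv w).pow 2) (hbound.mono fun t ht => ?_)
    have htp : (0:ℝ) < t := ht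
    have : (0:ℝ) ≤ (deriv w t)^2 := sq_nonneg _
    rw [Real.norm_eq_abs, abs_of_nonneg this]
    unfold Q
    have hb : (0:ℝ) ≤ μ^2 / t^2 * (w t)^2 := by positivity
    have hc : (0:ℝ) ≤ m^2 * t^2 * (w t)^2 := by positivity
    linarith
  have h2' : IntegrableOn (fun t => μ^2 / t^2 * (w t)^2) (Ioi 0) := by
    refine hQ.mono' (((continuousOn_const.div (continuousOn_pow 2)
        (fun t ht => pow_ne_zero 2 (ne_of_gt ht))).aestronglyMeasurable
          measurableSet_Ioi).mul (aesm_sq hw)) (hbound.mono fun t ht => ?_)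
    have htp : (0:ℝ) < t := ht
    have hb : (0:ℝ) ≤ μ^2 / t^2 * (w t)^2 := by positivity
    rw [Real.norm_eq_abs, abs_of_nonneg hb]
    unfold Q
    have ha : (0:ℝ) ≤ (deriv w t)^2 := sq_nonneg _
    have hc : (0:ℝ) ≤ m^2 * t^2 * (w t)^2 := by positivity
    linarith
  have h3 : IntegrableOn (fun t => m^2 * t^2 * (w t)^2) (Ioi 0) := by
    refine hQ.mono' ((aestronglyMeasurable_const.mul
        ((continuousOn_pow 2).aestronglyMeasurable measurableSet_Ioi)).mul (aesm_sq hw))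
      (hbound.mono fun t ht => ?_)
    have htp : (0:ℝ) < t := ht
    have hc : (0:ℝ) ≤ m^2 * t^2 * (w t)^2 := by positivity
    rw [Real.norm_eq_abs, abs_of_nonneg hc]
    unfold Q
    have ha : (0:ℝ) ≤ (deriv w t)^2 := sq_nonneg _
    have hb : (0:ℝ) ≤ μ^2 / t^2 * (w t)^2 := by positivity
    linarith
  have h2 : IntegrableOn (fun t => (w t)^2) (Ioi 0) := by
    refine ((h2'.add h3).const_mul K).mono' (aesm_sq hw) (hbound.mono fun t ht => ?_)
    have htp : (0:ℝ) < t := ht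
    rw [Real.norm_eq_abs, abs_of_nonneg (sq_nonneg _)]
    exact key_weight hμ hm htp
  refine ⟨h1, h2, h3, ?_⟩
  have hIQ : 0 ≤ ∫ t in Ioi (0:ℝ), Q μ m w t :=
    setIntegral_nonneg measurableSet_Ioi fun t ht => Q_nonneg μ m w ht
  have b1 : (∫ t in Ioi (0:ℝ), (deriv w t)^2) ≤ ∫ t in Ioi 0, Q μ m w t := by
    refine setIntegral_mono_on h1 hQ measurableSet_Ioi fun t ht => ?_
    have htp : (0:ℝ) < t := ht
    unfold Q
    have hb : (0:ℝ) ≤ μ^2 / t^2 * (w t)^2 := by positivity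
    have hc : (0:ℝ) ≤ m^2 * t^2 * (w t)^2 := by positivity
    linarith
  have b2 : (∫ t in Ioi (0:ℝ), (w t)^2) ≤ K * ∫ t in Ioi 0, Q μ m w t := by
    have step1 : (∫ t in Ioi (0:ℝ), (w t)^2) ≤ ∫ t in Ioi (0:ℝ), K * Q μ m w t := by
      refine setIntegral_mono_on h2 (hQ.const_mul K) measurableSet_Ioi fun t ht => ?_
      have htp : (0:ℝ) < t := ht
      calc (w t)^2 ≤ K * (μ^2 / t^2 * (w t)^2 + m^2 * t^2 * (w t)^2) := key_weight hμ hm htp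
        _ ≤ K * Q μ m w t := by
            unfold Q
            have ha : (0:ℝ) ≤ (deriv w t)^2 := sq_nonneg _
            nlinarith
    rwa [integral_const_mul] at step1
  nlinarith


lemma pointwise_bound (μ m : ℝ) (hμ : 0 < μ) (hm : 0 < m) (w : ℝ → ℝ)
    (hw : ContDiffOn ℝ 1 w (Ioi 0)) (hQ : IntegrableOn (Q μ m w) (Ioi 0))
    {t : ℝ} (ht : 0 < t) :
    (w t)^2 ≤ (1 + max (μ^2)⁻¹ (m^2)⁻¹) * ∫ s in Ioi 0, Q μ m w s := by
  obtain ⟨h1, h2, h3, hsum⟩ := parts μ m hμ hm w hw hQ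
  have hder : ∀ s ∈ Ioi (0:ℝ), HasDerivAt w (deriv w s) s := fun s hs =>
    ((hw.differentiableOn one_ne_zero).differentiableAt (isOpen_Ioi.mem_nhds hs)).hasDerivAt
  set p : ℝ → ℝ := fun s => 2 * w s * deriv w s with hp
  have hgder : ∀ s ∈ Ioi (0:ℝ), HasDerivAt (fun x => (w x)^2) (p s) s := by
    intro s hs
    have : HasDerivAt (fun x => (w x)^2) _ s := (hder s hs).pow 2
    simpa [hp, mul_comm, mul_assoc, mul_left_comm] using this
  have h12 : IntegrableOn (fun x => (deriv w x)^2 + (w x)^2) (Ioi 0) := h1.add h2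
  have hpint : IntegrableOn p (Ioi 0) := by
    refine h12.mono'
      ((aestronglyMeasurable_const.mul (aesm_of_contDiffOn hw)).mul (aesm_deriv w))
      ((ae_restrict_mem measurableSet_Ioi).mono fun s hs => ?_)
    rw [Real.norm_eq_abs]
    rw [abs_le]
    simp only [hp]
    constructor
    · nlinarith [sq_nonneg (w s + deriv w s)]
    · nlinarith [sq_nonneg (w s - deriv w s)]
  have key : ∀ s, t ≤ s → ∫ x in t..s, p x = (w s)^2 - (w t)^2 := by
    intro s hs
    refine intervalIntegral.integral_eq_sub_of_hasDerivAt (fun x hx => hgder x ?_) ?_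
    · rw [uIcc_of_le hs] at hx
      exact lt_of_lt_of_le ht hx.1
    · refine (hpint.mono_set ?_).intervalIntegrable
      rw [uIcc_of_le hs]
      exact fun x hx => lt_of_lt_of_le ht hx.1
  have htend1 : Tendsto (fun s => ∫ x in t..s, p x) atTop
      (𝓝 (∫ x in Ioi t, p x)) :=
    intervalIntegral_tendsto_integral_Ioi t (hpint.mono_set (Ioi_subset_Ioi ht.le)) tendsto_id
  have heq : (fun s => ∫ x in t..s, p x) =ᶠ[atTop] fun s => (w s)^2 - (w t)^2 :=
    eventually_atTop.2 ⟨t, fun s hs => key s hs⟩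
  have htend2 : Tendsto (fun s => (w s)^2) atTop (𝓝 ((∫ x in Ioi t, p x) + (w t)^2)) := by
    have := (htend1.congr' heq).add_const ((w t)^2)
    simpa using this
  set L := (∫ x in Ioi t, p x) + (w t)^2 with hLdef
  have hL0 : L = 0 := by
    by_contra hL
    have hLnn : 0 ≤ L := ge_of_tendsto' htend2 fun s => sq_nonneg _
    have hLpos : 0 < L := lt_of_le_of_ne hLnn (Ne.symm hL)
    have hev : ∀ᶠ s in atTop, L/2 ≤ (w s)^2 :=
      htend2.eventually (eventually_ge_nhds (by linarith))
    obtain ⟨A, hA⟩ := eventually_atTop.1 hev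
    set A' := max A 1 with hA'
    have hA'pos : (0:ℝ) < A' := lt_of_lt_of_le one_pos (le_max_right A 1)
    have hint' : IntegrableOn (fun s => m^2 * s^2 * (w s)^2) (Ioi A') :=
      h3.mono_set (Ioi_subset_Ioi hA'pos.le)
    have hci : IntegrableOn (fun s : ℝ => m^2 * (L/2) * s^2) (Ioi A') := by
      refine hint'.mono'
        (aestronglyMeasurable_const.mul
          ((continuous_pow 2).aestronglyMeasurable)) ?_
      filter_upwards [ae_restrict_mem measurableSet_Ioi] with s hs
      have hsA : A ≤ s := le_trans (le_max_left A 1) (le_of_lt hs)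
      have hws := hA s hsA
      have hs2 : (0:ℝ) ≤ m^2 * s^2 := by positivity
      rw [Real.norm_eq_abs, abs_of_nonneg (by positivity)]
      nlinarith
    have hs2int : IntegrableOn (fun s : ℝ => s^2) (Ioi A') := by
      have hc : (m^2 * (L/2)) ≠ 0 := by positivity
      have h := hci.const_mul (m^2 * (L/2))⁻¹
      have he : (fun s : ℝ => (m^2*(L/2))⁻¹ * (m^2*(L/2)*s^2)) = fun s : ℝ => s^2 := by
        funext s; field_simp
      rwa [show (fun s : ℝ => (m^2*(L/2))⁻¹ * (m^2*(L/2)*s^2)) = fun s : ℝ => s^2 from he] at h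
    have hone : IntegrableOn (fun _ : ℝ => (1:ℝ)) (Ioi (max A' 1)) := by
      refine (hs2int.mono_set (Ioi_subset_Ioi (le_max_left _ _))).mono'
        aestronglyMeasurable_const ?_
      filter_upwards [ae_restrict_mem measurableSet_Ioi] with s hs
      have h1s : (1:ℝ) ≤ s := le_of_lt (lt_of_le_of_lt (le_max_right A' 1) hs)
      rw [Real.norm_eq_abs, abs_one]
      nlinarith
    rw [integrableOn_const_iff] at hone
    rcases hone with h | h
    · norm_num at h
    · rw [Real.volume_Ioi] at h
      exact (lt_irrefl _ h)
  have hwt : (w t)^2 = ∫ x in Ioi t, -p x := by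
    rw [integral_neg]
    have : (∫ x in Ioi t, p x) = -((w t)^2) := by
      have := hL0; rw [hLdef] at this; linarith
    rw [this]; ring
  have step1 : (w t)^2 ≤ ∫ x in Ioi t, ((deriv w x)^2 + (w x)^2) := by
    rw [hwt]
    refine setIntegral_mono_on (hpint.mono_set (Ioi_subset_Ioi ht.le)).neg
      (h12.mono_set (Ioi_subset_Ioi ht.le)) measurableSet_Ioi fun x hx => ?_
    simp only [hp]
    nlinarith [sq_nonneg (w x + deriv w x)]
  have step2 : (∫ x in Ioi t, ((deriv w x)^2 + (w x)^2))
      ≤ ∫ x in Ioi 0, ((deriv w x)^2 + (w x)^2) := by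
    refine setIntegral_mono_set h12 ?_ ((Ioi_subset_Ioi ht.le).eventuallyLE)
    filter_upwards [ae_restrict_mem measurableSet_Ioi] with x _
    positivity
  have step3 : (∫ x in Ioi (0:ℝ), ((deriv w x)^2 + (w x)^2))
      = (∫ x in Ioi (0:ℝ), (deriv w x)^2) + ∫ x in Ioi 0, (w x)^2 :=
    integral_add h1 h2
  linarith


noncomputable def B0 (μ m : ℝ) (u v : ℝ → ℝ) (t : ℝ) : ℝ :=
  deriv u t * deriv v t + μ^2 / t^2 * u t * v t + m^2 * t^2 * u t * v t

lemma B0_integrable (μ m : ℝ) (u v : ℝ → ℝ)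
    (hu : ContDiffOn ℝ 1 u (Ioi 0)) (hv : ContDiffOn ℝ 1 v (Ioi 0))
    (hQu : IntegrableOn (Q μ m u) (Ioi 0)) (hQv : IntegrableOn (Q μ m v) (Ioi 0)) :
    IntegrableOn (B0 μ m u v) (Ioi 0) := by
  have hmeas : AEStronglyMeasurable (B0 μ m u v) (volume.restrict (Ioi 0)) := by
    have hc1 : AEStronglyMeasurable (fun t : ℝ => μ^2 / t^2) (volume.restrict (Ioi 0)) :=
      ((continuousOn_const.div (continuousOn_pow 2)
        (fun t ht => pow_ne_zero 2 (ne_of_gt ht)))).aestronglyMeasurable measurableSet_Ioi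
    have hc2 : AEStronglyMeasurable (fun t : ℝ => m^2 * t^2) (volume.restrict (Ioi 0)) :=
      (continuous_const.mul (continuous_pow 2)).aestronglyMeasurable
    exact (((aesm_deriv u).mul (aesm_deriv v)).add
      ((hc1.mul (aesm_of_contDiffOn hu)).mul (aesm_of_contDiffOn hv))).add
      ((hc2.mul (aesm_of_contDiffOn hu)).mul (aesm_of_contDiffOn hv))
  refine ((hQu.add hQv).div_const 2).mono' hmeas ?_
  filter_upwards [ae_restrict_mem measurableSet_Ioi] with t ht
  have htp : (0:ℝ) < t := ht
  have hc1 : (0:ℝ) ≤ μ^2 / t^2 := by positivity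
  have hc2 : (0:ℝ) ≤ m^2 * t^2 := by positivity
  rw [Real.norm_eq_abs, abs_le]
  unfold B0 Q
  simp only [Pi.add_apply]
  constructor
  · nlinarith [sq_nonneg (deriv u t + deriv v t), mul_nonneg hc1 (sq_nonneg (u t + v t)),
      mul_nonneg hc2 (sq_nonneg (u t + v t))]
  · nlinarith [sq_nonneg (deriv u t - deriv v t), mul_nonneg hc1 (sq_nonneg (u t - v t)),
      mul_nonneg hc2 (sq_nonneg (u t - v t))]

lemma combo (μ m : ℝ) {ι : Type} [DecidableEq ι] (e : ι → ℝ → ℝ)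
    (he : ∀ i, ContDiffOn ℝ 1 (e i) (Ioi 0))
    (hint : ∀ i, IntegrableOn (Q μ m (e i)) (Ioi 0))
    (horth : ∀ i j, (∫ t in Ioi (0:ℝ),
          (deriv (e i) t * deriv (e j) t + μ^2 / t^2 * (e i t) * (e j t)
            + m^2 * t^2 * (e i t) * (e j t)))
        = if i = j then 1 else 0)
    (s : Finset ι) (a : ι → ℝ) :
    ContDiffOn ℝ 1 (fun x => ∑ i ∈ s, a i * e i x) (Ioi 0) ∧
    IntegrableOn (Q μ m (fun x => ∑ i ∈ s, a i * e i x)) (Ioi 0) ∧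
    (∫ t in Ioi 0, Q μ m (fun x => ∑ i ∈ s, a i * e i x) t) = ∑ i ∈ s, (a i)^2 := by
  set w : ℝ → ℝ := fun x => ∑ i ∈ s, a i * e i x with hw
  have hwC : ContDiffOn ℝ 1 w (Ioi 0) :=
    ContDiffOn.sum fun i _ => contDiffOn_const.mul (he i)
  have hwd : ∀ t ∈ Ioi (0:ℝ), deriv w t = ∑ i ∈ s, a i * deriv (e i) t := by
    intro t ht
    have : HasDerivAt w (∑ i ∈ s, a i * deriv (e i) t) t := by
      refine HasDerivAt.fun_sum fun i _ => HasDerivAt.const_mul (a i) ?_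
      exact (((he i).differentiableOn one_ne_zero).differentiableAt (isOpen_Ioi.mem_nhds ht)).hasDerivAt
    exact this.deriv
  have eqQ : EqOn (Q μ m w) (fun t => ∑ i ∈ s, ∑ j ∈ s, a i * a j * B0 μ m (e i) (e j) t)
      (Ioi 0) := by
    intro t ht
    have hQw : Q μ m w t = (∑ i ∈ s, a i * deriv (e i) t)^2
        + μ^2 / t^2 * (∑ i ∈ s, a i * e i t)^2 + m^2 * t^2 * (∑ i ∈ s, a i * e i t)^2 := by
      unfold Q
      rw [hwd t ht]
    rw [hQw]
    have h1 : (∑ i ∈ s, a i * deriv (e i) t)^2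
        = ∑ i ∈ s, ∑ j ∈ s, (a i * deriv (e i) t) * (a j * deriv (e j) t) := by
      rw [sq, Finset.sum_mul_sum]
    have h2 : (∑ i ∈ s, a i * e i t)^2
        = ∑ i ∈ s, ∑ j ∈ s, (a i * e i t) * (a j * e j t) := by
      rw [sq, Finset.sum_mul_sum]
    rw [h1, h2]
    simp only [Finset.mul_sum, ← Finset.sum_add_distrib]
    refine Finset.sum_congr rfl fun i _ => Finset.sum_congr rfl fun j _ => ?_
    unfold B0
    ring
  have hDS : IntegrableOn (fun t => ∑ i ∈ s, ∑ j ∈ s, a i * a j * B0 μ m (e i) (e j) t)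
      (Ioi 0) := by
    refine integrable_finset_sum _ fun i _ => integrable_finset_sum _ fun j _ => ?_
    exact (B0_integrable μ m (e i) (e j) (he i) (he j) (hint i) (hint j)).const_mul _
  have hQint : IntegrableOn (Q μ m w) (Ioi 0) :=
    hDS.congr_fun (fun t ht => (eqQ ht).symm) measurableSet_Ioi
  refine ⟨hwC, hQint, ?_⟩
  rw [setIntegral_congr_fun measurableSet_Ioi eqQ]
  rw [integral_finset_sum _ (fun i _ => integrable_finset_sum _ fun j _ =>
    (B0_integrable μ m (e i) (e j) (he i) (he j) (hint i) (hint j)).const_mul _)]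
  refine Finset.sum_congr rfl fun i hi => ?_
  rw [integral_finset_sum _ (fun j _ =>
    (B0_integrable μ m (e i) (e j) (he i) (he j) (hint i) (hint j)).const_mul _)]
  have : ∀ j ∈ s, (∫ t in Ioi (0:ℝ), a i * a j * B0 μ m (e i) (e j) t)
      = if i = j then a i * a j else 0 := by
    intro j _
    rw [integral_const_mul]
    have hB : (∫ t in Ioi (0:ℝ), B0 μ m (e i) (e j) t) = if i = j then 1 else 0 := horth i j
    rw [hB, mul_ite, mul_one, mul_zero]
  rw [Finset.sum_congr rfl this, Finset.sum_ite_eq s i (fun j => a i * a j), if_pos hi, sq]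


lemma one_add_sq_inv_integral :
    IntegrableOn (fun t : ℝ => ((1 + t)^2)⁻¹) (Ioi 0) ∧
    (∫ t in Ioi (0:ℝ), ((1 + t)^2)⁻¹) = 1 := by
  have hd : ∀ x ∈ Ici (0:ℝ), HasDerivAt (fun t : ℝ => -(1 + t)⁻¹) (((1 + x)^2)⁻¹) x := by
    intro x hx
    have hx0 : (0:ℝ) ≤ x := hx
    have h1 : (1:ℝ) + x ≠ 0 := by positivity
    have h := (((hasDerivAt_id x).const_add (1:ℝ)).inv h1).neg
    exact h.congr_deriv (by simp only [id, neg_div, neg_neg, one_div])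
  have hnn : ∀ x ∈ Ioi (0:ℝ), 0 ≤ ((1 + x)^2)⁻¹ := by
    intro x hx
    have : (0:ℝ) < x := hx
    positivity
  have htt : Tendsto (fun t : ℝ => -(1 + t)⁻¹) atTop (𝓝 0) := by
    have h1 : Tendsto (fun t : ℝ => 1 + t) atTop atTop :=
      tendsto_atTop_add_const_left _ 1 tendsto_id
    have := (tendsto_inv_atTop_zero.comp h1).neg
    simpa using this
  constructor
  · exact integrableOn_Ioi_deriv_of_nonneg' hd hnn htt
  · have := integral_Ioi_of_hasDerivAt_of_nonneg' hd hnn htt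
    rw [this]; norm_num

end HS17

open HS17


/-- For any countable family orthonormal with respect to the
energy inner product `⟨u,v⟩ = ∫₀^∞ (u'v' + μ̃² t⁻² uv + m₂² t² uv) dt`, the sums
`Σᵢ |eᵢ(t)|²` are uniformly bounded and `Σᵢ ∫₀^∞ (1+t)⁻² |eᵢ|² ≤ C`, i.e. the
embedding of the energy space into `L²((0,∞),(1+t)⁻² dt)` is Hilbert–Schmidt. -/
theorem energy_space_embedding_hilbert_schmidt
    (μt m₂ : ℝ) (hμ : 0 < μt) (hm₂ : 0 < m₂) :
    ∃ C > (0:ℝ), ∀ (ι : Type) [Countable ι] [DecidableEq ι] (e : ι → ℝ → ℝ),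
      (∀ i, ContDiffOn ℝ 1 (e i) (Ioi 0)) →
      (∀ i, IntegrableOn (fun t =>
        (deriv (e i) t)^2 + μt^2 / t^2 * (e i t)^2 + m₂^2 * t^2 * (e i t)^2) (Ioi 0)) →
      (∀ i j, (∫ t in Ioi (0:ℝ),
          (deriv (e i) t * deriv (e j) t + μt^2 / t^2 * (e i t) * (e j t)
            + m₂^2 * t^2 * (e i t) * (e j t)))
        = if i = j then 1 else 0) →
      (∀ t > (0:ℝ), Summable (fun i => (e i t)^2) ∧ ∑' i, (e i t)^2 ≤ C) ∧
      Summable (fun i => ∫ t in Ioi (0:ℝ), ((1 + t)^2)⁻¹ * (e i t)^2) ∧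
      ∑' i, ∫ t in Ioi (0:ℝ), ((1 + t)^2)⁻¹ * (e i t)^2 ≤ C := by
  set K := max (μt^2)⁻¹ (m₂^2)⁻¹ with hK
  have hKpos : 0 < K := lt_of_lt_of_le (by positivity) (le_max_left _ _)
  refine ⟨1 + K, by linarith, ?_⟩
  intro ι _ _ e he hint horth
  have hintQ : ∀ i, IntegrableOn (Q μt m₂ (e i)) (Ioi 0) := fun i => hint i
  -- key pointwise bound over finite subfamilies
  have hpt : ∀ t, 0 < t → ∀ u : Finset ι, ∑ i ∈ u, (e i t)^2 ≤ 1 + K := by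
    intro t ht u
    obtain ⟨hwC, hQw, hQint⟩ := combo μt m₂ e he hintQ horth u (fun i => e i t)
    have hb := pointwise_bound μt m₂ hμ hm₂ _ hwC hQw ht
    rw [hQint] at hb
    have hwt : (∑ i ∈ u, e i t * e i t) = ∑ i ∈ u, (e i t)^2 :=
      Finset.sum_congr rfl fun i _ => (sq (e i t)).symm
    rw [hwt] at hb
    set S := ∑ i ∈ u, (e i t)^2 with hS
    have hSnn : 0 ≤ S := Finset.sum_nonneg fun i _ => sq_nonneg _
    have hb' : S^2 ≤ (1 + K) * S := hb
    by_contra hcon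
    push_neg at hcon
    have hSpos : 0 < S := lt_trans (by linarith) hcon
    nlinarith
  constructor
  · intro t ht
    have hsummable : Summable (fun i => (e i t)^2) :=
      summable_of_sum_le (fun i => sq_nonneg _) (fun u => hpt t ht u)
    exact ⟨hsummable, Summable.tsum_le_of_sum_le hsummable (fun u => hpt t ht u)⟩
  · -- second part
    obtain ⟨hIone, hIval⟩ := one_add_sq_inv_integral
    have hterm : ∀ i, IntegrableOn (fun t => ((1 + t)^2)⁻¹ * (e i t)^2) (Ioi 0) := by
      intro i
      obtain ⟨_, h2, _, _⟩ := parts μt m₂ hμ hm₂ (e i) (he i) (hintQ i)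
      refine h2.mono' ?_ ?_
      · exact ((((measurable_const.add measurable_id).pow_const 2).inv).aestronglyMeasurable).mul
          (aesm_sq (he i))
      · filter_upwards [ae_restrict_mem measurableSet_Ioi] with t ht
        have htp : (0:ℝ) < t := ht
        have h1 : ((1 + t)^2)⁻¹ ≤ 1 := by
          rw [inv_le_one_iff₀]
          right; nlinarith
        have h0 : (0:ℝ) ≤ ((1 + t)^2)⁻¹ := by positivity
        rw [Real.norm_eq_abs, abs_of_nonneg (by positivity)]
        nlinarith [sq_nonneg (e i t)]
    have hnonneg : ∀ i, 0 ≤ ∫ t in Ioi (0:ℝ), ((1 + t)^2)⁻¹ * (e i t)^2 := by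
      intro i
      refine setIntegral_nonneg measurableSet_Ioi fun t ht => ?_
      have : (0:ℝ) < t := ht
      positivity
    have hsum2 : ∀ u : Finset ι,
        (∑ i ∈ u, ∫ t in Ioi (0:ℝ), ((1 + t)^2)⁻¹ * (e i t)^2) ≤ 1 + K := by
      intro u
      rw [← integral_finset_sum u (fun i _ => hterm i)]
      have hstep : (∫ t in Ioi (0:ℝ), ∑ i ∈ u, ((1 + t)^2)⁻¹ * (e i t)^2)
          ≤ ∫ t in Ioi (0:ℝ), ((1 + t)^2)⁻¹ * (1 + K) := by
        refine setIntegral_mono_on (integrable_finset_sum _ fun i _ => hterm i)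
          (hIone.mul_const _) measurableSet_Ioi fun t ht => ?_
        have htp : (0:ℝ) < t := ht
        rw [← Finset.mul_sum]
        exact mul_le_mul_of_nonneg_left (hpt t htp u) (by positivity)
      calc (∫ t in Ioi (0:ℝ), ∑ i ∈ u, ((1 + t)^2)⁻¹ * (e i t)^2)
          ≤ ∫ t in Ioi (0:ℝ), ((1 + t)^2)⁻¹ * (1 + K) := hstep
        _ = (∫ t in Ioi (0:ℝ), ((1 + t)^2)⁻¹) * (1 + K) := integral_mul_const _ _
        _ = 1 + K := by rw [hIval, one_mul]
    have hsummable2 : Summable (fun i => ∫ t in Ioi (0:ℝ), ((1 + t)^2)⁻¹ * (e i t)^2) :=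
      summable_of_sum_le (fun i => hnonneg i) hsum2
    exact ⟨hsummable2, Summable.tsum_le_of_sum_le hsummable2 hsum2⟩
end

section
/- Let μ̃ > 0, m₂ > 0 and let q be a real exponent with −2 < q < 2. Then there exist constants c > 0 and γ > 0, depending only on μ̃, m₂ and q, with the following property: for every λ > 0 and every C¹ function u on (0,∞) with finite energy norm ‖u‖² = ∫₀^∞ ( |u'(t)|² + μ̃² t⁻²|u(t)|² + m₂² t²|u(t)|² ) dt satisfying the eigen-relation ‖u‖² ≤ c₁ λ ∫₀^∞ t^q |u(t)|² dt for a fixed constant c₁ > 0, one has ‖u‖² ≤ c (1+λ)^{2γ} ∫₀^∞ (1+t)⁻² |u(t)|² dt (with c also depending on c₁). -/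
open MeasureTheory Filter Set Topology

lemma ptwise (q : ℝ) (hq₁ : -2 < q) (hq₂ : q < 2) {ε : ℝ} (hε0 : 0 < ε) (hε1 : ε ≤ 1)
    {t : ℝ} (ht : 0 < t) :
    t ^ q ≤ ε / t ^ 2 + ε * t ^ 2 +
      4 * ε ^ (-(|q| * ((q+2)⁻¹ + (2-q)⁻¹) + 2 * (2-q)⁻¹)) * ((1 + t) ^ 2)⁻¹ := by
  set a : ℝ := (q+2)⁻¹ with ha_def
  set b : ℝ := (2-q)⁻¹ with hb_def
  have ha : 0 < a := inv_pos.2 (by linarith)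
  have hb : 0 < b := inv_pos.2 (by linarith)
  set K : ℝ := |q| * (a + b) + 2 * b with hK_def
  have hK0 : 0 ≤ K := by positivity
  have hεK : 0 < ε ^ (-K) := Real.rpow_pos_of_pos hε0 _
  have ht2 : (0:ℝ) < t ^ 2 := by positivity
  have h1t : (0:ℝ) < ((1+t)^2)⁻¹ := by positivity
  rcases le_or_gt t (ε ^ a) with hc1 | hc1
  · -- small t : t^q ≤ ε / t^2
    have h1 : t ^ (q+2) ≤ ε := by
      calc t ^ (q+2) ≤ (ε ^ a) ^ (q+2) :=
            Real.rpow_le_rpow ht.le hc1 (by linarith)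
        _ = ε ^ (a * (q+2)) := (Real.rpow_mul hε0.le a (q+2)).symm
        _ = ε := by rw [inv_mul_cancel₀ (by linarith : q + 2 ≠ 0), Real.rpow_one]
    have h2 : t ^ q ≤ ε / t ^ 2 := by
      rw [le_div_iff₀ ht2]
      calc t ^ q * t ^ 2 = t ^ q * t ^ (2:ℝ) := by
            rw [← Real.rpow_natCast t 2]; norm_num
        _ = t ^ (q + 2) := (Real.rpow_add ht q 2).symm
        _ ≤ ε := h1
    nlinarith [mul_pos hεK h1t, mul_pos hε0 ht2]
  rcases le_or_gt (ε ^ (-b)) t with hc2 | hc2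
  · -- large t : t^q ≤ ε * t^2
    have h1 : t ^ (q-2) ≤ ε := by
      have h2 : ε⁻¹ ≤ t ^ (2-q) := by
        calc ε⁻¹ = ε ^ (-(1:ℝ)) := by rw [Real.rpow_neg_one]
          _ = (ε ^ (-b)) ^ (2-q) := by
              rw [← Real.rpow_mul hε0.le]
              congr 1
              have h2q : (2:ℝ) - q ≠ 0 := by linarith
              rw [hb_def]
              field_simp
          _ ≤ t ^ (2-q) := Real.rpow_le_rpow (Real.rpow_nonneg hε0.le _) hc2 (by linarith)
      have h3 : t ^ (q-2) = (t ^ (2-q))⁻¹ := by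
        rw [← Real.rpow_neg ht.le]; ring_nf
      rw [h3]
      rw [inv_le_comm₀ (Real.rpow_pos_of_pos ht _) hε0] at *
      exact h2
    have h2 : t ^ q ≤ ε * t ^ 2 := by
      calc t ^ q = t ^ (q - 2) * t ^ (2:ℝ) := by
            rw [← Real.rpow_add ht]; ring_nf
        _ = t ^ (q-2) * t ^ 2 := by rw [← Real.rpow_natCast t 2]; norm_num
        _ ≤ ε * t ^ 2 := by nlinarith
    nlinarith [mul_pos hεK h1t, div_pos hε0 ht2]
  · -- middle region
    have hεa : ε ^ a ≤ t := hc1.le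
    have hεb : t ≤ ε ^ (-b) := hc2.le
    have hstepA : t ^ q ≤ ε ^ (-(|q| * (a+b))) := by
      rcases le_or_gt 0 q with hq | hq
      · calc t ^ q ≤ (ε ^ (-b)) ^ q := Real.rpow_le_rpow ht.le hεb hq
          _ = ε ^ (-b * q) := (Real.rpow_mul hε0.le _ _).symm
          _ ≤ ε ^ (-(|q| * (a+b))) := by
              apply Real.rpow_le_rpow_of_exponent_ge hε0 hε1
              rw [abs_of_nonneg hq]
              nlinarith
      · have h1 : t ^ q = (t ^ (-q))⁻¹ := by
          rw [← Real.rpow_neg ht.le]; ring_nf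
        have h2 : (ε ^ a) ^ (-q) ≤ t ^ (-q) :=
          Real.rpow_le_rpow (Real.rpow_nonneg hε0.le _) hεa (by linarith)
        have h3 : t ^ q ≤ ε ^ (a * q) := by
          rw [h1]
          calc (t ^ (-q))⁻¹ ≤ ((ε ^ a) ^ (-q))⁻¹ := by
                apply inv_anti₀ _ h2
                positivity
            _ = (ε ^ (a * (-q)))⁻¹ := by rw [← Real.rpow_mul hε0.le]
            _ = ε ^ (a * q) := by
                rw [← Real.rpow_neg hε0.le]; congr 1; ring
        calc t ^ q ≤ ε ^ (a * q) := h3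
          _ ≤ ε ^ (-(|q| * (a+b))) := by
              apply Real.rpow_le_rpow_of_exponent_ge hε0 hε1
              rw [abs_of_neg hq]
              nlinarith
    have hone : (1:ℝ) ≤ ε ^ (-b) :=
      Real.one_le_rpow_of_pos_of_le_one_of_nonpos hε0 hε1 (by linarith)
    have hsq : (1 + t) ^ 2 ≤ 4 * ε ^ (-(2*b)) := by
      have h1 : 1 + t ≤ 2 * ε ^ (-b) := by linarith
      have h2 : (1+t)^2 ≤ (2 * ε ^ (-b))^2 := by nlinarith [Real.rpow_pos_of_pos hε0 (-b)]
      calc (1+t)^2 ≤ (2 * ε ^ (-b))^2 := h2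
        _ = 4 * (ε ^ (-b) * ε ^ (-b)) := by ring
        _ = 4 * ε ^ (-(2*b)) := by rw [← Real.rpow_add hε0]; ring_nf
    have hB : ε ^ (-(|q| * (a+b))) ≤ 4 * ε ^ (-K) * ((1+t)^2)⁻¹ := by
      have h4 : (4 * ε ^ (-(2*b)))⁻¹ ≤ ((1+t)^2)⁻¹ := by
        apply inv_anti₀ (by positivity) hsq
      calc ε ^ (-(|q| * (a+b))) = 4 * ε ^ (-K) * (4 * ε ^ (-(2*b)))⁻¹ := by
            rw [mul_inv, ← mul_assoc]
            rw [show (4:ℝ) * ε ^ (-K) * 4⁻¹ = ε ^ (-K) by ring]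
            rw [← Real.rpow_neg hε0.le, ← Real.rpow_add hε0]
            congr 1
            rw [hK_def]; ring
        _ ≤ 4 * ε ^ (-K) * ((1+t)^2)⁻¹ := by
            apply mul_le_mul_of_nonneg_left h4 (by positivity)
    have := hstepA.trans hB
    nlinarith [div_pos hε0 ht2, mul_pos hε0 ht2]

set_option maxHeartbeats 4000000 in
/-- Eigenfunction estimate: there are `γ = γ(μ̃,m₂,q) > 0` and,
for each `c₁ > 0`, a constant `c > 0` such that any finite-energy `C¹` function `u`
with `‖u‖² ≤ c₁ λ ∫₀^∞ t^q |u|²` satisfies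
`‖u‖² ≤ c (1+λ)^{2γ} ∫₀^∞ (1+t)⁻² |u|²`. -/
theorem eigenfunction_weighted_estimate
    (μt m₂ q : ℝ) (hμ : 0 < μt) (hm₂ : 0 < m₂) (hq₁ : -2 < q) (hq₂ : q < 2) :
    ∃ γ > (0:ℝ), ∀ c₁ > (0:ℝ), ∃ c > (0:ℝ), ∀ lam > (0:ℝ), ∀ u : ℝ → ℝ,
      ContDiffOn ℝ 1 u (Ioi 0) →
      IntegrableOn (fun t =>
        (deriv u t)^2 + μt^2 / t^2 * (u t)^2 + m₂^2 * t^2 * (u t)^2) (Ioi 0) →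
      (∫ t in Ioi (0:ℝ),
          ((deriv u t)^2 + μt^2 / t^2 * (u t)^2 + m₂^2 * t^2 * (u t)^2))
        ≤ c₁ * lam * ∫ t in Ioi (0:ℝ), t ^ q * (u t)^2 →
      (∫ t in Ioi (0:ℝ),
          ((deriv u t)^2 + μt^2 / t^2 * (u t)^2 + m₂^2 * t^2 * (u t)^2))
        ≤ c * (1 + lam) ^ (2 * γ) * ∫ t in Ioi (0:ℝ), ((1 + t)^2)⁻¹ * (u t)^2 := by
  have ha : (0:ℝ) < (q+2)⁻¹ := inv_pos.2 (by linarith)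
  have hb : (0:ℝ) < (2-q)⁻¹ := inv_pos.2 (by linarith)
  set K : ℝ := |q| * ((q+2)⁻¹ + (2-q)⁻¹) + 2 * (2-q)⁻¹ with hK_def
  have hK0 : 0 ≤ K := by positivity
  clear_value K
  refine ⟨(K+1)/2, by linarith, ?_⟩
  intro c₁ hc₁
  set M : ℝ := 1/μt^2 + 1/m₂^2 with hM_def
  have hM : 0 < M := by positivity
  have hP : (0:ℝ) < 1 + 2*c₁*M := by nlinarith [mul_pos hc₁ hM]
  clear_value M
  refine ⟨8*c₁*(1+2*c₁*M) ^ K,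
    mul_pos (by positivity) (Real.rpow_pos_of_pos hP K), ?_⟩
  intro lam hlam u hu hF hEig
  -- measurability
  have hu_m : AEStronglyMeasurable (fun t => (u t)^2) (volume.restrict (Ioi 0)) :=
    ((hu.continuousOn.aestronglyMeasurable measurableSet_Ioi).mul
      (hu.continuousOn.aestronglyMeasurable measurableSet_Ioi)).congr
      (ae_of_all _ fun t => (sq (u t)).symm)
  have hmono : ∀ (f g : ℝ → ℝ), IntegrableOn g (Ioi 0) →
      AEStronglyMeasurable f (volume.restrict (Ioi 0)) →
      (∀ t ∈ Ioi (0:ℝ), 0 ≤ f t ∧ f t ≤ g t) → IntegrableOn f (Ioi 0) := by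
    intro f g hg hf hbd
    refine hg.mono' hf ?_
    refine (ae_restrict_iff' measurableSet_Ioi).2 (ae_of_all _ fun t ht => ?_)
    rw [Real.norm_eq_abs, abs_of_nonneg (hbd t ht).1]
    exact (hbd t ht).2
  have hg0 : IntegrableOn (fun t => (deriv u t)^2) (Ioi 0) := by
    refine hmono _ _ hF ((measurable_deriv u).pow_const 2).aestronglyMeasurable
      fun t ht => ⟨sq_nonneg _, ?_⟩
    have ht0 : (0:ℝ) < t := ht
    have hA : 0 ≤ μt^2 / t^2 * (u t)^2 := by positivity
    have hB : 0 ≤ m₂^2 * t^2 * (u t)^2 := by positivity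
    linarith
  have hg1 : IntegrableOn (fun t => μt^2 / t^2 * (u t)^2) (Ioi 0) := by
    refine hmono _ _ hF
      (((measurable_const.div (measurable_id.pow_const 2)).aestronglyMeasurable.mul hu_m))
      fun t ht => ⟨?_, ?_⟩
    · have ht0 : (0:ℝ) < t := ht; positivity
    · have ht0 : (0:ℝ) < t := ht
      have hA : 0 ≤ (deriv u t)^2 := sq_nonneg _
      have hB : 0 ≤ m₂^2 * t^2 * (u t)^2 := by positivity
      linarith
  have hg2 : IntegrableOn (fun t => m₂^2 * t^2 * (u t)^2) (Ioi 0) := by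
    refine hmono _ _ hF
      ((measurable_const.mul (measurable_id.pow_const 2)).aestronglyMeasurable.mul hu_m)
      fun t ht => ⟨by positivity, ?_⟩
    have ht0 : (0:ℝ) < t := ht
    have hA : 0 ≤ (deriv u t)^2 := sq_nonneg _
    have hB : 0 ≤ μt^2 / t^2 * (u t)^2 := by positivity
    linarith
  have hW : IntegrableOn (fun t => ((1 + t)^2)⁻¹ * (u t)^2) (Ioi 0) := by
    refine hmono _ (fun t => (1/μt^2) * (μt^2 / t^2 * (u t)^2)) (hg1.const_mul _)
      (((measurable_const.add measurable_id).pow_const 2).inv.aestronglyMeasurable.mul hu_m)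
      fun t ht => ⟨by positivity, ?_⟩
    have ht0 : (0:ℝ) < t := ht
    have h1 : ((1+t)^2)⁻¹ ≤ (t^2)⁻¹ := by
      apply inv_anti₀ (by positivity)
      nlinarith
    have h2 : (1/μt^2) * (μt^2 / t^2 * (u t)^2) = (t^2)⁻¹ * (u t)^2 := by
      field_simp
    show ((1 + t)^2)⁻¹ * (u t)^2 ≤ (1/μt^2) * (μt^2 / t^2 * (u t)^2)
    rw [h2]
    exact mul_le_mul_of_nonneg_right h1 (sq_nonneg _)
  have hrpow_m : AEStronglyMeasurable (fun t : ℝ => t ^ q * (u t)^2)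
      (volume.restrict (Ioi 0)) :=
    ((ContinuousOn.rpow_const continuousOn_id
      (fun x hx => Or.inl (ne_of_gt hx))).aestronglyMeasurable measurableSet_Ioi).mul hu_m
  -- pointwise estimate multiplied by u²
  have hpt : ∀ ε, 0 < ε → ε ≤ 1 → ∀ t ∈ Ioi (0:ℝ),
      t ^ q * (u t)^2 ≤ (ε/μt^2) * (μt^2 / t^2 * (u t)^2)
        + (ε/m₂^2) * (m₂^2 * t^2 * (u t)^2)
        + (4 * ε ^ (-K)) * (((1 + t)^2)⁻¹ * (u t)^2) := by
    intro ε hε0 hε1 t ht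
    have ht0 : (0:ℝ) < t := ht
    have hp := ptwise q hq₁ hq₂ hε0 hε1 ht0
    rw [← hK_def] at hp
    have h1 := mul_le_mul_of_nonneg_right hp (sq_nonneg (u t))
    have hμ2 : μt^2 ≠ 0 := by positivity
    have hm2 : m₂^2 ≠ 0 := by positivity
    have e1 : (ε/μt^2) * (μt^2 / t^2 * (u t)^2) = ε / t^2 * (u t)^2 := by
      field_simp
    have e2 : (ε/m₂^2) * (m₂^2 * t^2 * (u t)^2) = ε * t^2 * (u t)^2 := by
      field_simp
    have e3 : (ε / t ^ 2 + ε * t ^ 2 + 4 * ε ^ (-K) * ((1 + t) ^ 2)⁻¹) * (u t)^2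
        = ε / t^2 * (u t)^2 + ε * t^2 * (u t)^2
          + (4 * ε ^ (-K)) * (((1 + t)^2)⁻¹ * (u t)^2) := by ring
    rw [e3] at h1
    rw [e1, e2]
    exact h1
  have hgsum : IntegrableOn (fun t => ((1:ℝ)/μt^2) * (μt^2 / t^2 * (u t)^2)
        + ((1:ℝ)/m₂^2) * (m₂^2 * t^2 * (u t)^2)
        + (4 * (1:ℝ) ^ (-K)) * (((1 + t)^2)⁻¹ * (u t)^2)) (Ioi 0) :=
    ((hg1.const_mul _).add (hg2.const_mul _)).add (hW.const_mul _)
  have hT : IntegrableOn (fun t => t ^ q * (u t)^2) (Ioi 0) := by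
    refine hmono _ _ hgsum hrpow_m fun t ht => ⟨?_, ?_⟩
    · have ht0 : (0:ℝ) < t := ht
      have h0 : (0:ℝ) < t ^ q := Real.rpow_pos_of_pos ht0 q
      positivity
    · show t ^ q * (u t)^2 ≤ ((1:ℝ)/μt^2) * (μt^2 / t^2 * (u t)^2)
          + ((1:ℝ)/m₂^2) * (m₂^2 * t^2 * (u t)^2)
          + (4 * (1:ℝ) ^ (-K)) * (((1 + t)^2)⁻¹ * (u t)^2)
      have h := hpt 1 one_pos le_rfl t ht
      norm_num at h ⊢
      convert h using 2 <;> norm_num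
  -- notation for the integrals
  set I0 := ∫ t in Ioi (0:ℝ), (deriv u t)^2 with hI0_def
  set I1 := ∫ t in Ioi (0:ℝ), μt^2 / t^2 * (u t)^2 with hI1_def
  set I2 := ∫ t in Ioi (0:ℝ), m₂^2 * t^2 * (u t)^2 with hI2_def
  set IW := ∫ t in Ioi (0:ℝ), ((1 + t)^2)⁻¹ * (u t)^2 with hIW_def
  set IT := ∫ t in Ioi (0:ℝ), t ^ q * (u t)^2 with hIT_def
  set E := ∫ t in Ioi (0:ℝ),
      ((deriv u t)^2 + μt^2 / t^2 * (u t)^2 + m₂^2 * t^2 * (u t)^2) with hE_def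
  clear_value I0 I1 I2 IW IT E
  have h01 : IntegrableOn (fun t => (deriv u t)^2 + μt^2 / t^2 * (u t)^2) (Ioi 0) :=
    hg0.add hg1
  have hEsplit : E = I0 + I1 + I2 := by
    rw [hE_def, hI0_def, hI1_def, hI2_def, integral_add h01 hg2, integral_add hg0 hg1]
  have hI0nn : 0 ≤ I0 := by
    rw [hI0_def]; exact setIntegral_nonneg measurableSet_Ioi fun t _ => sq_nonneg _
  have hI1nn : 0 ≤ I1 := by
    rw [hI1_def]
    exact setIntegral_nonneg measurableSet_Ioi fun t ht => by
      have ht0 : (0:ℝ) < t := ht; positivity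
  have hI2nn : 0 ≤ I2 := by
    rw [hI2_def]
    exact setIntegral_nonneg measurableSet_Ioi fun t ht => by
      have ht0 : (0:ℝ) < t := ht; positivity
  have hIWnn : 0 ≤ IW := by
    rw [hIW_def]
    exact setIntegral_nonneg measurableSet_Ioi fun t ht => by positivity
  have hEnn : 0 ≤ E := by rw [hEsplit]; linarith
  have hI1E : I1 ≤ E := by rw [hEsplit]; linarith
  have hI2E : I2 ≤ E := by rw [hEsplit]; linarith
  -- the key estimate for a chosen ε
  set ε : ℝ := min 1 (2*c₁*lam*M)⁻¹ with hε_def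
  have hεr : (0:ℝ) < (2*c₁*lam*M)⁻¹ := by positivity
  have hε0 : 0 < ε := lt_min one_pos hεr
  have hε1 : ε ≤ 1 := min_le_left _ _
  clear_value ε
  have hεK : (0:ℝ) < ε ^ (-K) := Real.rpow_pos_of_pos hε0 _
  have hj1 : IntegrableOn (fun t => (ε/μt^2) * (μt^2 / t^2 * (u t)^2)) (Ioi 0) :=
    hg1.const_mul _
  have hj2 : IntegrableOn (fun t => (ε/m₂^2) * (m₂^2 * t^2 * (u t)^2)) (Ioi 0) :=
    hg2.const_mul _
  have hj3 : IntegrableOn (fun t => (4 * ε ^ (-K)) * (((1 + t)^2)⁻¹ * (u t)^2)) (Ioi 0) :=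
    hW.const_mul _
  have hjsum : IntegrableOn (fun t => (ε/μt^2) * (μt^2 / t^2 * (u t)^2)
      + (ε/m₂^2) * (m₂^2 * t^2 * (u t)^2)
      + (4 * ε ^ (-K)) * (((1 + t)^2)⁻¹ * (u t)^2)) (Ioi 0) := (hj1.add hj2).add hj3
  have hIT_le : IT ≤ (ε/μt^2) * I1 + (ε/m₂^2) * I2 + (4 * ε ^ (-K)) * IW := by
    have hj12 : IntegrableOn (fun t => (ε/μt^2) * (μt^2 / t^2 * (u t)^2)
        + (ε/m₂^2) * (m₂^2 * t^2 * (u t)^2)) (Ioi 0) := hj1.add hj2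
    rw [hIT_def, hI1_def, hI2_def, hIW_def, ← integral_const_mul, ← integral_const_mul,
      ← integral_const_mul, ← integral_add hj1 hj2, ← integral_add hj12 hj3]
    exact setIntegral_mono_on hT hjsum measurableSet_Ioi (hpt ε hε0 hε1)
  -- combine
  have hsmall : c₁ * lam * ε * M ≤ 1/2 := by
    have h1 : ε ≤ (2*c₁*lam*M)⁻¹ := by rw [hε_def]; exact min_le_right _ _
    have h2 : c₁ * lam * (2*c₁*lam*M)⁻¹ * M ≤ 1/2 := by
      have he : c₁ * lam * (2*c₁*lam*M)⁻¹ * M = 1/2 := by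
        field_simp [hc₁.ne', hlam.ne', hM.ne']
      exact le_of_eq he
    calc c₁ * lam * ε * M ≤ c₁ * lam * (2*c₁*lam*M)⁻¹ * M := by
          apply mul_le_mul_of_nonneg_right _ hM.le
          exact mul_le_mul_of_nonneg_left h1 (by positivity)
      _ ≤ 1/2 := h2
  have hmain : E ≤ 8 * c₁ * lam * ε ^ (-K) * IW := by
    have h1 : E ≤ c₁ * lam * ((ε/μt^2) * I1 + (ε/m₂^2) * I2 + (4 * ε ^ (-K)) * IW) := by
      calc E ≤ c₁ * lam * IT := hEig
        _ ≤ _ := mul_le_mul_of_nonneg_left hIT_le (by positivity)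
    have h2 : c₁ * lam * ((ε/μt^2) * I1 + (ε/m₂^2) * I2)
        ≤ c₁ * lam * ε * M * E := by
      have e1 : c₁ * lam * ((ε/μt^2) * I1) ≤ c₁ * lam * ((ε/μt^2) * E) := by
        apply mul_le_mul_of_nonneg_left _ (by positivity)
        exact mul_le_mul_of_nonneg_left hI1E (by positivity)
      have e2 : c₁ * lam * ((ε/m₂^2) * I2) ≤ c₁ * lam * ((ε/m₂^2) * E) := by
        apply mul_le_mul_of_nonneg_left _ (by positivity)
        exact mul_le_mul_of_nonneg_left hI2E (by positivity)
      have : c₁ * lam * ((ε/μt^2) * E) + c₁ * lam * ((ε/m₂^2) * E)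
          = c₁ * lam * ε * M * E := by
        rw [hM_def]; field_simp
      linarith
    have h3 : c₁ * lam * ε * M * E ≤ (1/2) * E :=
      mul_le_mul_of_nonneg_right hsmall hEnn
    have h4 : c₁ * lam * ((4 * ε ^ (-K)) * IW) = 4 * c₁ * lam * ε ^ (-K) * IW := by ring
    have h5 : c₁ * lam * ((ε/μt^2) * I1 + (ε/m₂^2) * I2 + (4 * ε ^ (-K)) * IW)
        = c₁ * lam * ((ε/μt^2) * I1 + (ε/m₂^2) * I2)
          + c₁ * lam * ((4 * ε ^ (-K)) * IW) := by ring
    rw [h5] at h1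
    linarith
  -- scalar bound
  have hεinv : ε⁻¹ ≤ (1+2*c₁*M)*(1+lam) := by
    rcases min_cases 1 ((2*c₁*lam*M)⁻¹) with ⟨he, _⟩ | ⟨he, _⟩
    · rw [hε_def, he]; norm_num; nlinarith
    · rw [hε_def, he, inv_inv]
      nlinarith [mul_pos hc₁ hM]
  have hscal : 8 * c₁ * lam * ε ^ (-K)
      ≤ 8*c₁*(1+2*c₁*M) ^ K * (1 + lam) ^ (2 * ((K+1)/2)) := by
    have h2γ : 2 * ((K+1)/2) = K + 1 := by ring
    rw [h2γ]
    have e1 : ε ^ (-K) = (ε⁻¹) ^ K := by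
      rw [Real.rpow_neg hε0.le, ← Real.inv_rpow hε0.le]
    have hlam1 : (0:ℝ) ≤ 1 + lam := by linarith
    have e2 : (ε⁻¹) ^ K ≤ (1+2*c₁*M) ^ K * (1+lam) ^ K := by
      calc (ε⁻¹) ^ K ≤ ((1+2*c₁*M)*(1+lam)) ^ K :=
            Real.rpow_le_rpow (inv_nonneg.2 hε0.le) hεinv hK0
        _ = (1+2*c₁*M) ^ K * (1+lam) ^ K := Real.mul_rpow hP.le hlam1
    have e4 : (1+lam) ^ (K+1) = (1+lam) ^ K * (1+lam) := by
      rw [Real.rpow_add (by linarith : (0:ℝ) < 1+lam), Real.rpow_one]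
    rw [e1, e4]
    have h5 : (0:ℝ) ≤ (1+2*c₁*M) ^ K := Real.rpow_nonneg hP.le K
    have h6 : (0:ℝ) ≤ (1+lam) ^ K := Real.rpow_nonneg hlam1 K
    have h7 : (0:ℝ) ≤ (ε⁻¹) ^ K := Real.rpow_nonneg (inv_nonneg.2 hε0.le) K
    have f1 : 8*c₁*lam*((ε⁻¹) ^ K) ≤ 8*c₁*lam*((1+2*c₁*M) ^ K*(1+lam) ^ K) :=
      mul_le_mul_of_nonneg_left e2 (by positivity)
    have f2 : 8*c₁*lam*((1+2*c₁*M) ^ K*(1+lam) ^ K)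
        ≤ 8*c₁*(1+lam)*((1+2*c₁*M) ^ K*(1+lam) ^ K) := by
      have g1 : 8*c₁*lam ≤ 8*c₁*(1+lam) := by nlinarith
      exact mul_le_mul_of_nonneg_right g1 (mul_nonneg h5 h6)
    calc 8 * c₁ * lam * ((ε⁻¹) ^ K)
        ≤ 8*c₁*(1+lam)*((1+2*c₁*M) ^ K*(1+lam) ^ K) := f1.trans f2
      _ = 8*c₁*(1+2*c₁*M) ^ K * ((1 + lam) ^ K * (1 + lam)) := by ring
  calc E ≤ 8 * c₁ * lam * ε ^ (-K) * IW := hmain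
    _ ≤ 8*c₁*(1+2*c₁*M) ^ K * (1 + lam) ^ (2 * ((K+1)/2)) * IW :=
        mul_le_mul_of_nonneg_right hscal hIWnn
end
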